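/- arXiv:2412.05942 — 6 statements merged into one kernel-verified Lean document; each statement's English description precedes it below -/
import Mathlib

section
/- Let n, M ≥ 1 be integers and let θ be an n×n matrix with nonnegative real entries. Then ⟨perm(θ↑P_M)⟩ = Σ_{k ∈ K(M,n)} (∏_{i,j} θ(i,j)^{k(i,j)}) · C_{B,M,n}(k), with the convention 0^0 = 1. -/
open scoped BigOperators
open Finset

noncomputable section

namespace Stmt1Aux

variable {α α' β : Type*} [DecidableEq β]

private lemma auxSymm (c : α → β) (d : α' → β)
    (F : ∀ j : β, ({a // c a = j} ≃ {a' // d a' = j})) {j j' : β} (h : j = j')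
    (x : α') (hx : d x = j) (hx' : d x = j') :
    (((F j').symm ⟨x, hx'⟩ : {a // c a = j'}) : α) = (((F j).symm ⟨x, hx⟩ : {a // c a = j}) : α) := by
  subst h; rfl

private lemma auxFwd (c : α → β) (d : α' → β)
    (F : ∀ j : β, ({a // c a = j} ≃ {a' // d a' = j})) {j j' : β} (h : j = j')
    (x : α) (hx : c x = j) (hx' : c x = j') :
    (((F j') ⟨x, hx'⟩ : {a' // d a' = j'}) : α') = (((F j) ⟨x, hx⟩ : {a' // d a' = j}) : α') := by
  subst h; rfl

/-- Equivalences compatible with fiber maps correspond to families of fiber equivalences. -/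
def fiberEquivPi (c : α → β) (d : α' → β) :
    {e : α ≃ α' // ∀ a, d (e a) = c a} ≃ ∀ j : β, ({a // c a = j} ≃ {a' // d a' = j}) where
  toFun e j :=
    { toFun := fun a => ⟨e.1 a.1, by rw [e.2, a.2]⟩
      invFun := fun a' => ⟨e.1.symm a'.1, by
        have h := e.2 (e.1.symm a'.1)
        rw [e.1.apply_symm_apply, a'.2] at h
        exact h.symm⟩
      left_inv := fun a => by simp
      right_inv := fun a' => by simp }
  invFun F :=
    ⟨{ toFun := fun a => ((F (c a)) ⟨a, rfl⟩ : {a' // d a' = c a})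
       invFun := fun a' => (((F (d a')).symm ⟨a', rfl⟩ : {a // c a = d a'}) : α)
       left_inv := fun a => by
         dsimp only
         set y : {a' // d a' = c a} := (F (c a)) ⟨a, rfl⟩ with hy
         have h : d (y : α') = c a := y.2
         have := auxSymm c d F h.symm (y : α') h rfl
         rw [this]
         have : (⟨(y : α'), h⟩ : {a' // d a' = c a}) = y := rfl
         rw [this, hy, Equiv.symm_apply_apply]
       right_inv := fun a' => by
         dsimp only
         set x : {a // c a = d a'} := (F (d a')).symm ⟨a', rfl⟩ with hx
         have h : c (x : α) = d a' := x.2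
         have := auxFwd c d F h.symm (x : α) h rfl
         rw [this]
         have : (⟨(x : α), h⟩ : {a // c a = d a'}) = x := rfl
         rw [this, hx, Equiv.apply_symm_apply] },
     fun a => ((F (c a)) ⟨a, rfl⟩).2⟩
  left_inv e := by
    apply Subtype.ext
    apply Equiv.ext
    intro a; rfl
  right_inv F := by
    funext j
    apply Equiv.ext
    intro x
    apply Subtype.ext
    exact auxFwd c d F x.2.symm (x : α) x.2 rfl


lemma natCard_equiv_of_eq {A B : Type*} [Finite A] [Finite B]
    (h : Nat.card A = Nat.card B) : Nat.card (A ≃ B) = Nat.factorial (Nat.card A) := by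
  cases nonempty_fintype A
  cases nonempty_fintype B
  classical
  have e : A ≃ B := Fintype.equivOfCardEq (by
    rwa [← Nat.card_eq_fintype_card, ← Nat.card_eq_fintype_card])
  rw [Nat.card_eq_fintype_card, Fintype.card_equiv e, Nat.card_eq_fintype_card]

lemma natCard_equiv_of_ne {A B : Type*} [Finite A] [Finite B]
    (h : Nat.card A ≠ Nat.card B) : Nat.card (A ≃ B) = 0 := by
  have : IsEmpty (A ≃ B) := ⟨fun e => h (Nat.card_congr e)⟩
  exact Nat.card_of_isEmpty

lemma card_compat {α α' : Type*} [Finite α] [Finite α'] [Fintype β]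
    (c : α → β) (d : α' → β) :
    Nat.card {e : α ≃ α' // ∀ a, d (e a) = c a} =
      ∏ j : β, Nat.card ({a // c a = j} ≃ {a' // d a' = j}) :=
  (Nat.card_congr (fiberEquivPi c d)).trans Nat.card_pi

end Stmt1Aux

namespace Stmt1Aux

open Nat

lemma card_sigma_fiber {n : ℕ} (v : Fin n → ℕ) (j : Fin n) :
    Nat.card {s : Σ j' : Fin n, Fin (v j') // s.1 = j} = v j := by
  have hbij : Function.Bijective (fun x : Fin (v j) =>
      (⟨⟨j, x⟩, rfl⟩ : {s : Σ j' : Fin n, Fin (v j') // s.1 = j})) := by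
    constructor
    · intro x y h
      have h2 : (⟨j, x⟩ : Σ j' : Fin n, Fin (v j')) = ⟨j, y⟩ := congrArg Subtype.val h
      simpa using h2
    · rintro ⟨⟨j', x⟩, h⟩
      dsimp at h; subst h
      exact ⟨x, rfl⟩
  rw [← Nat.card_congr (Equiv.ofBijective _ hbij), Nat.card_eq_fintype_card, Fintype.card_fin]

lemma card_count {M n : ℕ} (v : Fin n → ℕ) (hv : ∑ j, v j = M) :
    Nat.card {f : Fin M → Fin n // ∀ j, Nat.card {m // f m = j} = v j} * ∏ j, (v j)! =
      M.factorial := by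
  classical
  have e : (Σ j : Fin n, Fin (v j)) ≃ Fin M :=
    Fintype.equivOfCardEq (by simp [hv])
  set d : Fin M → Fin n := fun m => (e.symm m).1 with hd_def
  have hd : ∀ j, Nat.card {m // d m = j} = v j := by
    intro j
    refine Eq.trans (Nat.card_congr ((e.symm).subtypeEquiv (fun m => Iff.rfl) :
      {m // d m = j} ≃ {s : Σ j' : Fin n, Fin (v j') // s.1 = j})) ?_
    exact card_sigma_fiber v j
  have key : ∀ f : Fin M → Fin n,
      Nat.card {σ : Equiv.Perm (Fin M) // ∀ m, d (σ m) = f m} =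
        if (∀ j, Nat.card {m // f m = j} = v j) then ∏ j, (v j)! else 0 := by
    intro f
    refine Eq.trans (card_compat f d) ?_
    by_cases hf : ∀ j, Nat.card {m // f m = j} = v j
    · rw [if_pos hf]
      refine Finset.prod_congr rfl fun j _ => ?_
      have hcc : Nat.card {m // f m = j} = Nat.card {m // d m = j} := by
        rw [hf j, hd j]
      rw [natCard_equiv_of_eq hcc, hf j]
    · rw [if_neg hf]
      push_neg at hf; obtain ⟨j, hj⟩ := hf
      refine Finset.prod_eq_zero (Finset.mem_univ j) ?_
      refine natCard_equiv_of_ne ?_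
      rw [hd j]; exact hj
  have total : ∑ f : Fin M → Fin n,
      Nat.card {σ : Equiv.Perm (Fin M) // ∀ m, d (σ m) = f m} = M.factorial := by
    have h1 : ∀ f : Fin M → Fin n,
        Nat.card {σ : Equiv.Perm (Fin M) // ∀ m, d (σ m) = f m} =
          (Finset.univ.filter fun σ : Equiv.Perm (Fin M) => (fun m => d (σ m)) = f).card := by
      intro f
      rw [Nat.card_eq_fintype_card, Fintype.card_subtype]
      congr 1
      ext σ
      simp [funext_iff]
    simp only [h1]
    rw [← Finset.card_eq_sum_card_fiberwise (fun σ _ => Finset.mem_univ (fun m => d (σ m)))]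
    simp [Fintype.card_perm]
  rw [← total]
  simp only [key]
  rw [← Finset.sum_filter, Finset.sum_const, smul_eq_mul, ← Fintype.card_subtype,
    ← Nat.card_eq_fintype_card]

lemma card_perm_extend {M : ℕ} (S : Finset (Fin M)) (τ : Fin M → Fin M)
    (hτ : Set.InjOn τ ↑S) :
    Nat.card {q : Equiv.Perm (Fin M) // ∀ m ∈ S, q m = τ m} = (M - S.card)! := by
  classical
  let e₀ : (↑S : Set (Fin M)) ≃ (τ '' ↑S : Set (Fin M)) := Equiv.Set.imageOfInjOn τ ↑S hτ
  have h1 : {q : Equiv.Perm (Fin M) // ∀ m ∈ S, q m = τ m} ≃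
      {e : Fin M ≃ Fin M // ∀ x : (↑S : Set (Fin M)), e x = e₀ x} := by
    refine Equiv.subtypeEquivRight fun q => ?_
    constructor
    · intro h x; exact h x x.2
    · intro h m hm; exact h ⟨m, hm⟩
  rw [Nat.card_congr h1, Nat.card_congr (Equiv.Set.compl e₀)]
  have hcs : Nat.card (↥(↑S : Set (Fin M))ᶜ : Sort _) = M - S.card := by
    rw [Nat.card_eq_fintype_card, Fintype.card_compl_set]
    simp
  have hct : Nat.card (↥(τ '' ↑S : Set (Fin M))ᶜ : Sort _) = M - S.card := by
    rw [Nat.card_eq_fintype_card, Fintype.card_compl_set]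
    rw [Fintype.card_congr e₀.symm]
    simp
  rw [natCard_equiv_of_eq (hcs.trans hct.symm), hcs]

end Stmt1Aux

namespace Stmt1Aux

open Nat Finset

/-- Splitting a subtype whose predicate factors through a map, as a sigma type. -/
def subtypeSigmaFiber {A B : Type*} (g : A → B) (P : B → Prop) :
    {a // P (g a)} ≃ Σ b : Subtype P, {a // g a = b.1} :=
  (Equiv.sigmaFiberEquiv fun a : {a // P (g a)} => (⟨g a.1, a.2⟩ : Subtype P)).symm.trans
    (Equiv.sigmaCongrRight fun b =>
      { toFun := fun x => ⟨x.1.1, congrArg Subtype.val x.2⟩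
        invFun := fun y => ⟨⟨y.1, by rw [y.2]; exact b.2⟩, Subtype.ext y.2⟩
        left_inv := fun x => Subtype.ext (Subtype.ext rfl)
        right_inv := fun y => Subtype.ext rfl })

lemma card_prod_fiber {n M : ℕ} (c : Fin n × Fin M → Fin n) (j : Fin n) :
    Nat.card {p : Fin n × Fin M // c p = j} = ∑ i, Nat.card {m // c (i, m) = j} := by
  have E : {p : Fin n × Fin M // c p = j} ≃ Σ i : Fin n, {m : Fin M // c (i, m) = j} :=
    { toFun := fun x => ⟨x.1.1, ⟨x.1.2, x.2⟩⟩
      invFun := fun y => ⟨(y.1, y.2.1), y.2.2⟩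
      left_inv := fun x => rfl
      right_inv := fun y => rfl }
  rw [Nat.card_congr E, Nat.card_eq_fintype_card, Fintype.card_sigma]
  simp [Nat.card_eq_fintype_card]

lemma card_fst_fiber {n M : ℕ} (j : Fin n) :
    Nat.card {p : Fin n × Fin M // p.1 = j} = M := by
  have E : {p : Fin n × Fin M // p.1 = j} ≃ Fin M :=
    { toFun := fun x => x.1.2
      invFun := fun m => ⟨(j, m), rfl⟩
      left_inv := fun x => by
        rcases x with ⟨⟨j', m⟩, h⟩
        dsimp at h; subst h; rfl
      right_inv := fun m => rfl }
  rw [Nat.card_congr E, Nat.card_eq_fintype_card, Fintype.card_fin]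

lemma card_prof {n M : ℕ} (k : Matrix (Fin n) (Fin n) ℕ)
    (hrow : ∀ i, ∑ j, k i j = M) (hcol : ∀ j, ∑ i, k i j = M) :
    Nat.card {σ : Equiv.Perm (Fin n × Fin M) //
        ∀ i j, Nat.card {m // (σ (i, m)).1 = j} = k i j} * ∏ i, ∏ j, (k i j)! =
      (M.factorial) ^ (2 * n) := by
  classical
  set P : (Fin n × Fin M → Fin n) → Prop :=
    fun c => ∀ i j, Nat.card {m // c (i, m) = j} = k i j with hP
  -- fiber cardinality over each compatible coloring
  have hfiber : ∀ c : Subtype P,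
      Nat.card {σ : Equiv.Perm (Fin n × Fin M) // (fun p => (σ p).1) = c.1} =
        M.factorial ^ n := by
    intro c
    have h1 : {σ : Equiv.Perm (Fin n × Fin M) // (fun p => (σ p).1) = c.1} ≃
        {e : (Fin n × Fin M) ≃ (Fin n × Fin M) // ∀ p, Prod.fst (e p) = c.1 p} :=
      Equiv.subtypeEquivRight fun σ => funext_iff
    refine Eq.trans (Nat.card_congr h1) ?_
    refine Eq.trans (card_compat c.1 Prod.fst) ?_
    have : ∀ j, Nat.card ({p : Fin n × Fin M // c.1 p = j} ≃ {p : Fin n × Fin M // p.1 = j})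
        = M.factorial := by
      intro j
      have hc : Nat.card {p : Fin n × Fin M // c.1 p = j} = M := by
        rw [card_prod_fiber]
        have := fun i => c.2 i j
        simp only [this]
        exact hcol j
      rw [natCard_equiv_of_eq (by rw [hc, card_fst_fiber]), hc]
    simp only [this]
    rw [Finset.prod_const, Finset.card_univ, Fintype.card_fin]
  -- split the permutation count as a sum over colorings
  have hsplit : Nat.card {σ : Equiv.Perm (Fin n × Fin M) //
      ∀ i j, Nat.card {m // (σ (i, m)).1 = j} = k i j} =
      Nat.card (Subtype P) * M.factorial ^ n := by
    have E := subtypeSigmaFiber (fun σ : Equiv.Perm (Fin n × Fin M) => (fun p => (σ p).1)) P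
    refine Eq.trans (Nat.card_congr E) ?_
    rw [Nat.card_eq_fintype_card, Fintype.card_sigma]
    have : ∀ b : Subtype P,
        Fintype.card {σ : Equiv.Perm (Fin n × Fin M) // (fun p => (σ p).1) = b.1} =
          M.factorial ^ n := by
      intro b
      rw [← Nat.card_eq_fintype_card]
      exact hfiber b
    simp only [this]
    rw [Finset.sum_const, Finset.card_univ, smul_eq_mul, ← Nat.card_eq_fintype_card]
  -- count the colorings row by row
  have hcurry : Subtype P ≃
      ∀ i : Fin n, {f : Fin M → Fin n // ∀ j, Nat.card {m // f m = j} = k i j} :=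
    { toFun := fun c i => ⟨fun m => c.1 (i, m), fun j => c.2 i j⟩
      invFun := fun F => ⟨fun p => (F p.1).1 p.2, fun i j => (F i).2 j⟩
      left_inv := fun c => Subtype.ext (funext fun p => rfl)
      right_inv := fun F => funext fun i => Subtype.ext rfl }
  have hcols : Nat.card (Subtype P) =
      ∏ i, Nat.card {f : Fin M → Fin n // ∀ j, Nat.card {m // f m = j} = k i j} :=
    (Nat.card_congr hcurry).trans Nat.card_pi
  rw [hsplit, hcols]
  rw [mul_comm (∏ i, _) (M.factorial ^ n), mul_assoc, ← Finset.prod_mul_distrib]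
  have : ∀ i ∈ Finset.univ,
      Nat.card {f : Fin M → Fin n // ∀ j, Nat.card {m // f m = j} = k i j} *
        ∏ j, (k i j)! = M.factorial := fun i _ => card_count _ (hrow i)
  rw [Finset.prod_congr rfl this, Finset.prod_const, Finset.card_univ, Fintype.card_fin,
    two_mul, pow_add]

end Stmt1Aux

/-- The permanent of a real square matrix: `perm(A) = Σ_{σ} ∏_i A(i, σ(i))`. -/
def perm' {α : Type*} [Fintype α] [DecidableEq α] (A : Matrix α α ℝ) : ℝ :=
  ∑ σ : Equiv.Perm α, ∏ i, A i (σ i)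

/-- `k ∈ K(M,n)`: a nonnegative-integer `n×n` matrix all of whose row sums and
column sums equal `M`. -/
def isDS (M n : ℕ) (k : Matrix (Fin n) (Fin n) ℕ) : Prop :=
  (∀ i, ∑ j, k i j = M) ∧ (∀ j, ∑ i, k i j = M)

/-- `C_{B,M,n}(k) = (M!)^{2n} · (∏_{i,j} (M−k(i,j))!) / ((M!)^{n²} · ∏_{i,j} k(i,j)!)`. -/
def CB (M n : ℕ) (k : Matrix (Fin n) (Fin n) ℕ) : ℝ :=
  ((M.factorial : ℝ) ^ (2 * n) * ∏ i, ∏ j, ((M - k i j).factorial : ℝ)) /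
    ((M.factorial : ℝ) ^ (n ^ 2) * ∏ i, ∏ j, ((k i j).factorial : ℝ))

/-- The `P_M`-lifting `θ↑P_M`: the `nM×nM` matrix with entries
`(θ↑P_M)((i,m),(j,m')) = θ(i,j)·P^{(i,j)}(m,m')`. -/
def liftMat {n M : ℕ} (θ : Matrix (Fin n) (Fin n) ℝ)
    (P : Fin n → Fin n → Equiv.Perm (Fin M)) :
    Matrix (Fin n × Fin M) (Fin n × Fin M) ℝ :=
  Matrix.of fun p q => θ p.1 q.1 * (if P p.1 q.1 p.2 = q.2 then 1 else 0)

/-- `⟨perm(θ↑P_M)⟩`: the arithmetic average of `perm(θ↑P_M)` over all `(M!)^{n²}`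
collections `P_M` of `n²` permutation matrices of size `M×M`. -/
def avgLiftPerm (n M : ℕ) (θ : Matrix (Fin n) (Fin n) ℝ) : ℝ :=
  (∑ P : Fin n → Fin n → Equiv.Perm (Fin M), perm' (liftMat θ P)) /
    (Fintype.card (Fin n → Fin n → Equiv.Perm (Fin M)) : ℝ)

namespace Stmt1Aux

variable {n M : ℕ}

/-- The profile matrix of a permutation of `Fin n × Fin M`. -/
def prof (σ : Equiv.Perm (Fin n × Fin M)) : Matrix (Fin n) (Fin n) ℕ :=
  fun i j => (Finset.univ.filter fun m : Fin M => (σ (i, m)).1 = j).card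

lemma prof_natCard (σ : Equiv.Perm (Fin n × Fin M)) (i j : Fin n) :
    Nat.card {m : Fin M // (σ (i, m)).1 = j} = prof σ i j := by
  rw [Nat.card_eq_fintype_card, Fintype.card_subtype, prof]

lemma prof_isDS (σ : Equiv.Perm (Fin n × Fin M)) : isDS M n (prof σ) := by
  constructor
  · intro i
    have := (Finset.card_eq_sum_card_fiberwise
      (fun (m : Fin M) (_ : m ∈ Finset.univ) =>
        Finset.mem_univ ((σ (i, m)).1))).symm
    simpa [prof] using this
  · intro j
    have h1 : ∑ i, prof σ i j = Nat.card {p : Fin n × Fin M // (σ p).1 = j} := by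
      rw [card_prod_fiber (fun p => (σ p).1) j]
      exact Finset.sum_congr rfl fun i _ => (prof_natCard σ i j).symm
    have h2 : Nat.card {p : Fin n × Fin M // (σ p).1 = j} =
        Nat.card {p : Fin n × Fin M // p.1 = j} :=
      Nat.card_congr (Equiv.subtypeEquiv σ fun p => Iff.rfl)
    rw [h1, h2, card_fst_fiber]

lemma prof_count (k : Matrix (Fin n) (Fin n) ℕ) (hk : isDS M n k) :
    Nat.card {σ : Equiv.Perm (Fin n × Fin M) // prof σ = k} * ∏ i, ∏ j, (k i j).factorial =
      M.factorial ^ (2 * n) := by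
  have hE : {σ : Equiv.Perm (Fin n × Fin M) // prof σ = k} ≃
      {σ : Equiv.Perm (Fin n × Fin M) // ∀ i j, Nat.card {m // (σ (i, m)).1 = j} = k i j} := by
    refine Equiv.subtypeEquivRight fun σ => ?_
    constructor
    · intro h i j; rw [prof_natCard, h]
    · intro h
      funext i j
      rw [← prof_natCard, h]
  rw [Nat.card_congr hE]
  exact card_prof k hk.1 hk.2

end Stmt1Aux

namespace Stmt1Aux

lemma sum_ind_card {ι : Type*} [Fintype ι] [DecidableEq ι] (p : ι → Prop) [inst : DecidablePred p] :
    ∑ q : ι, (if p q then (1:ℝ) else 0) = ((Finset.univ.filter p).card : ℝ) := by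
  rw [Finset.sum_boole]

lemma expand (θ : Matrix (Fin n) (Fin n) ℝ) :
    ∑ P : Fin n → Fin n → Equiv.Perm (Fin M), perm' (liftMat θ P) =
      ∑ σ : Equiv.Perm (Fin n × Fin M),
        (∏ i, ∏ j, θ i j ^ prof σ i j) * ∏ i, ∏ j, ((M - prof σ i j).factorial : ℝ) := by
  classical
  have h0 : ∀ P, perm' (liftMat θ P) = ∑ σ : Equiv.Perm (Fin n × Fin M),
      (∏ p : Fin n × Fin M, θ p.1 (σ p).1) *
        ∏ p : Fin n × Fin M, (if P p.1 (σ p).1 p.2 = (σ p).2 then (1:ℝ) else 0) := by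
    intro P
    unfold perm' liftMat
    refine Finset.sum_congr rfl fun σ _ => ?_
    rw [← Finset.prod_mul_distrib]
    rfl
  simp only [h0]
  rw [Finset.sum_comm]
  refine Finset.sum_congr rfl fun σ _ => ?_
  rw [← Finset.mul_sum]
  congr 1
  · -- the θ product
    rw [Fintype.prod_prod_type]
    refine Finset.prod_congr rfl fun i _ => ?_
    rw [← Finset.prod_fiberwise Finset.univ (fun m : Fin M => (σ (i, m)).1)
        (fun m => θ i (σ (i, m)).1)]
    refine Finset.prod_congr rfl fun j _ => ?_
    calc ∏ m ∈ Finset.univ.filter (fun m : Fin M => (σ (i, m)).1 = j), θ i (σ (i, m)).1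
        = ∏ m ∈ Finset.univ.filter (fun m : Fin M => (σ (i, m)).1 = j), θ i j :=
          Finset.prod_congr rfl fun m hm => by rw [(Finset.mem_filter.1 hm).2]
      _ = θ i j ^ prof σ i j := by rw [Finset.prod_const]; rfl
  · -- the indicator sum
    have h1 : ∀ P : Fin n → Fin n → Equiv.Perm (Fin M),
        (∏ p : Fin n × Fin M, if P p.1 (σ p).1 p.2 = (σ p).2 then (1:ℝ) else 0) =
          ∏ i, ∏ j, ∏ m ∈ Finset.univ.filter (fun m : Fin M => (σ (i, m)).1 = j),
            (if P i j m = (σ (i, m)).2 then (1:ℝ) else 0) := by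
      intro P
      rw [Fintype.prod_prod_type]
      refine Finset.prod_congr rfl fun i _ => ?_
      rw [← Finset.prod_fiberwise Finset.univ (fun m : Fin M => (σ (i, m)).1)
          (fun m => if P i (σ (i, m)).1 m = (σ (i, m)).2 then (1:ℝ) else 0)]
      refine Finset.prod_congr rfl fun j _ => Finset.prod_congr rfl fun m hm => ?_
      rw [(Finset.mem_filter.1 hm).2]
    simp only [h1]
    rw [show (Finset.univ : Finset (Fin n → Fin n → Equiv.Perm (Fin M))) =
        Fintype.piFinset (fun _ : Fin n => (Finset.univ : Finset (Fin n → Equiv.Perm (Fin M))))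
        from (Fintype.piFinset_univ).symm]
    rw [← Finset.prod_univ_sum (fun _ : Fin n => (Finset.univ : Finset (Fin n → Equiv.Perm (Fin M))))
      (fun i Q => ∏ j, ∏ m ∈ Finset.univ.filter (fun m : Fin M => (σ (i, m)).1 = j),
        (if Q j m = (σ (i, m)).2 then (1:ℝ) else 0))]
    refine Finset.prod_congr rfl fun i _ => ?_
    rw [show (Finset.univ : Finset (Fin n → Equiv.Perm (Fin M))) =
        Fintype.piFinset (fun _ : Fin n => (Finset.univ : Finset (Equiv.Perm (Fin M))))
        from (Fintype.piFinset_univ).symm]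
    rw [← Finset.prod_univ_sum (fun _ : Fin n => (Finset.univ : Finset (Equiv.Perm (Fin M))))
      (fun j q => ∏ m ∈ Finset.univ.filter (fun m : Fin M => (σ (i, m)).1 = j),
        (if q m = (σ (i, m)).2 then (1:ℝ) else 0))]
    refine Finset.prod_congr rfl fun j _ => ?_
    have hτ : Set.InjOn (fun m => (σ (i, m)).2)
        ↑(Finset.univ.filter (fun m : Fin M => (σ (i, m)).1 = j)) := by
      intro m1 h1' m2 h2' heq
      have hm1 : (σ (i, m1)).1 = j := by simpa using h1'
      have hm2 : (σ (i, m2)).1 = j := by simpa using h2'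
      have : σ (i, m1) = σ (i, m2) := Prod.ext (hm1.trans hm2.symm) heq
      have := σ.injective this
      simpa using this
    have hpb : ∀ q : Equiv.Perm (Fin M),
        (∏ m ∈ Finset.univ.filter (fun m : Fin M => (σ (i, m)).1 = j),
          if q m = (σ (i, m)).2 then (1:ℝ) else 0) =
          if (∀ m ∈ Finset.univ.filter (fun m : Fin M => (σ (i, m)).1 = j),
              q m = (σ (i, m)).2) then (1:ℝ) else 0 := by
      intro q
      simp [Finset.prod_boole]
    refine Eq.trans (Finset.sum_congr rfl fun q _ => hpb q) ?_
    refine Eq.trans (Finset.sum_boole _ _) ?_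
    norm_cast
    have hnat := card_perm_extend (Finset.univ.filter (fun m : Fin M => (σ (i, m)).1 = j))
      (fun m => (σ (i, m)).2) hτ
    rw [Nat.card_eq_fintype_card, Fintype.card_subtype] at hnat
    exact hnat

end Stmt1Aux

open Stmt1Aux

/-- For integers `n, M ≥ 1` and a nonnegative real `n×n` matrix `θ`,
`⟨perm(θ↑P_M)⟩ = Σ_{k ∈ K(M,n)} (∏_{i,j} θ(i,j)^{k(i,j)}) · C_{B,M,n}(k)`. -/
theorem statement_1 (n M : ℕ) (hn : 1 ≤ n) (hM : 1 ≤ M)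
    (θ : Matrix (Fin n) (Fin n) ℝ) (hθ : ∀ i j, 0 ≤ θ i j) :
    avgLiftPerm n M θ =
      ∑ᶠ (k : Matrix (Fin n) (Fin n) ℕ) (_ : isDS M n k),
        (∏ i, ∏ j, θ i j ^ k i j) * CB M n k := by
  classical
  set s : Finset (Matrix (Fin n) (Fin n) ℕ) :=
    Fintype.piFinset (fun _ : Fin n => Fintype.piFinset fun _ : Fin n => Finset.range (M+1))
    with hs
  have hmem : ∀ k : Matrix (Fin n) (Fin n) ℕ, (∀ i j, k i j ≤ M) → k ∈ s := by
    intro k hk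
    rw [hs]
    apply Fintype.mem_piFinset.2
    intro i
    rw [Fintype.mem_piFinset]
    intro j
    rw [Finset.mem_range, Nat.lt_succ_iff]
    exact hk i j
  have hprof_mem : ∀ σ : Equiv.Perm (Fin n × Fin M), prof σ ∈ s := by
    intro σ
    refine hmem _ fun i j => ?_
    have := Finset.card_filter_le (Finset.univ : Finset (Fin M))
      (fun m => (σ (i, m)).1 = j)
    simpa [prof] using this
  -- right-hand side as a finite sum
  have hRHS : (∑ᶠ (k : Matrix (Fin n) (Fin n) ℕ) (_ : isDS M n k),
      (∏ i, ∏ j, θ i j ^ k i j) * CB M n k) =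
      ∑ k ∈ s, if isDS M n k then (∏ i, ∏ j, θ i j ^ k i j) * CB M n k else 0 := by
    have h1 : ∀ k : Matrix (Fin n) (Fin n) ℕ,
        (∑ᶠ (_ : isDS M n k), (∏ i, ∏ j, θ i j ^ k i j) * CB M n k) =
        if isDS M n k then (∏ i, ∏ j, θ i j ^ k i j) * CB M n k else 0 := fun k =>
      finsum_eq_if
    rw [finsum_congr h1]
    refine finsum_eq_finset_sum_of_support_subset _ ?_
    intro k hk
    have hDS : isDS M n k := by
      by_contra h
      simp [Function.mem_support, h] at hk
    refine Finset.mem_coe.2 (hmem k fun i j => ?_)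
    calc k i j ≤ ∑ j', k i j' :=
          Finset.single_le_sum (fun _ _ => Nat.zero_le _) (Finset.mem_univ j)
      _ = M := hDS.1 i
  -- cardinality of the collection of permutation families
  have hcardP : (Fintype.card (Fin n → Fin n → Equiv.Perm (Fin M)) : ℝ) =
      (M.factorial : ℝ) ^ (n * n) := by
    rw [Fintype.card_fun, Fintype.card_fun, Fintype.card_perm, Fintype.card_fin,
      Fintype.card_fin, pow_mul]
    push_cast
    ring
  -- group the sum over σ by profile
  have hgroup : (∑ σ : Equiv.Perm (Fin n × Fin M),
      (∏ i, ∏ j, θ i j ^ prof σ i j) * ∏ i, ∏ j, ((M - prof σ i j).factorial : ℝ)) =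
      ∑ k ∈ s, (Nat.card {σ : Equiv.Perm (Fin n × Fin M) // prof σ = k} : ℝ) *
        ((∏ i, ∏ j, θ i j ^ k i j) * ∏ i, ∏ j, ((M - k i j).factorial : ℝ)) := by
    rw [← Finset.sum_fiberwise_of_maps_to (fun σ _ => hprof_mem σ)
        (fun σ => (∏ i, ∏ j, θ i j ^ prof σ i j) *
          ∏ i, ∏ j, ((M - prof σ i j).factorial : ℝ))]
    refine Finset.sum_congr rfl fun k _ => ?_
    have h2 : ∀ σ ∈ Finset.univ.filter (fun σ : Equiv.Perm (Fin n × Fin M) => prof σ = k),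
        (∏ i, ∏ j, θ i j ^ prof σ i j) * ∏ i, ∏ j, ((M - prof σ i j).factorial : ℝ) =
        (∏ i, ∏ j, θ i j ^ k i j) * ∏ i, ∏ j, ((M - k i j).factorial : ℝ) := by
      intro σ hσ
      rw [(Finset.mem_filter.1 hσ).2]
    rw [Finset.sum_congr rfl h2, Finset.sum_const, nsmul_eq_mul]
    congr 2
    rw [Nat.card_eq_fintype_card, Fintype.card_subtype]
  -- put everything together
  rw [hRHS, avgLiftPerm, expand, hcardP, hgroup, Finset.sum_div]
  refine Finset.sum_congr rfl fun k hk => ?_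
  by_cases hDS : isDS M n k
  · rw [if_pos hDS]
    have hcount := prof_count k hDS
    have hcountR : (Nat.card {σ : Equiv.Perm (Fin n × Fin M) // prof σ = k} : ℝ) *
        ∏ i, ∏ j, ((k i j).factorial : ℝ) = (M.factorial : ℝ) ^ (2 * n) := by
      have := congrArg (fun x : ℕ => (x : ℝ)) hcount
      push_cast at this
      exact this
    have hfac : (0:ℝ) < ∏ i, ∏ j, ((k i j).factorial : ℝ) := by
      refine Finset.prod_pos fun i _ => Finset.prod_pos fun j _ => ?_
      exact_mod_cast Nat.factorial_pos _
    have hM0 : (0:ℝ) < (M.factorial : ℝ) := by exact_mod_cast Nat.factorial_pos _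
    have hNval : (Nat.card {σ : Equiv.Perm (Fin n × Fin M) // prof σ = k} : ℝ) =
        (M.factorial : ℝ) ^ (2 * n) / ∏ i, ∏ j, ((k i j).factorial : ℝ) := by
      rw [eq_div_iff (ne_of_gt hfac)]
      exact hcountR
    rw [hNval, CB]
    rw [show n ^ 2 = n * n from pow_two n]
    field_simp
  · rw [if_neg hDS]
    have hzero : Nat.card {σ : Equiv.Perm (Fin n × Fin M) // prof σ = k} = 0 := by
      have : IsEmpty {σ : Equiv.Perm (Fin n × Fin M) // prof σ = k} :=
        ⟨fun x => hDS (x.2 ▸ prof_isDS x.1)⟩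
      exact Nat.card_of_isEmpty
    rw [hzero]
    simp
end
end

section
/- Let n, M ≥ 1 be integers and let θ be an n×n matrix with nonnegative real entries. Then perm(θ ⊗ U_{M,M}) = Σ_{k ∈ K(M,n)} (∏_{i,j} θ(i,j)^{k(i,j)}) · C_{scS,M,n}(k), with the convention 0^0 = 1. -/
open scoped BigOperators

noncomputable section

/-- `C_{scS,M,n}(k) = (M!)^{2n} / (M^{nM} · ∏_{i,j} k(i,j)!)`. -/
def CscS (M n : ℕ) (k : Matrix (Fin n) (Fin n) ℕ) : ℝ :=
  (M.factorial : ℝ) ^ (2 * n) / ((M : ℝ) ^ (n * M) * ∏ i, ∏ j, ((k i j).factorial : ℝ))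

namespace St2

open Nat Finset




variable {α β γ : Type*}

/-- Decompose a restricted equivalence into fiberwise equivalences. -/
def restrEquiv [DecidableEq γ] (g : β → γ) (t : α → γ) :
    {e : α ≃ β // ∀ a, g (e a) = t a} ≃ ∀ c : γ, ({a // t a = c} ≃ {b // g b = c}) where
  toFun e c := e.1.subtypeEquiv (fun a => by rw [e.2 a])
  invFun f := ⟨(Equiv.sigmaFiberEquiv t).symm.trans
      ((Equiv.sigmaCongrRight f).trans (Equiv.sigmaFiberEquiv g)),
      fun a => (f (t a) ⟨a, rfl⟩).2⟩
  left_inv e := by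
    ext a
    rfl
  right_inv f := by
    funext c
    ext ⟨a, ha⟩
    subst ha
    rfl

lemma card_equiv_ite (X Y : Type*) [Fintype X] [Fintype Y] :
    Nat.card (X ≃ Y) =
      if Nat.card X = Nat.card Y then (Nat.card Y)! else 0 := by
  classical
  rw [Nat.card_eq_fintype_card, Nat.card_eq_fintype_card, Nat.card_eq_fintype_card]
  split_ifs with h
  · rw [Fintype.card_equiv (Fintype.equivOfCardEq h), h]
  · have : IsEmpty (X ≃ Y) := ⟨fun e => h (Fintype.card_congr e)⟩
    exact Fintype.card_eq_zero

lemma card_restr [Fintype α] [Fintype β] [Fintype γ] [DecidableEq γ] (g : β → γ) (t : α → γ) :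
    Nat.card {e : α ≃ β // ∀ a, g (e a) = t a}
      = ∏ c : γ, if Nat.card {a // t a = c} = Nat.card {b // g b = c}
          then (Nat.card {b // g b = c})! else 0 := by
  classical
  rw [Nat.card_congr (restrEquiv g t), Nat.card_pi]
  exact Finset.prod_congr rfl fun c _ => card_equiv_ite _ _

lemma prod_ite_zero {M₀ : Type*} [CommMonoidWithZero M₀] (s : Finset α) (p : α → Prop)
    [DecidablePred p] (f : α → M₀) :
    (∏ c ∈ s, if p c then f c else 0) = if ∀ c ∈ s, p c then ∏ c ∈ s, f c else 0 := by
  split_ifs with h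
  · exact Finset.prod_congr rfl fun c hc => if_pos (h c hc)
  · push_neg at h
    obtain ⟨c, hc, hpc⟩ := h
    exact Finset.prod_eq_zero hc (if_neg hpc)

lemma card_fst_fiber (n M : ℕ) (j : Fin n) :
    Nat.card {x : Fin n × Fin M // x.1 = j} = M := by
  have e : {x : Fin n × Fin M // x.1 = j} ≃ Fin M :=
    { toFun := fun x => x.1.2
      invFun := fun a => ⟨(j, a), rfl⟩
      left_inv := fun x => by
        obtain ⟨⟨i, a⟩, h⟩ := x
        cases h
        rfl
      right_inv := fun a => rfl }
  rw [Nat.card_congr e, Nat.card_eq_fintype_card, Fintype.card_fin]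

lemma card_sigma_fiber {n : ℕ} (c : Fin n → ℕ) (j : Fin n) :
    Nat.card {b : Σ j : Fin n, Fin (c j) // b.1 = j} = c j := by
  have e : {b : Σ j : Fin n, Fin (c j) // b.1 = j} ≃ Fin (c j) :=
    { toFun := fun x => x.2 ▸ x.1.2
      invFun := fun a => ⟨⟨j, a⟩, rfl⟩
      left_inv := fun x => by
        obtain ⟨⟨j', a⟩, h⟩ := x
        cases h
        rfl
      right_inv := fun a => rfl }
  rw [Nat.card_congr e, Nat.card_eq_fintype_card, Fintype.card_fin]

lemma card_fiber_prod {n M n' : ℕ} (t : Fin n × Fin M → Fin n') (j : Fin n') :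
    Nat.card {x : Fin n × Fin M // t x = j}
      = ∑ i, Nat.card {a : Fin M // t (i, a) = j} := by
  have e : {x : Fin n × Fin M // t x = j} ≃ Σ i : Fin n, {a : Fin M // t (i, a) = j} :=
    { toFun := fun x => ⟨x.1.1, ⟨x.1.2, x.2⟩⟩
      invFun := fun s => ⟨(s.1, s.2.1), s.2.2⟩
      left_inv := fun x => rfl
      right_inv := fun s => rfl }
  rw [Nat.card_congr e, Nat.card_eq_fintype_card, Fintype.card_sigma]
  exact Finset.sum_congr rfl fun i _ => (Nat.card_eq_fintype_card).symm

lemma prod_comp_fiber {M n' : ℕ} (f : Fin M → Fin n') (v : Fin n' → ℝ) :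
    ∏ a, v (f a) = ∏ j, v j ^ (Nat.card {a // f a = j}) := by
  rw [← Finset.prod_fiberwise_of_maps_to (t := Finset.univ)
    (fun a _ => Finset.mem_univ (f a)) (fun a => v (f a))]
  refine Finset.prod_congr rfl fun j _ => ?_
  rw [Nat.card_eq_fintype_card, Fintype.card_subtype,
    Finset.prod_congr rfl (fun a ha => by rw [(Finset.mem_filter.mp ha).2]),
    Finset.prod_const]

/-- generic grouping lemma -/
lemma sum_comp_eq {X Y : Type*} [Fintype X] [DecidableEq Y] (Φ : X → Y)
    (T : Finset Y) (hT : ∀ x, Φ x ∈ T) (G : Y → ℝ) :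
    ∑ x : X, G (Φ x) = ∑ y ∈ T, (Nat.card {x // Φ x = y} : ℝ) * G y := by
  classical
  rw [← Finset.sum_fiberwise_of_maps_to (fun x _ => hT x) (fun x => G (Φ x))]
  refine Finset.sum_congr rfl fun y _ => ?_
  rw [Finset.sum_congr rfl (fun x hx => by rw [(Finset.mem_filter.mp hx).2]),
    Finset.sum_const, Nat.card_eq_fintype_card, Fintype.card_subtype, nsmul_eq_mul]

lemma cnt_mul_eq (M n' : ℕ) (c : Fin n' → ℕ) :
    (Nat.card {f : Fin M → Fin n' // ∀ j, Nat.card {a // f a = j} = c j})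
        * ∏ j, (c j)!
      = if M = ∑ j, c j then M ! else 0 := by
  classical
  have h1 : Nat.card (Fin M ≃ (Σ j : Fin n', Fin (c j)))
      = if M = ∑ j, c j then M ! else 0 := by
    rw [card_equiv_ite]
    simp only [Nat.card_eq_fintype_card, Fintype.card_fin, Fintype.card_sigma]
    split_ifs with h
    · rw [← h]
    · rfl
  have h2 : Nat.card (Fin M ≃ (Σ j : Fin n', Fin (c j)))
      = ∑ t : Fin M → Fin n',
          Nat.card {e : Fin M ≃ (Σ j : Fin n', Fin (c j)) // ∀ a, (e a).1 = t a} := by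
    rw [← Nat.card_congr (Equiv.sigmaFiberEquiv
        (fun e : Fin M ≃ (Σ j : Fin n', Fin (c j)) => fun a => (e a).1)),
      Nat.card_eq_fintype_card, Fintype.card_sigma]
    refine Finset.sum_congr rfl fun t _ => ?_
    rw [← Nat.card_eq_fintype_card]
    exact Nat.card_congr (Equiv.subtypeEquivRight fun e => funext_iff)
  have h3 : ∀ t : Fin M → Fin n',
      Nat.card {e : Fin M ≃ (Σ j : Fin n', Fin (c j)) // ∀ a, (e a).1 = t a}
        = if (∀ j, Nat.card {a // t a = j} = c j) then ∏ j, (c j)! else 0 := by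
    intro t
    rw [card_restr (@Sigma.fst (Fin n') (fun j => Fin (c j))) t]
    calc (∏ j, if Nat.card {a // t a = j}
            = Nat.card {b : Σ j : Fin n', Fin (c j) // b.fst = j}
          then (Nat.card {b : Σ j : Fin n', Fin (c j) // b.fst = j})! else 0)
        = ∏ j, (if Nat.card {a // t a = j} = c j then (c j)! else 0) := by
          refine Finset.prod_congr rfl fun j _ => by rw [card_sigma_fiber c j]
      _ = _ := by
          rw [prod_ite_zero]
          simp
  rw [h2] at h1
  rw [← h1]
  rw [Finset.sum_congr rfl fun t _ => h3 t, Finset.sum_ite, Finset.sum_const_zero, add_zero,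
    Finset.sum_const, smul_eq_mul, Nat.card_eq_fintype_card, Fintype.card_subtype]



/-- the row-type-count matrix of `t` -/
def Kmat (n M : ℕ) (t : Fin n × Fin M → Fin n) : Matrix (Fin n) (Fin n) ℕ :=
  fun i j => Nat.card {a : Fin M // t (i, a) = j}

/-- number of functions `Fin M → Fin n'` with prescribed fiber sizes -/
def Cnt (M n' : ℕ) (c : Fin n' → ℕ) : ℕ :=
  Nat.card {f : Fin M → Fin n' // ∀ j, Nat.card {a // f a = j} = c j}

lemma card_t_fiber {n M : ℕ} (k : Matrix (Fin n) (Fin n) ℕ) :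
    Nat.card {t : Fin n × Fin M → Fin n // ∀ i j, Nat.card {a : Fin M // t (i, a) = j} = k i j}
      = ∏ i, Cnt M n (k i) := by
  have e : {t : Fin n × Fin M → Fin n // ∀ i j, Nat.card {a : Fin M // t (i, a) = j} = k i j}
      ≃ ∀ i : Fin n, {f : Fin M → Fin n // ∀ j, Nat.card {a // f a = j} = k i j} :=
    { toFun := fun T i => ⟨fun a => T.1 (i, a), fun j => T.2 i j⟩
      invFun := fun F => ⟨fun x => (F x.1).1 x.2, fun i j => (F i).2 j⟩
      left_inv := fun T => rfl
      right_inv := fun F => rfl }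
  rw [Nat.card_congr e, Nat.card_pi]
  rfl

end St2

open St2 Nat Finset

/-- For integers `n, M ≥ 1` and a nonnegative real `n×n` matrix `θ`,
`perm(θ ⊗ U_{M,M}) = Σ_{k ∈ K(M,n)} (∏_{i,j} θ(i,j)^{k(i,j)}) · C_{scS,M,n}(k)`,
where `U_{M,M}` is the `M×M` matrix with all entries `1/M`. -/
theorem statement_2 (n M : ℕ) (hn : 1 ≤ n) (hM : 1 ≤ M)
    (θ : Matrix (Fin n) (Fin n) ℝ) (hθ : ∀ i j, 0 ≤ θ i j) :
    perm' (Matrix.kroneckerMap (· * ·) θ (Matrix.of fun _ _ : Fin M => 1 / (M : ℝ))) =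
      ∑ᶠ (k : Matrix (Fin n) (Fin n) ℕ) (_ : isDS M n k),
        (∏ i, ∏ j, θ i j ^ k i j) * CscS M n k := by
  classical
  -- the ambient finset of candidate matrices
  set T : Finset (Matrix (Fin n) (Fin n) ℕ) :=
    (Finset.univ : Finset (Matrix (Fin n) (Fin n) (Fin (M + 1)))).image
      (fun m => fun i j => ((m i j : ℕ))) with hTdef
  have hTmem : ∀ k : Matrix (Fin n) (Fin n) ℕ, (∀ i j, k i j ≤ M) → k ∈ T := by
    intro k hk
    refine Finset.mem_image.mpr ⟨fun i j => ⟨k i j, Nat.lt_succ_of_le (hk i j)⟩,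
      Finset.mem_univ _, ?_⟩
    funext i j
    rfl
  -- Step A : pull out the 1/M factors
  have hA : perm' (Matrix.kroneckerMap (· * ·) θ (Matrix.of fun _ _ : Fin M => 1 / (M : ℝ)))
      = ((M : ℝ)⁻¹) ^ (n * M) *
          ∑ σ : Equiv.Perm (Fin n × Fin M), ∏ x : Fin n × Fin M, θ x.1 ((σ x).1) := by
    unfold perm'
    rw [Finset.mul_sum]
    refine Finset.sum_congr rfl fun σ _ => ?_
    calc ∏ x : Fin n × Fin M,
          Matrix.kroneckerMap (· * ·) θ (Matrix.of fun _ _ : Fin M => 1 / (M : ℝ)) x (σ x)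
        = ∏ x : Fin n × Fin M, (θ x.1 ((σ x).1) * (M : ℝ)⁻¹) := by
          refine Finset.prod_congr rfl fun x _ => ?_
          simp [Matrix.kroneckerMap_apply, one_div]
      _ = (∏ x : Fin n × Fin M, θ x.1 ((σ x).1)) * ((M : ℝ)⁻¹) ^ (n * M) := by
          rw [Finset.prod_mul_distrib, Finset.prod_const, Finset.card_univ,
            Fintype.card_prod, Fintype.card_fin, Fintype.card_fin]
      _ = ((M : ℝ)⁻¹) ^ (n * M) * ∏ x : Fin n × Fin M, θ x.1 ((σ x).1) := mul_comm _ _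
  -- Step B : group permutations by the first-coordinate map
  have hB : ∑ σ : Equiv.Perm (Fin n × Fin M), ∏ x : Fin n × Fin M, θ x.1 ((σ x).1)
      = ∑ t : Fin n × Fin M → Fin n,
          ((Nat.card {σ : Equiv.Perm (Fin n × Fin M) // (fun x => (σ x).1) = t}) : ℝ)
            * ∏ x : Fin n × Fin M, θ x.1 (t x) := by
    have h := sum_comp_eq (fun σ : Equiv.Perm (Fin n × Fin M) => fun x => (σ x).1)
      Finset.univ (fun _ => Finset.mem_univ _)
      (fun t => ∏ x : Fin n × Fin M, θ x.1 (t x))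
    exact h
  -- Step C : count the permutations over a given type map
  have hC : ∀ t : Fin n × Fin M → Fin n,
      (Nat.card {σ : Equiv.Perm (Fin n × Fin M) // (fun x => (σ x).1) = t})
        = if (∀ j, ∑ i, Kmat n M t i j = M) then (M !) ^ n else 0 := by
    intro t
    have e1 : Nat.card {σ : Equiv.Perm (Fin n × Fin M) // (fun x => (σ x).1) = t}
        = Nat.card {e : (Fin n × Fin M) ≃ (Fin n × Fin M) // ∀ x, Prod.fst (e x) = t x} :=
      Nat.card_congr (Equiv.subtypeEquivRight fun σ => funext_iff)
    rw [e1, card_restr Prod.fst t]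
    calc (∏ j, if Nat.card {x : Fin n × Fin M // t x = j}
              = Nat.card {b : Fin n × Fin M // b.fst = j}
            then (Nat.card {b : Fin n × Fin M // b.fst = j})! else 0)
        = ∏ j, (if ∑ i, Kmat n M t i j = M then (M !) else 0) := by
          refine Finset.prod_congr rfl fun j _ => ?_
          rw [card_fst_fiber, card_fiber_prod]
          rfl
      _ = if (∀ j, ∑ i, Kmat n M t i j = M) then (M !) ^ n else 0 := by
          rw [St2.prod_ite_zero]
          simp [Finset.prod_const]
  -- Step D : the product over a block row
  have hD : ∀ t : Fin n × Fin M → Fin n,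
      (∏ x : Fin n × Fin M, θ x.1 (t x)) = ∏ i, ∏ j, θ i j ^ Kmat n M t i j := by
    intro t
    rw [Fintype.prod_prod_type]
    exact Finset.prod_congr rfl fun i _ => prod_comp_fiber (fun a => t (i, a)) (θ i)
  -- Step E : group type maps by their count matrix
  have hT2 : ∀ t : Fin n × Fin M → Fin n, Kmat n M t ∈ T := by
    intro t
    refine hTmem _ fun i j => ?_
    show Nat.card {a : Fin M // t (i, a) = j} ≤ M
    rw [Nat.card_eq_fintype_card]
    simpa using Fintype.card_subtype_le (fun a : Fin M => t (i, a) = j)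
  have hE : ∑ t : Fin n × Fin M → Fin n,
        (((if (∀ j, ∑ i, Kmat n M t i j = M) then (M !) ^ n else 0 : ℕ)) : ℝ)
          * ∏ i, ∏ j, θ i j ^ Kmat n M t i j
      = ∑ k ∈ T, ((Nat.card {t : Fin n × Fin M → Fin n // Kmat n M t = k}) : ℝ)
          * (((if (∀ j, ∑ i, k i j = M) then (M !) ^ n else 0 : ℕ)) : ℝ)
          * ∏ i, ∏ j, θ i j ^ k i j := by
    have h := sum_comp_eq (fun t : Fin n × Fin M → Fin n => Kmat n M t) T hT2
      (fun k => (((if (∀ j, ∑ i, k i j = M) then (M !) ^ n else 0 : ℕ)) : ℝ)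
          * ∏ i, ∏ j, θ i j ^ k i j)
    rw [h]
    exact Finset.sum_congr rfl fun k _ => by ring
  -- Step F : the number of type maps with a given count matrix
  have hF : ∀ k : Matrix (Fin n) (Fin n) ℕ,
      Nat.card {t : Fin n × Fin M → Fin n // Kmat n M t = k} = ∏ i, Cnt M n (k i) := by
    intro k
    rw [← card_t_fiber (M := M) k]
    refine Nat.card_congr (Equiv.subtypeEquivRight fun t => ?_)
    constructor
    · intro h i j
      rw [← h]
      rfl
    · intro h
      funext i j
      exact h i j
  -- Step G : rewriting the right-hand side as a finite sum
  have hG : (∑ᶠ (k : Matrix (Fin n) (Fin n) ℕ) (_ : isDS M n k),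
        (∏ i, ∏ j, θ i j ^ k i j) * CscS M n k)
      = ∑ k ∈ T, (if isDS M n k then (∏ i, ∏ j, θ i j ^ k i j) * CscS M n k else 0) := by
    rw [finsum_congr (fun k => finsum_eq_if (p := isDS M n k))]
    refine finsum_eq_finset_sum_of_support_subset _ ?_
    intro k hk
    simp only [Function.mem_support, ne_eq, ite_eq_right_iff, Classical.not_imp] at hk
    refine hTmem k fun i j => ?_
    have hrow := hk.1.1 i
    calc k i j ≤ ∑ j', k i j' :=
          Finset.single_le_sum (fun _ _ => Nat.zero_le _) (Finset.mem_univ j)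
      _ = M := hrow
  -- Step H : termwise identification
  have hM0 : (M : ℝ) ≠ 0 := Nat.cast_ne_zero.mpr (by omega)
  have hW : ∀ k : Matrix (Fin n) (Fin n) ℕ,
      ((M : ℝ)⁻¹) ^ (n * M) * ((∏ i, Cnt M n (k i) : ℕ) : ℝ)
          * (((if (∀ j, ∑ i, k i j = M) then (M !) ^ n else 0 : ℕ)) : ℝ)
          * ∏ i, ∏ j, θ i j ^ k i j
        = if isDS M n k then (∏ i, ∏ j, θ i j ^ k i j) * CscS M n k else 0 := by
    intro k
    have hfac : ∀ i, (0 : ℝ) < ∏ j, ((k i j)! : ℝ) :=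
      fun i => Finset.prod_pos fun j _ => by exact_mod_cast Nat.factorial_pos _
    by_cases hds : isDS M n k
    · obtain ⟨hrow, hcol⟩ := hds
      rw [if_pos hcol, if_pos (show isDS M n k from ⟨hrow, hcol⟩)]
      have hCi : ∀ i, ((Cnt M n (k i) : ℝ)) = (M ! : ℝ) / ∏ j, ((k i j)! : ℝ) := by
        intro i
        have h := cnt_mul_eq M n (k i)
        rw [if_pos (hrow i).symm] at h
        rw [eq_div_iff (ne_of_gt (hfac i))]
        exact_mod_cast congrArg (fun x : ℕ => (x : ℝ)) h
      have hProd : (∏ i, ∏ j, ((k i j)! : ℝ)) ≠ 0 :=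
        ne_of_gt (Finset.prod_pos fun i _ => hfac i)
      push_cast
      rw [Finset.prod_congr rfl (fun i (_ : i ∈ Finset.univ) => hCi i),
        Finset.prod_div_distrib, Finset.prod_const, Finset.card_univ, Fintype.card_fin]
      unfold CscS
      rw [two_mul, pow_add]
      field_simp
      ring_nf
      rw [← mul_pow, mul_inv_cancel₀ hM0, one_pow, one_mul]
    · rw [if_neg hds]
      by_cases hcol : ∀ j, ∑ i, k i j = M
      · have hrow : ¬ ∀ i, ∑ j, k i j = M := fun h => hds ⟨h, hcol⟩
        push_neg at hrow
        obtain ⟨i0, hi0⟩ := hrow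
        have hz : Cnt M n (k i0) = 0 := by
          have h := cnt_mul_eq M n (k i0)
          rw [if_neg (fun hh => hi0 hh.symm)] at h
          have hne : (∏ j, (k i0 j)!) ≠ 0 :=
            Finset.prod_ne_zero_iff.mpr fun j _ => (Nat.factorial_pos _).ne'
          exact (Nat.mul_eq_zero.mp h).resolve_right hne
        rw [show (∏ i, Cnt M n (k i)) = 0 from Finset.prod_eq_zero (Finset.mem_univ i0) hz]
        push_cast
        ring
      · rw [if_neg hcol]
        push_cast
        ring
  -- final assembly
  rw [hA, hB, Finset.sum_congr rfl (fun t (_ : t ∈ Finset.univ) => by rw [hC t, hD t]), hE, hG,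
    Finset.mul_sum]
  refine Finset.sum_congr rfl fun k _ => ?_
  rw [hF k, ← hW k]
  ring

end
end

section
/- Let n ≥ 1 and M ≥ 2 be integers and let k ∈ K(M,n). Let R = {i ∈ [n] : ∃ j with 0 < k(i,j) < M} and C = {j ∈ [n] : ∃ i with 0 < k(i,j) < M}; these two sets have equal cardinality, and for every i ∈ R and j ∈ C one has k(i,j) < M. Define Q(k) := 1 if R is empty, and otherwise Q(k) := ( Σ_{τ} ∏_{i∈R} (k(i,τ(i))/M)·(1 − k(i,τ(i))/M) ) / ( ∏_{(i,j)∈R×C} (1 − k(i,j)/M) ), where the sum is over all bijections τ : R → C. Then Σ_{σ} C_{B,M−1,n}(k − P_σ) = Q(k) · C_{B,M,n}(k), where the sum is over all permutations σ ∈ S_n such that k(i,σ(i)) ≥ 1 for all i. -/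
open scoped BigOperators

noncomputable section

/-- The permutation matrix `P_σ` with entries `P_σ(i,j) = 1` iff `σ(i) = j`. -/
def permMat {n : ℕ} (σ : Equiv.Perm (Fin n)) : Matrix (Fin n) (Fin n) ℕ :=
  Matrix.of fun i j => if σ i = j then 1 else 0

/-- The set `R` of row indices where `k` has an entry strictly between `0` and `M`. -/
def Rset (M n : ℕ) (k : Matrix (Fin n) (Fin n) ℕ) : Finset (Fin n) :=
  @Finset.filter _ (fun i => ∃ j, 0 < k i j ∧ k i j < M) (fun _ => inferInstance) Finset.univ

/-- The set `C` of column indices where `k` has an entry strictly between `0` and `M`. -/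
def Cset (M n : ℕ) (k : Matrix (Fin n) (Fin n) ℕ) : Finset (Fin n) :=
  Finset.univ.filter (fun j => ∃ i, 0 < k i j ∧ k i j < M)

/-- `Q(k)`: equal to `1` when `R` is empty, and otherwise to
`(Σ_{τ : R ≃ C} ∏_{i∈R} (k(i,τ(i))/M)·(1 − k(i,τ(i))/M)) / (∏_{(i,j)∈R×C} (1 − k(i,j)/M))`,
where the sum is over all bijections `τ : R → C`. -/
def Qcoef (M n : ℕ) (k : Matrix (Fin n) (Fin n) ℕ) : ℝ :=
  if Rset M n k = ∅ then 1
  else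
    (∑ τ : {i // i ∈ Rset M n k} ≃ {j // j ∈ Cset M n k},
        ∏ i : {i // i ∈ Rset M n k},
          ((k i.1 (τ i).1 : ℝ) / M) * (1 - (k i.1 (τ i).1 : ℝ) / M)) /
      ∏ i ∈ Rset M n k, ∏ j ∈ Cset M n k, (1 - (k i j : ℝ) / M)

section Aux

variable {n M : ℕ} {k : Matrix (Fin n) (Fin n) ℕ}

lemma entry_le (hk : isDS M n k) (i j : Fin n) : k i j ≤ M :=
  le_trans (Finset.single_le_sum (fun _ _ => Nat.zero_le _) (Finset.mem_univ j))
    (le_of_eq (hk.1 i))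

lemma notR_cases (hk : isDS M n k) {i : Fin n} (hi : i ∉ Rset M n k) (j : Fin n) :
    k i j = 0 ∨ k i j = M := by
  simp only [Rset, Finset.mem_filter, Finset.mem_univ, true_and, not_exists] at hi
  have := hi j
  have := entry_le hk i j
  omega

lemma notC_cases (hk : isDS M n k) {j : Fin n} (hj : j ∉ Cset M n k) (i : Fin n) :
    k i j = 0 ∨ k i j = M := by
  simp only [Cset, Finset.mem_filter, Finset.mem_univ, true_and, not_exists] at hj
  have := hj i
  have := entry_le hk i j
  omega

lemma pair_le_row (hk : isDS M n k) {i : Fin n} {j j' : Fin n} (h : j ≠ j') :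
    k i j + k i j' ≤ M := by
  have : ∑ x ∈ ({j, j'} : Finset (Fin n)), k i x ≤ ∑ x, k i x :=
    Finset.sum_le_sum_of_subset (Finset.subset_univ _)
  rw [Finset.sum_pair h, hk.1 i] at this
  exact this

lemma pair_le_col (hk : isDS M n k) {j : Fin n} {i i' : Fin n} (h : i ≠ i') :
    k i j + k i' j ≤ M := by
  have : ∑ x ∈ ({i, i'} : Finset (Fin n)), k x j ≤ ∑ x, k x j :=
    Finset.sum_le_sum_of_subset (Finset.subset_univ _)
  rw [Finset.sum_pair h, hk.2 j] at this
  exact this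

lemma row_zero (hk : isDS M n k) (hM : 1 ≤ M) {i j : Fin n} (h : k i j = M)
    {j' : Fin n} (h' : j' ≠ j) : k i j' = 0 := by
  have := pair_le_row hk h'.symm (i := i); omega

lemma col_zero (hk : isDS M n k) (hM : 1 ≤ M) {i j : Fin n} (h : k i j = M)
    {i' : Fin n} (h' : i' ≠ i) : k i' j = 0 := by
  have := pair_le_col hk h'.symm (j := j); omega

lemma M_notR (hk : isDS M n k) (hM : 1 ≤ M) {i j : Fin n} (h : k i j = M) :
    i ∉ Rset M n k := by
  simp only [Rset, Finset.mem_filter, Finset.mem_univ, true_and, not_exists]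
  intro j'
  rcases eq_or_ne j' j with rfl | hne
  · omega
  · have := row_zero hk hM h hne; omega

lemma M_notC (hk : isDS M n k) (hM : 1 ≤ M) {i j : Fin n} (h : k i j = M) :
    j ∉ Cset M n k := by
  simp only [Cset, Finset.mem_filter, Finset.mem_univ, true_and, not_exists]
  intro i'
  rcases eq_or_ne i' i with rfl | hne
  · omega
  · have := col_zero hk hM h hne; omega

lemma entry_lt (hk : isDS M n k) (hM : 1 ≤ M) {i j : Fin n}
    (hi : i ∈ Rset M n k) : k i j < M :=
  lt_of_le_of_ne (entry_le hk i j) (fun h => M_notR hk hM h hi)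

lemma row_unique (hk : isDS M n k) (hM : 1 ≤ M) {i : Fin n} (hi : i ∉ Rset M n k) :
    ∃ j, k i j = M ∧ ∀ j', j' ≠ j → k i j' = 0 := by
  have hsum := hk.1 i
  have hne : ∃ j, k i j ≠ 0 := by
    by_contra h
    push_neg at h
    rw [Finset.sum_congr rfl (fun x _ => h x), Finset.sum_const_zero] at hsum
    omega
  obtain ⟨j, hj⟩ := hne
  have hjM : k i j = M := by rcases notR_cases hk hi j with h | h <;> omega
  exact ⟨j, hjM, fun j' h' => row_zero hk hM hjM h'⟩

lemma col_unique (hk : isDS M n k) (hM : 1 ≤ M) {j : Fin n} (hj : j ∉ Cset M n k) :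
    ∃ i, k i j = M ∧ ∀ i', i' ≠ i → k i' j = 0 := by
  have hsum := hk.2 j
  have hne : ∃ i, k i j ≠ 0 := by
    by_contra h
    push_neg at h
    rw [Finset.sum_congr rfl (fun x _ => h x), Finset.sum_const_zero] at hsum
    omega
  obtain ⟨i, hi⟩ := hne
  have hiM : k i j = M := by rcases notC_cases hk hj i with h | h <;> omega
  exact ⟨i, hiM, fun i' h' => col_zero hk hM hiM h'⟩

lemma card_RC (hk : isDS M n k) (hM : 1 ≤ M) :
    (Rset M n k).card = (Cset M n k).card := by
  classical
  have hcompl : ((Rset M n k)ᶜ).card = ((Cset M n k)ᶜ).card := by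
    choose c hc1 hc2 using fun i (hi : i ∉ Rset M n k) => row_unique hk hM hi
    choose r hr1 hr2 using fun j (hj : j ∉ Cset M n k) => col_unique hk hM hj
    apply Finset.card_bij (fun i hi => c i (by simpa using hi))
    · intro i hi
      simp only [Finset.mem_compl] at hi ⊢
      exact M_notC hk hM (hc1 i hi)
    · intro i hi i' hi' h
      simp only [Finset.mem_compl] at hi hi'
      by_contra hne
      have h1 : k i (c i hi) = M := hc1 i hi
      have h2 : k i' (c i hi) = M := by rw [h]; exact hc1 i' hi'
      have := pair_le_col hk hne (j := c i hi)
      omega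
    · intro j hj
      simp only [Finset.mem_compl] at hj
      refine ⟨r j hj, by simp [M_notR hk hM (hr1 j hj)], ?_⟩
      -- c (r j hj) _ = j
      have hMe : k (r j hj) j = M := hr1 j hj
      have hri : r j hj ∉ Rset M n k := M_notR hk hM hMe
      by_contra hne
      have := hc2 (r j hj) hri j (Ne.symm ?_)
      · omega
      · intro h; exact hne (by simpa [h])
  have h1 := Finset.card_compl (Rset M n k)
  have h2 := Finset.card_compl (Cset M n k)
  have := Finset.card_le_univ (Rset M n k)
  have := Finset.card_le_univ (Cset M n k)
  simp only [Fintype.card_fin] at *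
  omega

end Aux

section Term

variable {n M : ℕ} {k : Matrix (Fin n) (Fin n) ℕ}

lemma term_ratio (hk : isDS M n k) (hM : 2 ≤ M) (σ : Equiv.Perm (Fin n))
    (hσ : ∀ i, 1 ≤ k i (σ i)) :
    CB (M - 1) n (k - permMat σ) * (M : ℝ) ^ (2 * n) *
      (∏ i, ∏ j, (if σ i = j then 1 else ((M : ℝ) - k i j))) =
    CB M n k * (M : ℝ) ^ (n ^ 2) * ∏ i, (k i (σ i) : ℝ) := by
  have hk' : ∀ i j, (k - permMat σ) i j = k i j - (if σ i = j then 1 else 0) :=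
    fun i j => rfl
  have hoff : ∀ i j, σ i ≠ j → k i j + 1 ≤ M := by
    intro i j h
    have h1 := pair_le_row hk (i := i) (Ne.symm h)
    have := hσ i
    omega
  have hle : ∀ i j, k i j ≤ M := entry_le hk
  -- entrywise identities
  have e1 : (∏ i, ∏ j, ((M - k i j).factorial : ℝ)) =
      (∏ i, ∏ j, (if σ i = j then 1 else ((M : ℝ) - k i j))) *
      (∏ i, ∏ j, ((M - 1 - (k - permMat σ) i j).factorial : ℝ)) := by
    rw [← Finset.prod_mul_distrib]
    refine Finset.prod_congr rfl fun i _ => ?_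
    rw [← Finset.prod_mul_distrib]
    refine Finset.prod_congr rfl fun j _ => ?_
    rw [hk' i j]
    by_cases h : σ i = j
    · have h1 := hσ i
      rw [h] at h1
      simp only [h, if_pos]
      have : M - 1 - (k i j - 1) = M - k i j := by omega
      rw [this, one_mul]
    · simp only [h, if_neg, if_false, Nat.sub_zero]
      have h2 := hoff i j h
      have : M - k i j = (M - 1 - k i j) + 1 := by omega
      rw [this, Nat.factorial_succ]
      push_cast
      have : ((M - 1 - k i j : ℕ) : ℝ) + 1 = (M : ℝ) - k i j := by
        have : (M : ℝ) - 1 - (k i j : ℕ) + 1 = (M:ℝ) - k i j := by ring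
        rw [← this]
        congr 1
        push_cast [Nat.cast_sub (by omega : k i j ≤ M - 1), Nat.cast_sub (by omega : 1 ≤ M)]
        ring
      rw [this]
  have e2 : (∏ i, ∏ j, ((k i j).factorial : ℝ)) =
      (∏ i, (k i (σ i) : ℝ)) *
      (∏ i, ∏ j, (((k - permMat σ) i j).factorial : ℝ)) := by
    rw [← Finset.prod_mul_distrib]
    refine Finset.prod_congr rfl fun i _ => ?_
    have : (k i (σ i) : ℝ) = ∏ j, (if σ i = j then (k i j : ℝ) else 1) := by
      rw [Finset.prod_ite_eq]
      simp
    rw [this, ← Finset.prod_mul_distrib]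
    refine Finset.prod_congr rfl fun j _ => ?_
    rw [hk' i j]
    by_cases h : σ i = j
    · have h1 := hσ i
      rw [h] at h1
      simp only [h, if_pos]
      have : k i j = (k i j - 1) + 1 := by omega
      rw [this, Nat.factorial_succ]
      push_cast [Nat.cast_sub h1]
      ring
    · simp [h]
  have hfac : (M.factorial : ℝ) = (M : ℝ) * ((M - 1).factorial : ℝ) := by
    rw [← Nat.cast_mul, Nat.mul_factorial_pred (by omega : M ≠ 0)]
  have hYne : (∏ i, ∏ j, (((k - permMat σ) i j).factorial : ℝ)) ≠ 0 := by
    positivity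
  have hBne : (∏ i, (k i (σ i) : ℝ)) ≠ 0 := by
    apply Finset.prod_ne_zero_iff.mpr
    intro i _
    have := hσ i
    positivity
  have hfne : ((M - 1).factorial : ℝ) ≠ 0 := by positivity
  have hMne : (M : ℝ) ≠ 0 := by positivity
  unfold CB
  rw [e1, e2, hfac]
  field_simp
  ring
end Term

section Machinery

variable {n : ℕ}

/-- Extend a bijection `R ≃ C` to a permutation of `Fin n` using the complement bijection. -/
def extPerm {R C : Finset (Fin n)}
    (c : ∀ i, i ∉ R → Fin n) (r : ∀ j, j ∉ C → Fin n)
    (hcC : ∀ i hi, c i hi ∉ C) (hrR : ∀ j hj, r j hj ∉ R)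
    (hrc : ∀ i hi, r (c i hi) (hcC i hi) = i)
    (hcr : ∀ j hj, c (r j hj) (hrR j hj) = j)
    (τ : {i // i ∈ R} ≃ {j // j ∈ C}) : Equiv.Perm (Fin n) where
  toFun i := if h : i ∈ R then (τ ⟨i, h⟩).1 else c i h
  invFun j := if h : j ∈ C then (τ.symm ⟨j, h⟩).1 else r j h
  left_inv i := by
    dsimp only
    by_cases h : i ∈ R
    · rw [dif_pos h, dif_pos ((τ ⟨i, h⟩).2)]
      have : (⟨(τ ⟨i, h⟩).1, (τ ⟨i, h⟩).2⟩ : {j // j ∈ C}) = τ ⟨i, h⟩ := rfl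
      rw [this, Equiv.symm_apply_apply]
    · rw [dif_neg h, dif_neg (hcC i h)]
      exact hrc i h
  right_inv j := by
    dsimp only
    by_cases h : j ∈ C
    · rw [dif_pos h, dif_pos ((τ.symm ⟨j, h⟩).2)]
      have : (⟨(τ.symm ⟨j, h⟩).1, (τ.symm ⟨j, h⟩).2⟩ : {i // i ∈ R}) = τ.symm ⟨j, h⟩ := rfl
      rw [this, Equiv.apply_symm_apply]
    · rw [dif_neg h, dif_neg (hrR j h)]
      exact hcr j h

lemma extPerm_apply_mem {R C : Finset (Fin n)}
    {c : ∀ i, i ∉ R → Fin n} {r : ∀ j, j ∉ C → Fin n}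
    {hcC : ∀ i hi, c i hi ∉ C} {hrR : ∀ j hj, r j hj ∉ R}
    {hrc : ∀ i hi, r (c i hi) (hcC i hi) = i}
    {hcr : ∀ j hj, c (r j hj) (hrR j hj) = j}
    (τ : {i // i ∈ R} ≃ {j // j ∈ C}) {i : Fin n} (hi : i ∈ R) :
    extPerm c r hcC hrR hrc hcr τ i = (τ ⟨i, hi⟩).1 := dif_pos hi

lemma extPerm_apply_not {R C : Finset (Fin n)}
    {c : ∀ i, i ∉ R → Fin n} {r : ∀ j, j ∉ C → Fin n}
    {hcC : ∀ i hi, c i hi ∉ C} {hrR : ∀ j hj, r j hj ∉ R}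
    {hrc : ∀ i hi, r (c i hi) (hcC i hi) = i}
    {hcr : ∀ j hj, c (r j hj) (hrR j hj) = j}
    (τ : {i // i ∈ R} ≃ {j // j ∈ C}) {i : Fin n} (hi : i ∉ R) :
    extPerm c r hcC hrR hrc hcr τ i = c i hi := dif_neg hi

/-- Restrict a permutation mapping `R` into `C` (with `|R| = |C|`) to a bijection `R ≃ C`. -/
def restrEquiv {R C : Finset (Fin n)} (hcard : R.card = C.card)
    (σ : Equiv.Perm (Fin n)) (hmem : ∀ i : Fin n, i ∈ R → σ i ∈ C) :
    {i // i ∈ R} ≃ {j // j ∈ C} :=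
  Equiv.ofBijective (fun i => ⟨σ i.1, hmem i.1 i.2⟩)
    ((Fintype.bijective_iff_injective_and_card _).2
      ⟨fun a b hab => Subtype.ext (σ.injective (congrArg Subtype.val hab)), by
        simp [Fintype.card_coe, hcard]⟩)

lemma restrEquiv_apply {R C : Finset (Fin n)} (hcard : R.card = C.card)
    (σ : Equiv.Perm (Fin n)) (hmem : ∀ i : Fin n, i ∈ R → σ i ∈ C)
    (x : {i // i ∈ R}) : (restrEquiv hcard σ hmem x).1 = σ x.1 := rfl

lemma key_pows (x : ℝ) (hx : x ≠ 0) (K W u : ℝ) (N r0 s : ℕ)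
    (hn : N = r0 + s) (hn1 : 1 ≤ N) :
    x ^ (N ^ 2) * (x ^ s * K) * ((W * u) / (x ^ r0) ^ r0) =
      (K * W / (x ^ 2) ^ r0) * x ^ (2 * N) * ((x ^ (N - 1)) ^ s * (x ^ s) ^ r0 * u) := by
  subst hn
  rcases s with _ | s'
  · simp only [Nat.add_zero, pow_zero, one_mul, mul_one]
    have h1 : 1 ≤ r0 := hn1
    have h2 : r0 - 1 + 1 = r0 := by omega
    field_simp
    ring
  · have h1 : r0 + (s' + 1) - 1 = r0 + s' := by omega
    rw [h1]
    field_simp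
    ring

end Machinery

lemma Qcoef_eq {n M : ℕ} {k : Matrix (Fin n) (Fin n) ℕ}
    (hcard : (Rset M n k).card = (Cset M n k).card) :
    Qcoef M n k =
      (∑ τ : {i // i ∈ Rset M n k} ≃ {j // j ∈ Cset M n k},
          ∏ i : {i // i ∈ Rset M n k},
            ((k i.1 (τ i).1 : ℝ) / M) * (1 - (k i.1 (τ i).1 : ℝ) / M)) /
        ∏ i ∈ Rset M n k, ∏ j ∈ Cset M n k, (1 - (k i j : ℝ) / M) := by
  unfold Qcoef
  split_ifs with h
  · have hC : Cset M n k = ∅ :=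
      Finset.card_eq_zero.mp (by rw [← hcard, h, Finset.card_empty])
    haveI hER : IsEmpty {i // i ∈ Rset M n k} := Finset.isEmpty_coe_sort.mpr h
    haveI hEC : IsEmpty {j // j ∈ Cset M n k} := Finset.isEmpty_coe_sort.mpr hC
    have hden : (∏ i ∈ Rset M n k, ∏ j ∈ Cset M n k, (1 - (k i j : ℝ) / M)) = 1 := by
      rw [h]; simp
    rw [hden, div_one]
    have hprod : ∀ τ : {i // i ∈ Rset M n k} ≃ {j // j ∈ Cset M n k},
        (∏ i : {i // i ∈ Rset M n k},
          ((k i.1 (τ i).1 : ℝ) / M) * (1 - (k i.1 (τ i).1 : ℝ) / M)) = 1 := by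
      intro τ
      rw [Finset.univ_eq_empty, Finset.prod_empty]
    rw [Finset.sum_congr rfl (fun τ _ => hprod τ), Finset.sum_const, Finset.card_univ,
      Fintype.card_equiv (Equiv.equivOfIsEmpty _ _)]
    simp
  · rfl

/-- For `n ≥ 1`, `M ≥ 2` and `k ∈ K(M,n)`: the sets `R` and `C` have equal
cardinality, every entry `k(i,j)` with `i ∈ R`, `j ∈ C` satisfies `k(i,j) < M`, and
`Σ_σ C_{B,M−1,n}(k − P_σ) = Q(k) · C_{B,M,n}(k)`, the sum over permutations `σ` with
`k(i,σ(i)) ≥ 1` for all `i`. -/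
theorem statement_8 (n M : ℕ) (hn : 1 ≤ n) (hM : 2 ≤ M)
    (k : Matrix (Fin n) (Fin n) ℕ) (hk : isDS M n k) :
    (Rset M n k).card = (Cset M n k).card ∧
    (∀ i ∈ Rset M n k, ∀ j ∈ Cset M n k, k i j < M) ∧
    (∑ σ ∈ Finset.univ.filter (fun σ : Equiv.Perm (Fin n) => ∀ i, 1 ≤ k i (σ i)),
        CB (M - 1) n (k - permMat σ)) = Qcoef M n k * CB M n k := by
  classical
  have hM1 : 1 ≤ M := by omega
  have hcard := card_RC hk hM1
  refine ⟨hcard, fun i hi j _ => entry_lt hk hM1 hi, ?_⟩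
  choose c hc1 hc2 using fun i (hi : i ∉ Rset M n k) => row_unique hk hM1 hi
  choose r hr1 hr2 using fun j (hj : j ∉ Cset M n k) => col_unique hk hM1 hj
  have hcC : ∀ i hi, c i hi ∉ Cset M n k := fun i hi => M_notC hk hM1 (hc1 i hi)
  have hrR : ∀ j hj, r j hj ∉ Rset M n k := fun j hj => M_notR hk hM1 (hr1 j hj)
  have hrc : ∀ i hi, r (c i hi) (hcC i hi) = i := by
    intro i hi
    by_contra hne
    have h0 : k (r (c i hi) (hcC i hi)) (c i hi) = M := hr1 _ _
    have h1 : k (r (c i hi) (hcC i hi)) (c i hi) = 0 := col_zero hk hM1 (hc1 i hi) hne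
    omega
  have hcr : ∀ j hj, c (r j hj) (hrR j hj) = j := by
    intro j hj
    by_contra hne
    have h0 : k (r j hj) (c (r j hj) (hrR j hj)) = M := hc1 _ _
    have h1 : k (r j hj) (c (r j hj) (hrR j hj)) = 0 := row_zero hk hM1 (hr1 j hj) hne
    omega
  have hmapsC : ∀ (σ : Equiv.Perm (Fin n)), (∀ i, 1 ≤ k i (σ i)) →
      ∀ i : Fin n, i ∈ Rset M n k → σ i ∈ Cset M n k := by
    intro σ hσ i hi
    by_contra hnc
    rcases notC_cases hk hnc i with h0 | h0
    · have := hσ i; omega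
    · exact M_notR hk hM1 h0 hi
  have hforced : ∀ (σ : Equiv.Perm (Fin n)), (∀ i, 1 ≤ k i (σ i)) →
      ∀ i (hi : i ∉ Rset M n k), σ i = c i hi := by
    intro σ hσ i hi
    by_contra hne
    have h0 : k i (σ i) = 0 := hc2 i hi (σ i) hne
    have := hσ i; omega
  set S₂ : Finset ({i // i ∈ Rset M n k} ≃ {j // j ∈ Cset M n k}) :=
    Finset.univ.filter (fun τ => ∀ i : {i // i ∈ Rset M n k}, 1 ≤ k i.1 (τ i).1) with hS₂
  have hextadm : ∀ τ ∈ S₂, ∀ i, 1 ≤ k i (extPerm c r hcC hrR hrc hcr τ i) := by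
    intro τ hτ i
    by_cases h : i ∈ Rset M n k
    · rw [extPerm_apply_mem τ h]
      exact (Finset.mem_filter.mp hτ).2 ⟨i, h⟩
    · rw [extPerm_apply_not τ h, hc1 i h]
      omega
  have hsum1 : (∑ σ ∈ Finset.univ.filter (fun σ : Equiv.Perm (Fin n) => ∀ i, 1 ≤ k i (σ i)),
      CB (M - 1) n (k - permMat σ)) =
      ∑ τ ∈ S₂, CB (M - 1) n (k - permMat (extPerm c r hcC hrR hrc hcr τ)) := by
    have hlr : ∀ (σ : Equiv.Perm (Fin n)) (hσ : ∀ i, 1 ≤ k i (σ i)),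
        extPerm c r hcC hrR hrc hcr (restrEquiv hcard σ (hmapsC σ hσ)) = σ := by
      intro σ hσ
      ext i
      by_cases h : i ∈ Rset M n k
      · rw [extPerm_apply_mem _ h, restrEquiv_apply]
      · rw [extPerm_apply_not _ h, (hforced σ hσ i h)]
    refine Finset.sum_bij'
      (fun σ hσ => restrEquiv hcard σ (hmapsC σ (Finset.mem_filter.mp hσ).2))
      (fun τ _ => extPerm c r hcC hrR hrc hcr τ) ?_ ?_ ?_ ?_ ?_
    · intro σ hσ
      rw [hS₂, Finset.mem_filter]
      exact ⟨Finset.mem_univ _, fun x => by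
        rw [restrEquiv_apply]
        exact (Finset.mem_filter.mp hσ).2 x.1⟩
    · intro τ hτ
      exact Finset.mem_filter.mpr ⟨Finset.mem_univ _, hextadm τ hτ⟩
    · intro σ hσ
      exact hlr σ (Finset.mem_filter.mp hσ).2
    · intro τ hτ
      ext x
      rw [restrEquiv_apply, extPerm_apply_mem _ x.2]
    · intro σ hσ
      rw [hlr σ (Finset.mem_filter.mp hσ).2]
  rw [hsum1]
  have hMne : (M : ℝ) ≠ 0 := by positivity
  have hDne : (∏ i ∈ Rset M n k, ∏ j ∈ Cset M n k, (1 - (k i j : ℝ) / M)) ≠ 0 := by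
    apply Finset.prod_ne_zero_iff.mpr
    intro i hi
    apply Finset.prod_ne_zero_iff.mpr
    intro j hj
    have h1 : (k i j : ℝ) < M := by exact_mod_cast entry_lt hk hM1 hi (j := j)
    have : 0 < 1 - (k i j : ℝ) / M := by
      rw [sub_pos, div_lt_one (by positivity)]
      exact h1
    linarith
  have hterm : ∀ τ ∈ S₂, CB (M - 1) n (k - permMat (extPerm c r hcC hrR hrc hcr τ)) =
      (∏ i : {i // i ∈ Rset M n k},
        ((k i.1 (τ i).1 : ℝ) / M) * (1 - (k i.1 (τ i).1 : ℝ) / M)) /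
      (∏ i ∈ Rset M n k, ∏ j ∈ Cset M n k, (1 - (k i j : ℝ) / M)) * CB M n k := by
    intro τ hτ
    set σ : Equiv.Perm (Fin n) := extPerm c r hcC hrR hrc hcr τ with hσdef
    have hadm : ∀ i, 1 ≤ k i (σ i) := hextadm τ hτ
    have hRmem : ∀ (i : Fin n) (hi : i ∈ Rset M n k), σ i = (τ ⟨i, hi⟩).1 :=
      fun i hi => extPerm_apply_mem τ hi
    have hRnot : ∀ (i : Fin n) (hi : i ∉ Rset M n k), σ i = c i hi :=
      fun i hi => extPerm_apply_not τ hi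
    have hσC : ∀ i ∈ Rset M n k, σ i ∈ Cset M n k := hmapsC σ hadm
    have hns : n = (Rset M n k).card + (Rset M n k)ᶜ.card := by
      have := Finset.card_add_card_compl (Rset M n k)
      rw [Fintype.card_fin] at this
      omega
    have hCc : (Cset M n k)ᶜ.card = (Rset M n k)ᶜ.card := by
      have h1 := Finset.card_add_card_compl (Rset M n k)
      have h2 := Finset.card_add_card_compl (Cset M n k)
      rw [Fintype.card_fin] at h1 h2
      omega
    -- B evaluation
    have hcomplB : ∏ i ∈ (Rset M n k)ᶜ, (k i (σ i) : ℝ) = (M : ℝ) ^ (Rset M n k)ᶜ.card := by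
      have h1 : ∀ i ∈ (Rset M n k)ᶜ, (k i (σ i) : ℝ) = (M : ℝ) := by
        intro i hi
        rw [hRnot i (Finset.mem_compl.mp hi), hc1 i (Finset.mem_compl.mp hi)]
      rw [Finset.prod_congr rfl h1, Finset.prod_const]
    have hEB : (∏ i, (k i (σ i) : ℝ)) =
        (M : ℝ) ^ (Rset M n k)ᶜ.card * ∏ i ∈ Rset M n k, (k i (σ i) : ℝ) := by
      rw [← Finset.prod_mul_prod_compl (Rset M n k) (fun i => (k i (σ i) : ℝ)), hcomplB,
        mul_comm]
    -- A evaluation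
    have hrow_not : ∀ i ∈ (Rset M n k)ᶜ,
        (∏ j, if σ i = j then (1 : ℝ) else (M : ℝ) - k i j) = (M : ℝ) ^ (n - 1) := by
      intro i hi
      have hi' := Finset.mem_compl.mp hi
      have h1 : ∀ j ∈ (Finset.univ : Finset (Fin n)),
          (if σ i = j then (1 : ℝ) else (M : ℝ) - k i j) =
          (if σ i = j then (1 : ℝ) else (M : ℝ)) := by
        intro j _
        by_cases h : σ i = j
        · simp [h]
        · have hjc : j ≠ c i hi' := by
            intro hj
            exact h (by rw [hRnot i hi', hj])
          have : k i j = 0 := hc2 i hi' j hjc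
          rw [if_neg h, if_neg h, this]
          simp
      rw [Finset.prod_congr rfl h1,
        ← Finset.mul_prod_erase Finset.univ _ (Finset.mem_univ (σ i)), if_pos rfl, one_mul]
      have h2 : ∀ j ∈ Finset.univ.erase (σ i),
          (if σ i = j then (1 : ℝ) else (M : ℝ)) = (M : ℝ) := by
        intro j hj
        rw [if_neg (Ne.symm (Finset.mem_erase.mp hj).1)]
      rw [Finset.prod_congr rfl h2, Finset.prod_const,
        Finset.card_erase_of_mem (Finset.mem_univ _), Finset.card_univ, Fintype.card_fin]
    have hrow_mem : ∀ i ∈ Rset M n k,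
        (∏ j, if σ i = j then (1 : ℝ) else (M : ℝ) - k i j) =
        (M : ℝ) ^ (Rset M n k)ᶜ.card *
          ∏ j ∈ (Cset M n k).erase (σ i), ((M : ℝ) - k i j) := by
      intro i hi
      rw [← Finset.prod_mul_prod_compl (Cset M n k)]
      have hC1 : ∏ j ∈ Cset M n k, (if σ i = j then (1 : ℝ) else (M : ℝ) - k i j) =
          ∏ j ∈ (Cset M n k).erase (σ i), ((M : ℝ) - k i j) := by
        rw [← Finset.mul_prod_erase (Cset M n k) _ (hσC i hi), if_pos rfl, one_mul]
        exact Finset.prod_congr rfl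
          (fun j hj => if_neg (Ne.symm (Finset.mem_erase.mp hj).1))
      have hC2 : ∏ j ∈ (Cset M n k)ᶜ, (if σ i = j then (1 : ℝ) else (M : ℝ) - k i j) =
          (M : ℝ) ^ (Cset M n k)ᶜ.card := by
        have h1 : ∀ j ∈ (Cset M n k)ᶜ,
            (if σ i = j then (1 : ℝ) else (M : ℝ) - k i j) = (M : ℝ) := by
          intro j hj
          have hj' := Finset.mem_compl.mp hj
          have hne : σ i ≠ j := fun h => hj' (h ▸ hσC i hi)
          have h0 : k i j = 0 := by
            rcases notC_cases hk hj' i with h0 | h0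
            · exact h0
            · exact absurd hi (M_notR hk hM1 h0)
          rw [if_neg hne, h0]
          simp
        rw [Finset.prod_congr rfl h1, Finset.prod_const]
      rw [hC1, hC2, hCc, mul_comm]
    have hEA : (∏ i, ∏ j, (if σ i = j then (1 : ℝ) else (M : ℝ) - k i j)) =
        ((M : ℝ) ^ (n - 1)) ^ (Rset M n k)ᶜ.card *
          ((M : ℝ) ^ (Rset M n k)ᶜ.card) ^ (Rset M n k).card *
          ∏ i ∈ Rset M n k, ∏ j ∈ (Cset M n k).erase (σ i), ((M : ℝ) - k i j) := by
      rw [← Finset.prod_mul_prod_compl (Rset M n k)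
        (fun i => ∏ j, (if σ i = j then (1 : ℝ) else (M : ℝ) - k i j)),
        Finset.prod_congr rfl hrow_mem, Finset.prod_congr rfl hrow_not,
        Finset.prod_mul_distrib, Finset.prod_const, Finset.prod_const]
      ring
    -- D evaluation
    have hsplitRC : (∏ i ∈ Rset M n k, ∏ j ∈ Cset M n k, ((M : ℝ) - k i j)) =
        (∏ i ∈ Rset M n k, ((M : ℝ) - k i (σ i))) *
        ∏ i ∈ Rset M n k, ∏ j ∈ (Cset M n k).erase (σ i), ((M : ℝ) - k i j) := by
      rw [← Finset.prod_mul_distrib]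
      exact Finset.prod_congr rfl
        (fun i hi => (Finset.mul_prod_erase (Cset M n k) _ (hσC i hi)).symm)
    have hED : (∏ i ∈ Rset M n k, ∏ j ∈ Cset M n k, (1 - (k i j : ℝ) / M)) =
        ((∏ i ∈ Rset M n k, ((M : ℝ) - k i (σ i))) *
          ∏ i ∈ Rset M n k, ∏ j ∈ (Cset M n k).erase (σ i), ((M : ℝ) - k i j)) /
          ((M : ℝ) ^ (Rset M n k).card) ^ (Rset M n k).card := by
      have hf : ∀ i ∈ Rset M n k, ∀ j ∈ Cset M n k,
          (1 - (k i j : ℝ) / M) = ((M : ℝ) - k i j) / M := by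
        intro i _ j _
        field_simp
      calc (∏ i ∈ Rset M n k, ∏ j ∈ Cset M n k, (1 - (k i j : ℝ) / M))
          = ∏ i ∈ Rset M n k, ∏ j ∈ Cset M n k, (((M : ℝ) - k i j) / M) :=
            Finset.prod_congr rfl (fun i hi => Finset.prod_congr rfl (hf i hi))
        _ = ∏ i ∈ Rset M n k, ((∏ j ∈ Cset M n k, ((M : ℝ) - k i j)) / (M : ℝ) ^ (Cset M n k).card) := by
            refine Finset.prod_congr rfl (fun i _ => ?_)
            rw [Finset.prod_div_distrib, Finset.prod_const]
        _ = (∏ i ∈ Rset M n k, ∏ j ∈ Cset M n k, ((M : ℝ) - k i j)) /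
              ((M : ℝ) ^ (Cset M n k).card) ^ (Rset M n k).card := by
            rw [Finset.prod_div_distrib, Finset.prod_const]
        _ = ((∏ i ∈ Rset M n k, ((M : ℝ) - k i (σ i))) *
              ∏ i ∈ Rset M n k, ∏ j ∈ (Cset M n k).erase (σ i), ((M : ℝ) - k i j)) /
              ((M : ℝ) ^ (Rset M n k).card) ^ (Rset M n k).card := by
            rw [hsplitRC, hcard]
    -- N evaluation
    have hEN : (∏ i : {i // i ∈ Rset M n k},
          ((k i.1 (τ i).1 : ℝ) / M) * (1 - (k i.1 (τ i).1 : ℝ) / M)) =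
        ((∏ i ∈ Rset M n k, (k i (σ i) : ℝ)) *
          ∏ i ∈ Rset M n k, ((M : ℝ) - k i (σ i))) / ((M : ℝ) ^ 2) ^ (Rset M n k).card := by
      have h1 : ∀ i : {i // i ∈ Rset M n k},
          ((k i.1 (τ i).1 : ℝ) / M) * (1 - (k i.1 (τ i).1 : ℝ) / M) =
          ((k i.1 (σ i.1) : ℝ) * ((M : ℝ) - k i.1 (σ i.1))) / (M : ℝ) ^ 2 := by
        intro i
        have h2 : σ i.1 = (τ i).1 := hRmem i.1 i.2
        rw [h2]
        rw [show (1 - (k i.1 (τ i).1 : ℝ) / M) = ((M : ℝ) - k i.1 (τ i).1) / M from by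
          rw [sub_div, div_self hMne], div_mul_div_comm, sq]
      rw [Finset.prod_congr rfl (fun i _ => h1 i), Finset.univ_eq_attach,
        Finset.prod_attach (Rset M n k)
          (fun i => ((k i (σ i) : ℝ) * ((M : ℝ) - k i (σ i))) / (M : ℝ) ^ 2),
        Finset.prod_div_distrib, Finset.prod_const, Finset.prod_mul_distrib]
    -- nonvanishing
    have huu_ne : (∏ i ∈ Rset M n k, ∏ j ∈ (Cset M n k).erase (σ i), ((M : ℝ) - k i j)) ≠ 0 := by
      apply Finset.prod_ne_zero_iff.mpr
      intro i hi
      apply Finset.prod_ne_zero_iff.mpr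
      intro j hj
      have h1 : (k i j : ℝ) < M := by exact_mod_cast entry_lt hk hM1 hi (j := j)
      intro h
      linarith
    have hAne : (∏ i, ∏ j, (if σ i = j then (1 : ℝ) else (M : ℝ) - k i j)) ≠ 0 := by
      rw [hEA]
      exact mul_ne_zero (mul_ne_zero (pow_ne_zero _ (pow_ne_zero _ hMne))
        (pow_ne_zero _ (pow_ne_zero _ hMne))) huu_ne
    -- key power identity
    have hkey : (M : ℝ) ^ (n ^ 2) * (∏ i, (k i (σ i) : ℝ)) *
        (∏ i ∈ Rset M n k, ∏ j ∈ Cset M n k, (1 - (k i j : ℝ) / M)) =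
        (∏ i : {i // i ∈ Rset M n k},
          ((k i.1 (τ i).1 : ℝ) / M) * (1 - (k i.1 (τ i).1 : ℝ) / M)) *
        (M : ℝ) ^ (2 * n) * (∏ i, ∏ j, (if σ i = j then (1 : ℝ) else (M : ℝ) - k i j)) := by
      rw [hEB, hED, hEN, hEA]
      exact key_pows (M : ℝ) hMne _ _ _ n (Rset M n k).card (Rset M n k)ᶜ.card hns hn
    -- conclude
    have htr := term_ratio hk hM σ hadm
    have hfin : CB (M - 1) n (k - permMat σ) * ((M : ℝ) ^ (2 * n) *
        (∏ i, ∏ j, (if σ i = j then (1 : ℝ) else (M : ℝ) - k i j))) =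
        ((∏ i : {i // i ∈ Rset M n k},
          ((k i.1 (τ i).1 : ℝ) / M) * (1 - (k i.1 (τ i).1 : ℝ) / M)) /
        (∏ i ∈ Rset M n k, ∏ j ∈ Cset M n k, (1 - (k i j : ℝ) / M)) * CB M n k) *
        ((M : ℝ) ^ (2 * n) *
        (∏ i, ∏ j, (if σ i = j then (1 : ℝ) else (M : ℝ) - k i j))) := by
      have e1 : CB (M - 1) n (k - permMat σ) * ((M : ℝ) ^ (2 * n) *
          (∏ i, ∏ j, (if σ i = j then (1 : ℝ) else (M : ℝ) - k i j))) =
          CB M n k * (M : ℝ) ^ (n ^ 2) * ∏ i, (k i (σ i) : ℝ) := by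
        rw [← htr]; ring
      rw [e1]
      rw [show CB M n k * (M : ℝ) ^ (n ^ 2) * (∏ i, (k i (σ i) : ℝ)) =
          CB M n k * (((M : ℝ) ^ (n ^ 2) * (∏ i, (k i (σ i) : ℝ)) *
            (∏ i ∈ Rset M n k, ∏ j ∈ Cset M n k, (1 - (k i j : ℝ) / M))) /
            (∏ i ∈ Rset M n k, ∏ j ∈ Cset M n k, (1 - (k i j : ℝ) / M))) from by
        rw [mul_div_cancel_right₀ _ hDne, mul_assoc]]
      rw [hkey]
      ring
    exact mul_right_cancel₀ (mul_ne_zero (pow_ne_zero _ hMne) hAne) hfin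
  rw [Finset.sum_congr rfl hterm]
  rw [Finset.sum_subset (Finset.filter_subset _ Finset.univ) (fun τ _ hτ => by
    rw [Finset.mem_filter, not_and] at hτ
    have := hτ (Finset.mem_univ _)
    push_neg at this
    obtain ⟨i, hi⟩ := this
    have hzero : ((k i.1 (τ i).1 : ℝ) / M) * (1 - (k i.1 (τ i).1 : ℝ) / M) = 0 := by
      have : k i.1 (τ i).1 = 0 := by omega
      rw [this]
      simp
    rw [Finset.prod_eq_zero (Finset.mem_univ i) hzero, zero_div, zero_mul])]
  rw [← Finset.sum_mul, ← Finset.sum_div, Qcoef_eq hcard]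
end
end

section
/- Let n ≥ 1 and M ≥ 2 be integers and let k ∈ K(M,n). Then Σ_{σ} C_{scS,M−1,n}(k − P_σ) = (M/(M−1))^{n(M−1)} · perm((1/M)·k) · C_{scS,M,n}(k), where the sum is over all permutations σ ∈ S_n such that k(i,σ(i)) ≥ 1 for all i, and (1/M)·k denotes the doubly stochastic real matrix with entries k(i,j)/M. -/
open scoped BigOperators

noncomputable section

lemma row_fact {n : ℕ} (k : Matrix (Fin n) (Fin n) ℕ) (σ : Equiv.Perm (Fin n))
    (i : Fin n) (h1 : 1 ≤ k i (σ i)) :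
    (∏ j, ((k - permMat σ) i j).factorial) * k i (σ i) = ∏ j, (k i j).factorial := by
  rw [← Finset.mul_prod_erase Finset.univ (fun j => ((k - permMat σ) i j).factorial)
      (Finset.mem_univ (σ i)),
    ← Finset.mul_prod_erase Finset.univ (fun j => (k i j).factorial)
      (Finset.mem_univ (σ i))]
  have he : ∀ j ∈ Finset.univ.erase (σ i),
      ((k - permMat σ) i j).factorial = (k i j).factorial := by
    intro j hj
    have : σ i ≠ j := (Finset.ne_of_mem_erase hj).symm
    simp [Matrix.sub_apply, permMat, this]
  rw [Finset.prod_congr rfl he]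
  have : (k - permMat σ) i (σ i) = k i (σ i) - 1 := by
    simp [Matrix.sub_apply, permMat]
  rw [this]
  have h2 := Nat.mul_factorial_pred (n := k i (σ i)) (by omega)
  rw [mul_right_comm, mul_comm ((k i (σ i) - 1).factorial) (k i (σ i)), h2]

/-- For `n ≥ 1`, `M ≥ 2` and `k ∈ K(M,n)`:
`Σ_σ C_{scS,M−1,n}(k − P_σ) = (M/(M−1))^{n(M−1)} · perm((1/M)·k) · C_{scS,M,n}(k)`,
the sum over permutations `σ` with `k(i,σ(i)) ≥ 1` for all `i`, where `(1/M)·k` is the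
doubly stochastic real matrix with entries `k(i,j)/M`. -/
theorem statement_9 (n M : ℕ) (hn : 1 ≤ n) (hM : 2 ≤ M)
    (k : Matrix (Fin n) (Fin n) ℕ) (hk : isDS M n k) :
    (∑ σ ∈ Finset.univ.filter (fun σ : Equiv.Perm (Fin n) => ∀ i, 1 ≤ k i (σ i)),
        CscS (M - 1) n (k - permMat σ)) =
      ((M : ℝ) / ((M : ℝ) - 1)) ^ (n * (M - 1)) *
        perm' (Matrix.of fun i j => (k i j : ℝ) / M) * CscS M n k := by
  obtain ⟨m, rfl⟩ : ∃ m, M = m + 1 := ⟨M - 1, by omega⟩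
  have hm : 1 ≤ m := by omega
  have hm0 : (0:ℝ) < (m:ℝ) := by exact_mod_cast hm
  have hM0 : (0:ℝ) < ((m:ℝ) + 1) := by positivity
  set F : ℝ := ∏ i, ∏ j, ((k i j).factorial : ℝ) with hF
  have hFpos : 0 < F := by
    apply Finset.prod_pos; intro i _; apply Finset.prod_pos; intro j _
    exact_mod_cast (k i j).factorial_pos
  -- simplify M - 1
  simp only [Nat.add_sub_cancel]
  -- each summand
  have key : ∀ σ ∈ Finset.univ.filter (fun σ : Equiv.Perm (Fin n) => ∀ i, 1 ≤ k i (σ i)),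
      CscS m n (k - permMat σ)
        = ((m.factorial : ℝ) ^ (2*n) / ((m:ℝ)^(n*m) * F)) * ∏ i, (k i (σ i) : ℝ) := by
    intro σ hσ
    rw [Finset.mem_filter] at hσ
    have h1 := hσ.2
    have hprod : (∏ i, ∏ j, (((k - permMat σ) i j).factorial : ℝ)) * ∏ i, (k i (σ i) : ℝ)
        = F := by
      rw [← Finset.prod_mul_distrib]
      rw [hF]
      apply Finset.prod_congr rfl
      intro i _
      exact_mod_cast row_fact k σ i (h1 i)
    have hne : (∏ i, ∏ j, (((k - permMat σ) i j).factorial : ℝ)) ≠ 0 := by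
      apply Finset.prod_ne_zero_iff.2; intro i _
      apply Finset.prod_ne_zero_iff.2; intro j _
      exact_mod_cast ((k - permMat σ) i j).factorial_ne_zero
    have hkp : ∀ i, (0:ℝ) < (k i (σ i) : ℝ) := by
      intro i; exact_mod_cast h1 i
    have hPne : (∏ i, (k i (σ i):ℝ)) ≠ 0 :=
      ne_of_gt (Finset.prod_pos (fun i _ => hkp i))
    rw [CscS, ← hprod]
    field_simp
  rw [Finset.sum_congr rfl key, ← Finset.mul_sum]
  have hsum : (∑ σ ∈ Finset.univ.filter (fun σ : Equiv.Perm (Fin n) => ∀ i, 1 ≤ k i (σ i)),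
      ∏ i, (k i (σ i) : ℝ)) = ∑ σ : Equiv.Perm (Fin n), ∏ i, (k i (σ i) : ℝ) := by
    apply Finset.sum_filter_of_ne
    intro σ _ hne i
    by_contra h
    apply hne
    apply Finset.prod_eq_zero (Finset.mem_univ i)
    have : k i (σ i) = 0 := by omega
    simp [this]
  rw [hsum]
  have hperm : perm' (Matrix.of fun i j => (k i j : ℝ) / (m+1:ℕ))
      = (∑ σ : Equiv.Perm (Fin n), ∏ i, (k i (σ i) : ℝ)) / ((m:ℝ)+1)^n := by
    rw [perm', Finset.sum_div]
    apply Finset.sum_congr rfl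
    intro σ _
    simp only [Matrix.of_apply]
    rw [Finset.prod_div_distrib]
    push_cast
    simp [Finset.card_univ]
  push_cast at hperm ⊢
  rw [hperm]
  rw [CscS]
  have hfac : ((m+1).factorial : ℝ) = ((m:ℝ)+1) * (m.factorial : ℝ) := by
    push_cast [Nat.factorial_succ]; ring
  have hexp : n * (m + 1) = n * m + n := by ring
  push_cast [hfac, hexp, pow_add, mul_pow, div_pow]
  have h1 : ((m:ℝ)+1) - 1 = (m:ℝ) := by ring
  rw [h1]
  have hfm : (0:ℝ) < (m.factorial : ℝ) := by exact_mod_cast m.factorial_pos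
  field_simp
  ring
end
end

section
/- Fix integers n, N ≥ 1 and k ∈ K(N,n), and let γ(i,j) = k(i,j)/N. Then lim_{t→∞} log(C_{B,tN,n}(t·k)) / (tN) = H_B(γ), where t ranges over positive integers, t·k is the entrywise multiple (so t·k ∈ K(tN,n)), and H_B(γ) = −Σ_{i,j} γ(i,j)·log γ(i,j) + Σ_{i,j} (1−γ(i,j))·log(1−γ(i,j)) (convention 0·log 0 = 0; log denotes the natural logarithm). -/
open scoped BigOperators

noncomputable section

/-- Error term in Stirling's approximation of `log m!`. -/
noncomputable def rr (m : ℕ) : ℝ := Real.log m.factorial - m * Real.log m + m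

lemma log_factorial_eq (m : ℕ) :
    Real.log m.factorial = (m : ℝ) * Real.log m - m + rr m := by
  unfold rr; ring

lemma rr_eq (m : ℕ) (hm : 1 ≤ m) :
    rr m = Real.log (Stirling.stirlingSeq m) + Real.log (2 * m) / 2 := by
  have hm0 : (m : ℝ) ≠ 0 := by positivity
  have h := Stirling.log_stirlingSeq_formula m
  have hdiv : Real.log ((m : ℝ) / Real.exp 1) = Real.log m - 1 := by
    rw [Real.log_div hm0 (Real.exp_ne_zero 1), Real.log_exp]
  rw [hdiv] at h
  unfold rr
  rw [h]; ring

open Filter in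
lemma rr_div_tendsto : Tendsto (fun m : ℕ => rr m / m) atTop (nhds 0) := by
  have h1 : Tendsto (fun m : ℕ => Real.log (Stirling.stirlingSeq m) / m) atTop (nhds 0) := by
    have hlog : Tendsto (fun m : ℕ => Real.log (Stirling.stirlingSeq m)) atTop
        (nhds (Real.log (Real.sqrt Real.pi))) :=
      ((Real.continuousAt_log (by positivity)).tendsto).comp Stirling.tendsto_stirlingSeq_sqrt_pi
    simpa using hlog.div_atTop tendsto_natCast_atTop_atTop
  have h2 : Tendsto (fun m : ℕ => Real.log (2 * m) / 2 / m) atTop (nhds 0) := by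
    have base : Tendsto (fun x : ℝ => Real.log x / x) atTop (nhds 0) :=
      Real.isLittleO_log_id_atTop.tendsto_div_nhds_zero
    have hcomp : Tendsto (fun m : ℕ => (2 * m : ℝ)) atTop atTop :=
      tendsto_natCast_atTop_atTop.const_mul_atTop (by norm_num)
    have h3 := base.comp hcomp
    have heq : ∀ᶠ m : ℕ in atTop, Real.log (2 * m) / (2 * m) = Real.log (2 * m) / 2 / m := by
      filter_upwards [eventually_ge_atTop 1] with m hm
      have : (m : ℝ) ≠ 0 := by positivity
      field_simp
    simpa using (h3.congr' heq)
  have h := (h1.add h2)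
  rw [add_zero] at h
  refine h.congr' ?_
  filter_upwards [eventually_ge_atTop 1] with m hm
  rw [rr_eq m hm, add_div]

lemma logfac_mul (t a : ℕ) (ht : 1 ≤ t) :
    Real.log ((t * a).factorial) =
      (t : ℝ) * a * (Real.log t - 1) + (t : ℝ) * ((a : ℝ) * Real.log a) + rr (t * a) := by
  rw [log_factorial_eq]
  rcases Nat.eq_zero_or_pos a with ha | ha
  · subst ha; simp
  · have ht0 : (t : ℝ) ≠ 0 := by positivity
    have ha0 : (a : ℝ) ≠ 0 := by positivity
    push_cast
    rw [Real.log_mul ht0 ha0]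
    ring

lemma rr_zero : rr 0 = 0 := by simp [rr]

open Filter in
lemma rr_mul_tendsto (a N : ℕ) (hN : 1 ≤ N) :
    Tendsto (fun t : ℕ => rr (t * a) / ((t : ℝ) * N)) atTop (nhds 0) := by
  rcases Nat.eq_zero_or_pos a with ha | ha
  · subst ha; simp [rr_zero]
  · have hta : Tendsto (fun t : ℕ => t * a) atTop atTop :=
      Filter.tendsto_atTop_mono (fun t => Nat.le_mul_of_pos_right t ha) tendsto_id
    have h := (rr_div_tendsto.comp hta).mul_const ((a : ℝ) / N)
    rw [zero_mul] at h
    refine h.congr' ?_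
    filter_upwards [eventually_ge_atTop 1] with t ht
    have ht0 : (t : ℝ) ≠ 0 := by positivity
    have ha0 : (a : ℝ) ≠ 0 := by positivity
    have hN0 : (N : ℝ) ≠ 0 := by positivity
    simp only [Function.comp]
    push_cast
    field_simp

/-- Fix `n, N ≥ 1` and `k ∈ K(N,n)` and let `γ(i,j) = k(i,j)/N`. Then
`log(C_{B,tN,n}(t·k))/(tN) → H_B(γ)` as `t → ∞`, where
`H_B(γ) = −Σ_{i,j} γ(i,j)·log γ(i,j) + Σ_{i,j} (1−γ(i,j))·log(1−γ(i,j))`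
(in Lean, `Real.log 0 = 0` realizes the convention `0·log 0 = 0`). -/
theorem statement_12 (n N : ℕ) (hn : 1 ≤ n) (hN : 1 ≤ N)
    (k : Matrix (Fin n) (Fin n) ℕ) (hk : isDS N n k) :
    Filter.Tendsto
      (fun t : ℕ =>
        Real.log (CB (t * N) n (Matrix.of fun i j => t * k i j)) / ((t * N : ℕ) : ℝ))
      Filter.atTop
      (nhds (-(∑ i, ∑ j, ((k i j : ℝ) / N) * Real.log ((k i j : ℝ) / N)) +
        ∑ i, ∑ j, (1 - (k i j : ℝ) / N) * Real.log (1 - (k i j : ℝ) / N))) := by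
  classical
  obtain ⟨hrow, hcol⟩ := hk
  have hkle : ∀ i j, k i j ≤ N := fun i j =>
    hrow i ▸ Finset.single_le_sum (fun c _ => Nat.zero_le _) (Finset.mem_univ j)
  have hN0 : (N : ℝ) ≠ 0 := by positivity
  have hsumk : ∑ i, ∑ j, (k i j : ℝ) = (n : ℝ) * N := by
    have h : ∀ i, ∑ j, (k i j : ℝ) = (N : ℝ) := fun i => by
      rw [← Nat.cast_sum, hrow i]
    simp [h, Finset.sum_const, Finset.card_univ]
  have hsumb : ∑ i, ∑ j, ((N : ℝ) - k i j) = (n : ℝ) ^ 2 * N - n * N := by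
    have h : ∀ i, ∑ j, ((N : ℝ) - k i j) = (n : ℝ) * N - N := by
      intro i
      rw [Finset.sum_sub_distrib]
      have h : ∑ j, (k i j : ℝ) = (N : ℝ) := by rw [← Nat.cast_sum, hrow i]
      simp [h, Finset.sum_const, Finset.card_univ, mul_comm]
    simp only [h]
    simp [Finset.sum_sub_distrib, Finset.sum_const, Finset.card_univ]
    ring
  have e1 : ∀ (i j : Fin n), (N : ℝ) * (((k i j : ℝ) / N) * Real.log ((k i j : ℝ) / N)) =
      (k i j : ℝ) * Real.log (k i j) - (k i j : ℝ) * Real.log N := by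
    intro i j
    rcases Nat.eq_zero_or_pos (k i j) with h | h
    · simp [h]
    · have hk0 : (k i j : ℝ) ≠ 0 := by positivity
      rw [Real.log_div hk0 hN0]
      field_simp
  have e2 : ∀ (i j : Fin n),
      (N : ℝ) * ((1 - (k i j : ℝ) / N) * Real.log (1 - (k i j : ℝ) / N)) =
      ((N : ℝ) - k i j) * Real.log ((N : ℝ) - k i j)
        - ((N : ℝ) - k i j) * Real.log N := by
    intro i j
    have h1 : 1 - (k i j : ℝ) / N = ((N : ℝ) - k i j) / N := by field_simp
    rcases eq_or_lt_of_le (hkle i j) with h | h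
    · rw [h1]
      have hz : (N : ℝ) - k i j = 0 := by rw [h]; ring
      simp [hz]
    · have hb0 : (N : ℝ) - k i j ≠ 0 := by
        have : (k i j : ℝ) < N := by exact_mod_cast h
        linarith
      rw [h1, Real.log_div hb0 hN0]
      field_simp
  have hent : (N : ℝ) * (-(∑ i, ∑ j, ((k i j : ℝ) / N) * Real.log ((k i j : ℝ) / N)) +
        ∑ i, ∑ j, (1 - (k i j : ℝ) / N) * Real.log (1 - (k i j : ℝ) / N)) =
      ((2 * n : ℝ) - (n : ℝ) ^ 2) * N * Real.log N
        + ∑ i, ∑ j, ((N : ℝ) - k i j) * Real.log ((N : ℝ) - k i j)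
        - ∑ i, ∑ j, (k i j : ℝ) * Real.log (k i j) := by
    rw [mul_add, mul_neg, Finset.mul_sum, Finset.mul_sum]
    simp only [Finset.mul_sum, e1, e2]
    simp only [Finset.sum_sub_distrib, ← Finset.sum_mul, hsumk, Finset.sum_const,
      Finset.card_univ, nsmul_eq_mul, Fintype.card_fin]
    ring
  have ffac : ∀ m : ℕ, ((m.factorial : ℕ) : ℝ) ≠ 0 := fun m =>
    Nat.cast_ne_zero.mpr (Nat.factorial_ne_zero m)
  have hmain : ∀ t : ℕ, 1 ≤ t →
      Real.log (CB (t * N) n (Matrix.of fun i j => t * k i j)) =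
        (t : ℝ) * N * (-(∑ i, ∑ j, ((k i j : ℝ) / N) * Real.log ((k i j : ℝ) / N)) +
          ∑ i, ∑ j, (1 - (k i j : ℝ) / N) * Real.log (1 - (k i j : ℝ) / N))
        + (((2 * n : ℝ) - (n : ℝ) ^ 2) * rr (t * N)
          + ∑ i, ∑ j, rr (t * (N - k i j)) - ∑ i, ∑ j, rr (t * k i j)) := by
    intro t ht
    have ht0 : (t : ℝ) ≠ 0 := by positivity
    have hsub : ∀ i j, t * N - t * k i j = t * (N - k i j) := fun i j =>
      (Nat.mul_sub t N (k i j)).symm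
    have hCB : CB (t * N) n (Matrix.of fun i j => t * k i j) =
        (((t * N).factorial : ℝ) ^ (2 * n) * ∏ i, ∏ j, (((t * (N - k i j)).factorial : ℝ))) /
        (((t * N).factorial : ℝ) ^ (n ^ 2) * ∏ i, ∏ j, (((t * k i j).factorial : ℝ))) := by
      simp only [CB, Matrix.of_apply, hsub]
    have hprodb : ∀ i : Fin n, (∏ j, ((t * (N - k i j)).factorial : ℝ)) ≠ 0 := fun i =>
      Finset.prod_ne_zero_iff.mpr fun j _ => ffac _
    have hprodk : ∀ i : Fin n, (∏ j, ((t * k i j).factorial : ℝ)) ≠ 0 := fun i =>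
      Finset.prod_ne_zero_iff.mpr fun j _ => ffac _
    have hPb : (∏ i, ∏ j, ((t * (N - k i j)).factorial : ℝ)) ≠ 0 :=
      Finset.prod_ne_zero_iff.mpr fun i _ => hprodb i
    have hPk : (∏ i, ∏ j, ((t * k i j).factorial : ℝ)) ≠ 0 :=
      Finset.prod_ne_zero_iff.mpr fun i _ => hprodk i
    have hinb : ∀ i : Fin n, Real.log (∏ j, ((t * (N - k i j)).factorial : ℝ)) =
        ∑ j, Real.log ((t * (N - k i j)).factorial : ℝ) := fun i =>
      Real.log_prod fun j _ => ffac _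
    have hink : ∀ i : Fin n, Real.log (∏ j, ((t * k i j).factorial : ℝ)) =
        ∑ j, Real.log ((t * k i j).factorial : ℝ) := fun i =>
      Real.log_prod fun j _ => ffac _
    rw [hCB, Real.log_div (mul_ne_zero (pow_ne_zero _ (ffac _)) hPb)
        (mul_ne_zero (pow_ne_zero _ (ffac _)) hPk),
      Real.log_mul (pow_ne_zero _ (ffac _)) hPb,
      Real.log_mul (pow_ne_zero _ (ffac _)) hPk,
      Real.log_pow, Real.log_pow,
      Real.log_prod (fun i _ => hprodb i),
      Real.log_prod (fun i _ => hprodk i)]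
    simp only [hinb, hink]
    have hL : ∀ a : ℕ, Real.log ((t * a).factorial) =
        (t : ℝ) * a * (Real.log t - 1) + (t : ℝ) * ((a : ℝ) * Real.log a) + rr (t * a) :=
      fun a => logfac_mul t a ht
    simp only [hL]
    have hc : ∀ (i j : Fin n), ((N - k i j : ℕ) : ℝ) = (N : ℝ) - k i j := fun i j =>
      Nat.cast_sub (hkle i j)
    simp only [hc, Finset.sum_add_distrib]
    have pull : ∀ (c : ℝ) (f : Fin n → Fin n → ℝ),
        ∑ i, ∑ j, c * f i j = c * ∑ i, ∑ j, f i j := fun c f => by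
      simp [Finset.mul_sum]
    have s1 : ∑ i, ∑ j, (t : ℝ) * ((N : ℝ) - k i j) * (Real.log t - 1) =
        ((t : ℝ) * (Real.log t - 1)) * ((n : ℝ) ^ 2 * N - n * N) := by
      have h : ∀ (i j : Fin n), (t : ℝ) * ((N : ℝ) - k i j) * (Real.log t - 1) =
          ((t : ℝ) * (Real.log t - 1)) * ((N : ℝ) - k i j) := fun i j => by ring
      simp only [h, pull, hsumb]
    have s2 : ∑ i, ∑ j, (t : ℝ) * (k i j : ℝ) * (Real.log t - 1) =
        ((t : ℝ) * (Real.log t - 1)) * ((n : ℝ) * N) := by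
      have h : ∀ (i j : Fin n), (t : ℝ) * (k i j : ℝ) * (Real.log t - 1) =
          ((t : ℝ) * (Real.log t - 1)) * (k i j : ℝ) := fun i j => by ring
      simp only [h, pull, hsumk]
    rw [s1, s2]
    simp only [pull]
    push_cast
    linear_combination (-(t : ℝ)) * hent
  -- the remainder tends to zero
  have hR : Filter.Tendsto (fun t : ℕ =>
      (((2 * n : ℝ) - (n : ℝ) ^ 2) * rr (t * N)
        + ∑ i, ∑ j, rr (t * (N - k i j)) - ∑ i, ∑ j, rr (t * k i j)) / ((t : ℝ) * N))
      Filter.atTop (nhds 0) := by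
    simp only [add_div, sub_div, Finset.sum_div, mul_div_assoc]
    have hA : Filter.Tendsto (fun t : ℕ =>
        ((2 * n : ℝ) - (n : ℝ) ^ 2) * (rr (t * N) / ((t : ℝ) * N)))
        Filter.atTop (nhds 0) := by
      simpa using (rr_mul_tendsto N N hN).const_mul ((2 * n : ℝ) - (n : ℝ) ^ 2)
    have hB : Filter.Tendsto (fun t : ℕ =>
        ∑ i : Fin n, ∑ j : Fin n, rr (t * (N - k i j)) / ((t : ℝ) * N))
        Filter.atTop (nhds 0) := by
      have := tendsto_finset_sum (Finset.univ : Finset (Fin n)) (fun i _ =>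
        tendsto_finset_sum (Finset.univ : Finset (Fin n)) (fun j _ =>
          rr_mul_tendsto (N - k i j) N hN))
      simpa using this
    have hC : Filter.Tendsto (fun t : ℕ =>
        ∑ i : Fin n, ∑ j : Fin n, rr (t * k i j) / ((t : ℝ) * N))
        Filter.atTop (nhds 0) := by
      have := tendsto_finset_sum (Finset.univ : Finset (Fin n)) (fun i _ =>
        tendsto_finset_sum (Finset.univ : Finset (Fin n)) (fun j _ =>
          rr_mul_tendsto (k i j) N hN))
      simpa using this
    simpa using (hA.add hB).sub hC
  have hfinal := Filter.Tendsto.const_add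
    (-(∑ i, ∑ j, ((k i j : ℝ) / N) * Real.log ((k i j : ℝ) / N)) +
      ∑ i, ∑ j, (1 - (k i j : ℝ) / N) * Real.log (1 - (k i j : ℝ) / N)) hR
  rw [add_zero] at hfinal
  refine hfinal.congr' ?_
  filter_upwards [Filter.eventually_ge_atTop 1] with t ht
  have ht0 : (t : ℝ) ≠ 0 := by positivity
  rw [hmain t ht]
  push_cast
  field_simp
end
end

section
/- Let n ≥ 1 and let θ be an n×n matrix with nonnegative real entries such that ∏_{i} θ(i,σ(i)) > 0 for at least one permutation σ ∈ S_n. Then limsup_{M→∞} perm(θ ⊗ U_{M,M})^{1/M} = sup_γ exp( Σ_{i,j} γ(i,j)·log θ(i,j) − n − Σ_{i,j} γ(i,j)·log γ(i,j) ), where the supremum is over all n×n doubly stochastic real matrices γ (nonnegative entries, every row sum and every column sum equal to 1) satisfying γ(i,j) = 0 whenever θ(i,j) = 0, with the convention 0·log 0 = 0 (so entries with θ(i,j) = 0 contribute 0) and log the natural logarithm. In other words, the limsup of the degree-M scaled Sinkhorn permanents equals the scaled Sinkhorn permanent exp(−min_γ F_{scS,θ}(γ)). -/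
open scoped BigOperators

noncomputable section

set_option maxHeartbeats 1000000

open Finset

namespace St14

open Finset



/-! ### Stirling-type bounds -/

lemma pow_le_factorial_mul_exp (k : ℕ) : (k:ℝ)^k ≤ (k.factorial : ℝ) * Real.exp 1 ^ k := by
  induction k with
  | zero => simp
  | succ k ih =>
    have hexp1 : (1:ℝ) ≤ Real.exp 1 := by
      have := Real.add_one_le_exp (1:ℝ); linarith
    have h1 : ((k:ℝ)+1)^k ≤ (k:ℝ)^k * Real.exp 1 := by
      rcases Nat.eq_zero_or_pos k with rfl | hk
      · simpa using hexp1
      · have hk' : (0:ℝ) < k := by exact_mod_cast hk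
        have h2 : (1 + 1/(k:ℝ)) ≤ Real.exp (1/(k:ℝ)) := by
          have := Real.add_one_le_exp (1/(k:ℝ)); linarith
        calc ((k:ℝ)+1)^k = ((k:ℝ) * (1 + 1/(k:ℝ)))^k := by
              rw [mul_add, mul_one, mul_one_div, div_self hk'.ne']
          _ = (k:ℝ)^k * (1+1/(k:ℝ))^k := by rw [mul_pow]
          _ ≤ (k:ℝ)^k * Real.exp (1/(k:ℝ)) ^ k := by
              gcongr
          _ = (k:ℝ)^k * Real.exp 1 := by
              rw [← Real.exp_nat_mul]
              congr 2
              field_simp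
    have hfac : (0:ℝ) ≤ (k.factorial : ℝ) := by positivity
    calc ((k+1:ℕ):ℝ)^(k+1) = ((k:ℝ)+1) * ((k:ℝ)+1)^k := by
          push_cast; ring
      _ ≤ ((k:ℝ)+1) * ((k:ℝ)^k * Real.exp 1) := by
          have : (0:ℝ) ≤ (k:ℝ)+1 := by positivity
          exact mul_le_mul_of_nonneg_left h1 this
      _ ≤ ((k:ℝ)+1) * ((k.factorial : ℝ) * Real.exp 1 ^ k * Real.exp 1) := by
          have : (0:ℝ) ≤ (k:ℝ)+1 := by positivity
          have := mul_le_mul_of_nonneg_right ih (Real.exp_pos 1).le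
          exact mul_le_mul_of_nonneg_left this ‹(0:ℝ) ≤ (k:ℝ)+1›
      _ = ((k+1).factorial : ℝ) * Real.exp 1 ^ (k+1) := by
          rw [Nat.factorial_succ]; push_cast; ring

lemma factorial_mul_exp_le (k : ℕ) (hk : 1 ≤ k) :
    (k.factorial : ℝ) * Real.exp 1 ^ k ≤ Real.exp 1 * k * (k:ℝ)^k := by
  induction k, hk using Nat.le_induction with
  | base => simp
  | succ k hk ih =>
    have hk' : (0:ℝ) < k := by exact_mod_cast hk
    -- key : exp 1 * k^(k+1) ≤ (k+1)^(k+1)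
    have key : Real.exp 1 * (k:ℝ)^(k+1) ≤ ((k:ℝ)+1)^(k+1) := by
      have h1 : Real.exp (1/((k:ℝ)+1)) ≤ ((k:ℝ)+1)/k := by
        have h2 := Real.add_one_le_exp (-(1/((k:ℝ)+1)))
        have h3 : (0:ℝ) < 1 - 1/((k:ℝ)+1) := by
          rw [sub_pos]
          rw [div_lt_one (by positivity)]
          linarith
        have h4 : 1 - 1/((k:ℝ)+1) ≤ Real.exp (-(1/((k:ℝ)+1))) := by linarith
        have h5 : Real.exp (1/((k:ℝ)+1)) = (Real.exp (-(1/((k:ℝ)+1))))⁻¹ := by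
          rw [← Real.exp_neg]; ring_nf
        rw [h5]
        rw [inv_le_comm₀ (Real.exp_pos _) (by positivity)]
        calc (((k:ℝ)+1)/k)⁻¹ = (k:ℝ)/((k:ℝ)+1) := by
              rw [inv_div]
          _ = 1 - 1/((k:ℝ)+1) := by field_simp; ring
          _ ≤ Real.exp (-(1/((k:ℝ)+1))) := h4
      have h6 : Real.exp 1 ≤ (((k:ℝ)+1)/k)^(k+1) := by
        have : Real.exp 1 = Real.exp (1/((k:ℝ)+1)) ^ (k+1) := by
          rw [← Real.exp_nat_mul]
          congr 1
          push_cast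
          field_simp
        rw [this]
        exact pow_le_pow_left₀ (Real.exp_pos _).le h1 _
      calc Real.exp 1 * (k:ℝ)^(k+1) ≤ (((k:ℝ)+1)/k)^(k+1) * (k:ℝ)^(k+1) := by
            have : (0:ℝ) ≤ (k:ℝ)^(k+1) := by positivity
            exact mul_le_mul_of_nonneg_right h6 this
        _ = ((k:ℝ)+1)^(k+1) := by
            rw [← mul_pow]
            congr 1
            field_simp
    calc ((k+1).factorial : ℝ) * Real.exp 1 ^ (k+1)
        = ((k:ℝ)+1) * Real.exp 1 * ((k.factorial : ℝ) * Real.exp 1 ^ k) := by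
          rw [Nat.factorial_succ]; push_cast; ring
      _ ≤ ((k:ℝ)+1) * Real.exp 1 * (Real.exp 1 * k * (k:ℝ)^k) := by
          have : (0:ℝ) ≤ ((k:ℝ)+1) * Real.exp 1 := by positivity
          exact mul_le_mul_of_nonneg_left ih this
      _ = ((k:ℝ)+1) * Real.exp 1 * (Real.exp 1 * (k:ℝ)^(k+1)) := by ring
      _ ≤ ((k:ℝ)+1) * Real.exp 1 * (((k:ℝ)+1)^(k+1)) := by
          have : (0:ℝ) ≤ ((k:ℝ)+1) * Real.exp 1 := by positivity
          exact mul_le_mul_of_nonneg_left key this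
      _ = Real.exp 1 * ((k:ℝ)+1) * ((k:ℝ)+1)^(k+1) := by ring
      _ = Real.exp 1 * ((k+1:ℕ):ℝ) * (((k+1:ℕ)):ℝ)^(k+1) := by push_cast; ring

lemma exp_le_factorial (k : ℕ) :
    Real.exp (k * Real.log k - k) ≤ (k.factorial : ℝ) := by
  rcases Nat.eq_zero_or_pos k with rfl | hk
  · simp
  · have hk' : (0:ℝ) < k := by exact_mod_cast hk
    have h1 : Real.exp ((k:ℝ) * Real.log k - k) = (k:ℝ)^k / Real.exp 1 ^ k := by
      rw [Real.exp_sub]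
      congr 1
      · rw [Real.exp_nat_mul, Real.exp_log hk']
      · rw [← Real.exp_nat_mul, mul_one]
    rw [h1, div_le_iff₀ (by positivity)]
    exact pow_le_factorial_mul_exp k

lemma factorial_le_exp (k M : ℕ) (hkM : k ≤ M) (hM : 1 ≤ M) :
    (k.factorial : ℝ) ≤ Real.exp ((k:ℝ) * Real.log k - k + (1 + Real.log M)) := by
  have hM' : (1:ℝ) ≤ (M:ℝ) := by exact_mod_cast hM
  have hlogM : 0 ≤ Real.log M := Real.log_nonneg hM'
  rcases Nat.eq_zero_or_pos k with rfl | hk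
  · simp only [Nat.factorial_zero, Nat.cast_one, Nat.cast_zero, zero_mul, Real.log_zero,
      sub_zero, zero_add]
    nth_rewrite 1 [← Real.exp_zero]
    apply Real.exp_le_exp.2
    linarith
  · have hk' : (0:ℝ) < k := by exact_mod_cast hk
    have h1 : Real.exp ((k:ℝ) * Real.log k - k + (1 + Real.log M))
        = Real.exp 1 * M * ((k:ℝ)^k / Real.exp 1 ^ k) := by
      rw [Real.exp_add, Real.exp_sub, Real.exp_add]
      rw [Real.exp_nat_mul, Real.exp_log hk']
      rw [← Real.exp_nat_mul (1:ℝ) k, mul_one, Real.exp_log (by linarith : (0:ℝ) < M)]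
      ring
    rw [h1]
    have h2 := factorial_mul_exp_le k hk
    rw [← le_div_iff₀ (by positivity : (0:ℝ) < Real.exp 1 ^ k)] at h2
    refine h2.trans ?_
    have hkM' : (k:ℝ) ≤ (M:ℝ) := by exact_mod_cast hkM
    rw [div_le_iff₀ (by positivity : (0:ℝ) < Real.exp 1 ^ k)]
    have hkk : (0:ℝ) ≤ (k:ℝ)^k := by positivity
    have hek : (0:ℝ) < Real.exp 1 ^ k := by positivity
    have : Real.exp 1 * (k:ℝ) * (k:ℝ)^k ≤ Real.exp 1 * (M:ℝ) * (k:ℝ)^k := by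
      have h9 : Real.exp 1 * (k:ℝ) ≤ Real.exp 1 * (M:ℝ) :=
        mul_le_mul_of_nonneg_left hkM' (Real.exp_pos 1).le
      exact mul_le_mul_of_nonneg_right h9 hkk
    calc Real.exp 1 * (k:ℝ) * (k:ℝ)^k ≤ Real.exp 1 * (M:ℝ) * (k:ℝ)^k := this
      _ = Real.exp 1 * (M:ℝ) * ((k:ℝ)^k / Real.exp 1 ^ k) * Real.exp 1 ^ k := by
          field_simp







section Counting

variable {α β : Type*} [Fintype α] [DecidableEq α] [Fintype β] [DecidableEq β]

/-- The fiber of `Sigma.fst` over `j` in `Σ j, Fin (κ j)` is `Fin (κ j)`. -/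
def sigmaFstFiber (κ : β → ℕ) (j : β) : {s : Σ j', Fin (κ j') // s.1 = j} ≃ Fin (κ j) where
  toFun s := Fin.cast (congrArg κ s.2) s.1.2
  invFun x := ⟨⟨j, x⟩, rfl⟩
  left_inv := by rintro ⟨⟨j', x⟩, rfl⟩; rfl
  right_inv x := rfl

/-- Given `e : α ≃ Σ j, Fin (κ j)` whose "block" is `f`, the fiber of `f` over `j`
is equivalent to `Fin (κ j)`. -/
def fiberEquivOfEquiv (κ : β → ℕ) (f : α → β) (e : α ≃ (Σ j : β, Fin (κ j)))
    (he : ∀ a, (e a).1 = f a) (j : β) : {a // f a = j} ≃ Fin (κ j) :=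
  (e.subtypeEquiv (fun a => by rw [← he a])).trans (sigmaFstFiber κ j)

/-- The set of equivalences `α ≃ Σ j, Fin (κ j)` with block map `f` is equivalent to the
set of tuples of equivalences of the fibers of `f` with the `Fin (κ j)`. -/
def blockFiberEquiv (κ : β → ℕ) (f : α → β) :
    {e : α ≃ (Σ j : β, Fin (κ j)) // ∀ a, (e a).1 = f a} ≃
      (∀ j : β, {a // f a = j} ≃ Fin (κ j)) where
  toFun e j := fiberEquivOfEquiv κ f e.1 e.2 j
  invFun g := ⟨(Equiv.sigmaFiberEquiv f).symm.trans (Equiv.sigmaCongrRight g), fun a => rfl⟩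
  left_inv := by
    rintro ⟨e, he⟩
    apply Subtype.ext
    apply Equiv.ext
    intro a
    show (⟨f a, fiberEquivOfEquiv κ f e he (f a) ⟨a, rfl⟩⟩ : Σ j, Fin (κ j)) = e a
    refine (Sigma.ext (he a) ?_).symm
    rw [Fin.heq_ext_iff (congrArg κ (he a))]
    rfl
  right_inv := by
    intro g
    funext j
    apply Equiv.ext
    rintro ⟨a, ha⟩
    subst ha
    exact Fin.ext rfl

lemma card_equiv_fin {X : Type*} [Fintype X] [DecidableEq X] (k : ℕ)
    (h : Fintype.card X = k) : Fintype.card (X ≃ Fin k) = k.factorial := by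
  rw [Fintype.card_equiv (Fintype.equivOfCardEq (by simp [h])), h]

lemma card_equiv_fin_ne {X : Type*} [Fintype X] [DecidableEq X] (k : ℕ)
    (h : Fintype.card X ≠ k) : Fintype.card (X ≃ Fin k) = 0 := by
  rw [Fintype.card_eq_zero_iff]
  refine ⟨fun e => h ?_⟩
  rw [← Fintype.card_fin k]
  exact Fintype.card_congr e

lemma card_block_eq (κ : β → ℕ) (f : α → β) :
    Fintype.card {e : α ≃ (Σ j : β, Fin (κ j)) // ∀ a, (e a).1 = f a}
      = ∏ j, Fintype.card ({a // f a = j} ≃ Fin (κ j)) := by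
  rw [Fintype.card_congr (blockFiberEquiv κ f)]
  exact Fintype.card_pi

/-- Multinomial counting: the number of functions `α → β` with prescribed fiber sizes `κ`,
times `∏ (κ j)!`, equals `(card α)!`. -/
lemma card_fiber_funs (κ : β → ℕ) (h : ∑ j, κ j = Fintype.card α) :
    Fintype.card {f : α → β // ∀ j, Fintype.card {a // f a = j} = κ j}
      * ∏ j, (κ j).factorial = (Fintype.card α).factorial := by
  classical
  have hcard : Fintype.card (Σ j : β, Fin (κ j)) = Fintype.card α := by
    simp [Fintype.card_sigma, h]
  have h0 : Fintype.card (α ≃ (Σ j : β, Fin (κ j))) = (Fintype.card α).factorial :=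
    Fintype.card_equiv (Fintype.equivOfCardEq hcard.symm)
  -- partition the equivalences by their block map
  have h1 : Fintype.card (α ≃ (Σ j : β, Fin (κ j)))
      = ∑ f : α → β, Fintype.card {e : α ≃ (Σ j : β, Fin (κ j)) // ∀ a, (e a).1 = f a} := by
    rw [Fintype.card_congr
      (Equiv.sigmaFiberEquiv (fun e : α ≃ (Σ j : β, Fin (κ j)) => fun a => (e a).1)).symm]
    rw [Fintype.card_sigma]
    congr 1
    funext f
    exact Fintype.card_congr (Equiv.subtypeEquivRight (fun e => funext_iff))
  rw [h1] at h0
  rw [← h0]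
  have h2 : ∀ f : α → β,
      Fintype.card {e : α ≃ (Σ j : β, Fin (κ j)) // ∀ a, (e a).1 = f a}
        = if (∀ j, Fintype.card {a // f a = j} = κ j) then ∏ j, (κ j).factorial else 0 := by
    intro f
    rw [card_block_eq]
    split_ifs with hcond
    · exact Finset.prod_congr rfl (fun j _ => card_equiv_fin _ (hcond j))
    · push_neg at hcond
      obtain ⟨j, hj⟩ := hcond
      exact Finset.prod_eq_zero (Finset.mem_univ j) (card_equiv_fin_ne _ hj)
  rw [Finset.sum_congr rfl (fun f _ => h2 f)]
  rw [Finset.sum_ite, Finset.sum_const, Finset.sum_const, smul_eq_mul, smul_eq_mul,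
    mul_zero, add_zero]
  rw [Fintype.card_subtype]

end Counting






section PermCount

variable {n M : ℕ}

/-- split the fiber of `f : Fin n × Fin M → Fin n` over `j` by first coordinate. -/
lemma card_prod_fiber (f : Fin n × Fin M → Fin n) (j : Fin n) :
    Fintype.card {p : Fin n × Fin M // f p = j}
      = ∑ i, Fintype.card {a : Fin M // f (i, a) = j} := by
  rw [← Fintype.card_sigma]
  refine Fintype.card_congr ?_
  exact { toFun := fun p => ⟨p.1.1, ⟨p.1.2, p.2⟩⟩
          invFun := fun x => ⟨(x.1, x.2.1), x.2.2⟩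
          left_inv := by rintro ⟨⟨i, a⟩, h⟩; rfl
          right_inv := by rintro ⟨i, a, h⟩; rfl }

/-- currying for joint fiber conditions. -/
def curryFiberEquiv (γ : Fin n → Fin n → ℕ) :
    {f : Fin n × Fin M → Fin n // ∀ i j, Fintype.card {a : Fin M // f (i, a) = j} = γ i j}
      ≃ (∀ i : Fin n, {g : Fin M → Fin n // ∀ j, Fintype.card {a : Fin M // g a = j} = γ i j}) where
  toFun f i := ⟨fun a => f.1 (i, a), f.2 i⟩
  invFun G := ⟨fun p => (G p.1).1 p.2, fun i j => (G i).2 j⟩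
  left_inv f := Subtype.ext (funext fun p => rfl)
  right_inv G := funext fun i => Subtype.ext rfl

/-- **Count of permutations with prescribed block type.** -/
lemma card_perm_fiber (hM : 1 ≤ M) (γ : Fin n → Fin n → ℕ)
    (hr : ∀ i, ∑ j, γ i j = M) (hc : ∀ j, ∑ i, γ i j = M) :
    Fintype.card {σ : Equiv.Perm (Fin n × Fin M) //
        ∀ i j, Fintype.card {a : Fin M // (σ (i, a)).1 = j} = γ i j}
      * ∏ i, ∏ j, (γ i j).factorial = M.factorial ^ (2 * n) := by
  classical
  -- transport to equivalences with a sigma type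
  have hstep1 : Fintype.card {σ : Equiv.Perm (Fin n × Fin M) //
        ∀ i j, Fintype.card {a : Fin M // (σ (i, a)).1 = j} = γ i j}
      = Fintype.card {e : (Fin n × Fin M) ≃ (Σ _ : Fin n, Fin M) //
        ∀ i j, Fintype.card {a : Fin M // (e (i, a)).1 = j} = γ i j} := by
    refine Fintype.card_congr (Equiv.subtypeEquiv
      (Equiv.equivCongr (Equiv.refl _) (Equiv.sigmaEquivProd (Fin n) (Fin M)).symm) ?_)
    intro σ
    exact Iff.rfl
  rw [hstep1]
  -- partition by block maps
  set blockOf : ((Fin n × Fin M) ≃ (Σ _ : Fin n, Fin M)) → (Fin n × Fin M → Fin n) :=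
    fun e => fun p => (e p).1 with hblockOf
  set s : Finset ((Fin n × Fin M) ≃ (Σ _ : Fin n, Fin M)) :=
    univ.filter (fun e => ∀ i j, Fintype.card {a : Fin M // (e (i, a)).1 = j} = γ i j) with hs
  set t : Finset (Fin n × Fin M → Fin n) :=
    univ.filter (fun f => ∀ i j, Fintype.card {a : Fin M // f (i, a) = j} = γ i j) with ht
  have hmaps : ∀ e ∈ s, blockOf e ∈ t := by
    intro e he
    simp only [hs, mem_filter, mem_univ, true_and] at he
    simp only [ht, mem_filter, mem_univ, true_and]
    exact he
  have hcards : Fintype.card {e : (Fin n × Fin M) ≃ (Σ _ : Fin n, Fin M) //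
        ∀ i j, Fintype.card {a : Fin M // (e (i, a)).1 = j} = γ i j} = s.card := by
    rw [Fintype.card_subtype]
  rw [hcards, Finset.card_eq_sum_card_fiberwise hmaps]
  -- each fiber has cardinality (M!)^n
  have hfiber : ∀ f ∈ t, (s.filter (fun e => blockOf e = f)).card = M.factorial ^ n := by
    intro f hf
    simp only [ht, mem_filter, mem_univ, true_and] at hf
    have hfeq : s.filter (fun e => blockOf e = f) = univ.filter (fun e => blockOf e = f) := by
      ext e
      simp only [hs, mem_filter, mem_univ, true_and, and_iff_right_iff_imp]
      intro hbe
      intro i j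
      have : ∀ a : Fin M, ((e (i, a)).1 = j) = (f (i, a) = j) := by
        intro a
        rw [show (e (i, a)).1 = f (i, a) from congrFun hbe (i, a)]
      calc Fintype.card {a : Fin M // (e (i, a)).1 = j}
          = Fintype.card {a : Fin M // f (i, a) = j} := by
            apply Fintype.card_congr
            exact Equiv.subtypeEquivRight (fun a => by rw [this a])
        _ = γ i j := hf i j
    rw [hfeq]
    have : (univ.filter (fun e => blockOf e = f)).card
        = Fintype.card {e : (Fin n × Fin M) ≃ (Σ _ : Fin n, Fin M) // ∀ p, (e p).1 = f p} := by
      rw [Fintype.card_subtype]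
      congr 1
      ext e
      simp only [mem_filter, mem_univ, true_and, hblockOf]
      rw [funext_iff]
    rw [this, card_block_eq (fun _ => M) f]
    have hcardfib : ∀ j, Fintype.card {p : Fin n × Fin M // f p = j} = M := by
      intro j
      rw [card_prod_fiber]
      rw [Finset.sum_congr rfl (fun i _ => hf i j)]
      exact hc j
    calc ∏ j, Fintype.card ({p : Fin n × Fin M // f p = j} ≃ Fin M)
        = ∏ j : Fin n, M.factorial := by
          exact Finset.prod_congr rfl (fun j _ => card_equiv_fin M (hcardfib j))
      _ = M.factorial ^ n := by rw [Finset.prod_const, Finset.card_univ, Fintype.card_fin]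
  rw [Finset.sum_congr rfl hfiber, Finset.sum_const, smul_eq_mul]
  -- number of admissible block maps
  have hts : t.card = ∏ i, Fintype.card
      {g : Fin M → Fin n // ∀ j, Fintype.card {a : Fin M // g a = j} = γ i j} := by
    rw [← Fintype.card_subtype]
    rw [Fintype.card_congr (curryFiberEquiv γ)]
    exact Fintype.card_pi
  rw [hts]
  rw [mul_assoc]
  rw [mul_comm (M.factorial ^ n)]
  rw [← mul_assoc, ← Finset.prod_mul_distrib]
  have : ∀ i : Fin n, Fintype.card
      {g : Fin M → Fin n // ∀ j, Fintype.card {a : Fin M // g a = j} = γ i j}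
        * ∏ j, (γ i j).factorial = M.factorial := by
    intro i
    have h9 := card_fiber_funs (γ i) (by rw [hr i, Fintype.card_fin] :
      ∑ j, γ i j = Fintype.card (Fin M))
    rw [Fintype.card_fin] at h9
    convert h9 using 3
  rw [Finset.prod_congr rfl (fun i _ => this i), Finset.prod_const, Finset.card_univ,
    Fintype.card_fin, ← pow_add, two_mul]

end PermCount




def perm'' {α : Type*} [Fintype α] [DecidableEq α] (A : Matrix α α ℝ) : ℝ :=
  ∑ σ : Equiv.Perm α, ∏ i, A i (σ i)

section Identity

variable (n M : ℕ)

/-- the block type of a permutation of `Fin n × Fin M`. -/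
def cType (σ : Equiv.Perm (Fin n × Fin M)) : Fin n → Fin n → ℕ :=
  fun i j => Fintype.card {a : Fin M // (σ (i, a)).1 = j}

/-- the number of permutations of a given block type. -/
def NN (γ : Fin n → Fin n → ℕ) : ℕ :=
  Fintype.card {σ : Equiv.Perm (Fin n × Fin M) // cType n M σ = γ}

lemma cType_row_sum (σ : Equiv.Perm (Fin n × Fin M)) (i : Fin n) :
    ∑ j, cType n M σ i j = M := by
  have h := Finset.card_eq_sum_card_fiberwise
    (f := fun a : Fin M => (σ (i, a)).1) (s := univ) (t := univ) (fun x _ => mem_univ _)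
  simp only [card_univ, Fintype.card_fin] at h
  have h2 : ∀ j ∈ (univ : Finset (Fin n)), cType n M σ i j
      = #(filter (fun a : Fin M => (σ (i, a)).1 = j) univ) := by
    intro j _
    rw [cType, Fintype.card_subtype]
  rw [Finset.sum_congr rfl h2]
  exact h.symm

lemma cType_col_sum (σ : Equiv.Perm (Fin n × Fin M)) (j : Fin n) :
    ∑ i, cType n M σ i j = M := by
  have h1 : ∑ i, cType n M σ i j = Fintype.card {p : Fin n × Fin M // (σ p).1 = j} := by
    simp only [cType]
    rw [← Fintype.card_sigma]
    refine (Fintype.card_congr ?_).symm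
    exact { toFun := fun p => ⟨p.1.1, ⟨p.1.2, p.2⟩⟩
            invFun := fun x => ⟨(x.1, x.2.1), x.2.2⟩
            left_inv := by rintro ⟨⟨i, a⟩, h⟩; rfl
            right_inv := by rintro ⟨i, a, h⟩; rfl }
  rw [h1]
  have h2 : Fintype.card {p : Fin n × Fin M // (σ p).1 = j}
      = Fintype.card {q : Fin n × Fin M // q.1 = j} :=
    Fintype.card_congr (Equiv.subtypeEquiv σ (fun p => Iff.rfl))
  rw [h2]
  have h3 : Fintype.card {q : Fin n × Fin M // q.1 = j} = M := by
    refine (Fintype.card_congr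
      { toFun := fun q : {q : Fin n × Fin M // q.1 = j} => q.1.2
        invFun := fun a => ⟨(j, a), rfl⟩
        left_inv := by rintro ⟨⟨j', a⟩, rfl⟩; rfl
        right_inv := fun a => rfl }).trans (Fintype.card_fin M)
  exact h3

lemma weight_eq (θ : Matrix (Fin n) (Fin n) ℝ) (σ : Equiv.Perm (Fin n × Fin M)) :
    (∏ p : Fin n × Fin M,
        (Matrix.kroneckerMap (· * ·) θ (Matrix.of fun _ _ : Fin M => 1 / (M : ℝ))) p (σ p))
      = (1/(M:ℝ))^(n*M) * ∏ i, ∏ j, θ i j ^ cType n M σ i j := by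
  have h0 : ∀ p : Fin n × Fin M,
      (Matrix.kroneckerMap (· * ·) θ (Matrix.of fun _ _ : Fin M => 1 / (M : ℝ))) p (σ p)
        = θ p.1 (σ p).1 * (1/(M:ℝ)) := fun p => rfl
  rw [Finset.prod_congr rfl (fun p _ => h0 p), Finset.prod_mul_distrib, Finset.prod_const]
  rw [card_univ, Fintype.card_prod, Fintype.card_fin, Fintype.card_fin]
  rw [mul_comm]
  congr 1
  rw [Fintype.prod_prod_type]
  apply Finset.prod_congr rfl
  intro i _
  have h1 := Finset.prod_fiberwise_of_maps_to (s := (univ : Finset (Fin M)))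
    (t := (univ : Finset (Fin n))) (g := fun a => (σ (i, a)).1)
    (fun x _ => mem_univ _) (fun a => θ i (σ (i, a)).1)
  rw [← h1]
  apply Finset.prod_congr rfl
  intro j _
  have h2 : ∀ a ∈ univ.filter (fun a : Fin M => (σ (i, a)).1 = j),
      θ i (σ (i, a)).1 = θ i j := by
    intro a ha
    simp only [mem_filter, mem_univ, true_and] at ha
    rw [ha]
  rw [Finset.prod_congr rfl h2, Finset.prod_const]
  congr 1
  rw [cType, Fintype.card_subtype]

/-- **The permanent decomposition identity.** -/
lemma perm_eq (θ : Matrix (Fin n) (Fin n) ℝ) :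
    perm'' (Matrix.kroneckerMap (· * ·) θ (Matrix.of fun _ _ : Fin M => 1 / (M : ℝ)))
      = ∑ γ ∈ univ.image (cType n M),
          (NN n M γ : ℝ) * ((1/(M:ℝ))^(n*M) * ∏ i, ∏ j, θ i j ^ γ i j) := by
  classical
  rw [perm'']
  rw [← Finset.sum_fiberwise_of_maps_to (g := cType n M) (t := univ.image (cType n M))
    (fun σ _ => mem_image_of_mem _ (mem_univ σ)) _]
  apply Finset.sum_congr rfl
  intro γ _
  have h1 : ∀ σ ∈ univ.filter (fun σ => cType n M σ = γ),
      (∏ p : Fin n × Fin M,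
        (Matrix.kroneckerMap (· * ·) θ (Matrix.of fun _ _ : Fin M => 1 / (M : ℝ))) p (σ p))
        = (1/(M:ℝ))^(n*M) * ∏ i, ∏ j, θ i j ^ γ i j := by
    intro σ hσ
    simp only [mem_filter, mem_univ, true_and] at hσ
    rw [weight_eq, hσ]
  rw [Finset.sum_congr rfl h1, Finset.sum_const, nsmul_eq_mul]
  congr 1
  rw [NN, Fintype.card_subtype]

/-- the permutation-count identity, in the `NN`-form. -/
lemma NN_mul_eq (hM : 1 ≤ M) (γ : Fin n → Fin n → ℕ)
    (hr : ∀ i, ∑ j, γ i j = M) (hc : ∀ j, ∑ i, γ i j = M) :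
    NN n M γ * ∏ i, ∏ j, (γ i j).factorial = M.factorial ^ (2 * n) := by
  classical
  have hcard : NN n M γ = Fintype.card {σ : Equiv.Perm (Fin n × Fin M) //
      ∀ i j, Fintype.card {a : Fin M // (σ (i, a)).1 = j} = γ i j} := by
    rw [NN]
    refine Fintype.card_congr (Equiv.subtypeEquivRight (fun σ => ?_))
    rw [funext_iff]
    exact forall_congr' fun i => funext_iff
  rw [hcard]
  exact card_perm_fiber hM γ hr hc

lemma mem_image_cType (hM : 1 ≤ M) (γ : Fin n → Fin n → ℕ)
    (hr : ∀ i, ∑ j, γ i j = M) (hc : ∀ j, ∑ i, γ i j = M) :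
    γ ∈ univ.image (cType n M) := by
  have h := NN_mul_eq n M hM γ hr hc
  have hpos : 0 < NN n M γ := by
    refine Nat.pos_of_ne_zero (fun h0 => ?_)
    rw [h0, zero_mul] at h
    exact (pow_pos (Nat.factorial_pos M) (2*n)).ne' h.symm
  rw [NN, Fintype.card_pos_iff] at hpos
  obtain ⟨⟨σ, hσ⟩⟩ := hpos
  exact Finset.mem_image.2 ⟨σ, mem_univ σ, hσ⟩

lemma row_sum_le (γ : Fin n → Fin n → ℕ) (hr : ∀ i, ∑ j, γ i j = M) (i j : Fin n) :
    γ i j ≤ M := by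
  rw [← hr i]
  exact Finset.single_le_sum (fun k _ => Nat.zero_le _) (mem_univ j)

lemma card_image_cType_le :
    (univ.image (cType n M)).card ≤ (M+1)^(n*n) := by
  classical
  have hsub : ∀ γ ∈ univ.image (cType n M), ∀ i j, γ i j < M + 1 := by
    intro γ hγ i j
    obtain ⟨σ, _, rfl⟩ := Finset.mem_image.1 hγ
    exact Nat.lt_succ_of_le (row_sum_le n M _ (cType_row_sum n M σ) i j)
  calc (univ.image (cType n M)).card
      ≤ (univ : Finset (Fin n → Fin n → Fin (M+1))).card := by
        apply Finset.card_le_card_of_injOn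
          (fun γ => fun i j => ⟨min (γ i j) M, Nat.lt_succ_of_le (min_le_right _ _)⟩)
        · intro γ _; exact mem_univ _
        · intro γ1 h1 γ2 h2 heq
          funext i j
          have e1 := congrFun (congrFun heq i) j
          have m1 : min (γ1 i j) M = γ1 i j := min_eq_left (Nat.lt_succ_iff.1 (hsub γ1 h1 i j))
          have m2 : min (γ2 i j) M = γ2 i j := min_eq_left (Nat.lt_succ_iff.1 (hsub γ2 h2 i j))
          have := congrArg Fin.val e1
          simp only at this
          rw [m1, m2] at this
          exact this
    _ = (M+1)^(n*n) := by
        rw [card_univ]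
        simp [Fintype.card_pi, Finset.prod_const]
        rw [← pow_mul]

end Identity


section Analysis

variable (n : ℕ) (θ : Matrix (Fin n) (Fin n) ℝ)

/-- scaled Sinkhorn free energy (negated). -/
noncomputable def phi (γ : Matrix (Fin n) (Fin n) ℝ) : ℝ :=
  (∑ i, ∑ j, γ i j * Real.log (θ i j)) - n - ∑ i, ∑ j, γ i j * Real.log (γ i j)

/-- normalized matrix -/
noncomputable def cOf (M : ℕ) (γ : Fin n → Fin n → ℕ) : Matrix (Fin n) (Fin n) ℝ :=
  Matrix.of fun i j => (γ i j : ℝ) / M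

lemma sum_sum_eq (M : ℕ) (γ : Fin n → Fin n → ℕ) (hr : ∀ i, ∑ j, γ i j = M) :
    ∑ i, ∑ j, (γ i j : ℝ) = (n : ℝ) * M := by
  have h : ∀ i ∈ (univ : Finset (Fin n)), ∑ j, (γ i j : ℝ) = (M : ℝ) := by
    intro i _
    rw [← Nat.cast_sum]
    exact_mod_cast congrArg (Nat.cast : ℕ → ℝ) (hr i)
  rw [Finset.sum_congr rfl h, Finset.sum_const, card_univ, Fintype.card_fin, nsmul_eq_mul]

lemma exp_identity (M : ℕ) (hM : 1 ≤ M) (γ : Fin n → Fin n → ℕ)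
    (hr : ∀ i, ∑ j, γ i j = M) :
    (M : ℝ) * phi n θ (cOf n M γ) =
      (∑ i, ∑ j, (γ i j : ℝ) * Real.log (θ i j)) - (n : ℝ) * M
        - (∑ i, ∑ j, (γ i j : ℝ) * Real.log (γ i j)) + (n : ℝ) * M * Real.log M := by
  have hM0 : (M : ℝ) ≠ 0 := by
    have : (0:ℝ) < M := by exact_mod_cast hM
    exact this.ne'
  have hA : (M : ℝ) * (∑ i, ∑ j, cOf n M γ i j * Real.log (θ i j))
      = ∑ i, ∑ j, (γ i j : ℝ) * Real.log (θ i j) := by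
    rw [Finset.mul_sum]
    refine Finset.sum_congr rfl (fun i _ => ?_)
    rw [Finset.mul_sum]
    refine Finset.sum_congr rfl (fun j _ => ?_)
    show (M:ℝ) * ((γ i j : ℝ)/M * Real.log (θ i j)) = _
    field_simp
  have hB : (M : ℝ) * (∑ i, ∑ j, cOf n M γ i j * Real.log (cOf n M γ i j))
      = (∑ i, ∑ j, (γ i j : ℝ) * Real.log (γ i j)) - (n : ℝ) * M * Real.log M := by
    have hperentry : ∀ i j, (M:ℝ) * (cOf n M γ i j * Real.log (cOf n M γ i j))
        = (γ i j : ℝ) * Real.log (γ i j) - (γ i j : ℝ) * Real.log M := by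
      intro i j
      show (M:ℝ) * ((γ i j : ℝ)/M * Real.log ((γ i j : ℝ)/M)) = _
      rcases Nat.eq_zero_or_pos (γ i j) with h0 | h0
      · simp [h0]
      · have hγ : (0:ℝ) < (γ i j : ℝ) := by exact_mod_cast h0
        rw [Real.log_div hγ.ne' hM0]
        field_simp
    calc (M : ℝ) * (∑ i, ∑ j, cOf n M γ i j * Real.log (cOf n M γ i j))
        = ∑ i, ∑ j, (M:ℝ) * (cOf n M γ i j * Real.log (cOf n M γ i j)) := by
          rw [Finset.mul_sum]
          exact Finset.sum_congr rfl (fun i _ => by rw [Finset.mul_sum])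
      _ = ∑ i, ∑ j, ((γ i j : ℝ) * Real.log (γ i j) - (γ i j : ℝ) * Real.log M) := by
          exact Finset.sum_congr rfl (fun i _ => Finset.sum_congr rfl
            (fun j _ => hperentry i j))
      _ = (∑ i, ∑ j, (γ i j : ℝ) * Real.log (γ i j))
            - (∑ i, ∑ j, (γ i j : ℝ)) * Real.log M := by
          rw [Finset.sum_mul]
          rw [← Finset.sum_sub_distrib]
          refine Finset.sum_congr rfl (fun i _ => ?_)
          rw [Finset.sum_mul, ← Finset.sum_sub_distrib]
      _ = (∑ i, ∑ j, (γ i j : ℝ) * Real.log (γ i j)) - (n : ℝ) * M * Real.log M := by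
          rw [sum_sum_eq n M γ hr]
  rw [phi, mul_sub, mul_sub, hA, hB]
  ring

variable {n θ} in
lemma prod_pow_eq_exp (M : ℕ) (γ : Fin n → Fin n → ℕ) (hθ : ∀ i j, 0 ≤ θ i j)
    (hsupp : ∀ i j, θ i j = 0 → γ i j = 0) :
    (∏ i, ∏ j, θ i j ^ γ i j) = Real.exp (∑ i, ∑ j, (γ i j : ℝ) * Real.log (θ i j)) := by
  rw [Real.exp_sum]
  refine Finset.prod_congr rfl (fun i _ => ?_)
  rw [Real.exp_sum]
  refine Finset.prod_congr rfl (fun j _ => ?_)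
  rcases Nat.eq_zero_or_pos (γ i j) with h0 | h0
  · simp [h0]
  · have hθ0 : θ i j ≠ 0 := fun h => (Nat.pos_iff_ne_zero.1 h0) (hsupp i j h)
    have hθpos : 0 < θ i j := lt_of_le_of_ne (hθ i j) (Ne.symm hθ0)
    rw [Real.exp_nat_mul, Real.exp_log hθpos]

lemma prod_prod_exp (f : Fin n → Fin n → ℝ) :
    ∏ i, ∏ j, Real.exp (f i j) = Real.exp (∑ i, ∑ j, f i j) := by
  rw [Real.exp_sum]
  exact Finset.prod_congr rfl (fun i _ => (Real.exp_sum _ _).symm)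

lemma prod_fact_lb (γ : Fin n → Fin n → ℕ) :
    Real.exp (∑ i, ∑ j, ((γ i j : ℝ) * Real.log (γ i j) - γ i j))
      ≤ ∏ i, ∏ j, ((γ i j).factorial : ℝ) := by
  rw [Real.exp_sum]
  refine Finset.prod_le_prod (fun i _ => (Real.exp_pos _).le) (fun i _ => ?_)
  rw [Real.exp_sum]
  exact Finset.prod_le_prod (fun j _ => (Real.exp_pos _).le)
    (fun j _ => exp_le_factorial (γ i j))

lemma prod_fact_ub (M : ℕ) (hM : 1 ≤ M) (γ : Fin n → Fin n → ℕ)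
    (hle : ∀ i j, γ i j ≤ M) :
    (∏ i, ∏ j, ((γ i j).factorial : ℝ))
      ≤ Real.exp ((∑ i, ∑ j, ((γ i j : ℝ) * Real.log (γ i j) - γ i j))
          + (n:ℝ)*n*(1 + Real.log M)) := by
  have step : (∏ i, ∏ j, ((γ i j).factorial : ℝ))
      ≤ ∏ i, ∏ j, Real.exp ((γ i j : ℝ) * Real.log (γ i j) - γ i j + (1 + Real.log M)) := by
    refine Finset.prod_le_prod (fun i _ => Finset.prod_nonneg (fun j _ => by positivity))
      (fun i _ => ?_)
    exact Finset.prod_le_prod (fun j _ => by positivity)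
      (fun j _ => factorial_le_exp (γ i j) M (hle i j) hM)
  refine step.trans (le_of_eq ?_)
  rw [prod_prod_exp]
  congr 1
  have h1 : ∀ i ∈ (univ : Finset (Fin n)),
      ∑ j, ((γ i j : ℝ) * Real.log (γ i j) - γ i j + (1 + Real.log M))
        = (∑ j, ((γ i j : ℝ) * Real.log (γ i j) - γ i j)) + (n:ℝ)*(1 + Real.log M) := by
    intro i _
    rw [Finset.sum_add_distrib, Finset.sum_const, card_univ, Fintype.card_fin, nsmul_eq_mul]
  rw [Finset.sum_congr rfl h1, Finset.sum_add_distrib, Finset.sum_const, card_univ,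
    Fintype.card_fin, nsmul_eq_mul]
  ring

lemma inv_pow_eq (M : ℕ) (hM : 1 ≤ M) :
    (1/(M:ℝ))^(n*M) = Real.exp (-(((n*M : ℕ) : ℝ) * Real.log M)) := by
  have hMpos : (0:ℝ) < M := by exact_mod_cast hM
  have h1 : (1/(M:ℝ)) = Real.exp (-Real.log M) := by
    rw [Real.exp_neg, Real.exp_log hMpos, one_div]
  rw [h1, ← Real.exp_nat_mul]
  congr 1
  ring

lemma fact_pow_lb (M : ℕ) :
    Real.exp ((2*n : ℕ) * ((M:ℝ) * Real.log M - M)) ≤ ((M.factorial : ℝ)) ^ (2*n) := by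
  rw [Real.exp_nat_mul]
  exact pow_le_pow_left₀ (Real.exp_pos _).le (exp_le_factorial M) _

lemma fact_pow_ub (M : ℕ) (hM : 1 ≤ M) :
    ((M.factorial : ℝ)) ^ (2*n) ≤
      Real.exp ((2*n : ℕ) * ((M:ℝ) * Real.log M - M + (1 + Real.log M))) := by
  rw [Real.exp_nat_mul]
  exact pow_le_pow_left₀ (by positivity) (factorial_le_exp M M le_rfl hM) _

variable {n} in
lemma NN_cast (M : ℕ) (hM : 1 ≤ M) (γ : Fin n → Fin n → ℕ)
    (hr : ∀ i, ∑ j, γ i j = M) (hc : ∀ j, ∑ i, γ i j = M) :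
    (NN n M γ : ℝ) = (M.factorial : ℝ) ^ (2*n) / ∏ i, ∏ j, ((γ i j).factorial : ℝ) := by
  have h := NN_mul_eq n M hM γ hr hc
  have hD : (0:ℝ) < ∏ i, ∏ j, ((γ i j).factorial : ℝ) := by
    refine Finset.prod_pos (fun i _ => Finset.prod_pos (fun j _ => ?_))
    exact_mod_cast Nat.factorial_pos _
  rw [eq_div_iff hD.ne']
  have := congrArg (Nat.cast : ℕ → ℝ) h
  push_cast at this
  convert this using 2

/-- **Upper bound for a single term.** -/
lemma term_upper (M : ℕ) (hM : 1 ≤ M) (γ : Fin n → Fin n → ℕ) (hθ : ∀ i j, 0 ≤ θ i j)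
    (hr : ∀ i, ∑ j, γ i j = M) (hc : ∀ j, ∑ i, γ i j = M)
    (hsupp : ∀ i j, θ i j = 0 → γ i j = 0) :
    (NN n M γ : ℝ) * ((1/(M:ℝ))^(n*M) * ∏ i, ∏ j, θ i j ^ γ i j)
      ≤ Real.exp ((M:ℝ) * phi n θ (cOf n M γ) + 2*(n:ℝ)*(1 + Real.log M)) := by
  have hle : ∀ i j, γ i j ≤ M := fun i j => row_sum_le n M γ hr i j
  rw [NN_cast M hM γ hr hc, prod_pow_eq_exp M γ hθ hsupp, inv_pow_eq n M hM]
  rw [div_mul_eq_mul_div]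
  rw [div_le_iff₀ (by
    refine Finset.prod_pos (fun i _ => Finset.prod_pos (fun j _ => ?_))
    exact_mod_cast Nat.factorial_pos _)]
  calc (M.factorial:ℝ)^(2*n) * (Real.exp (-(((n*M : ℕ) : ℝ) * Real.log M))
          * Real.exp (∑ i, ∑ j, (γ i j : ℝ) * Real.log (θ i j)))
      ≤ Real.exp ((2*n : ℕ) * ((M:ℝ) * Real.log M - M + (1 + Real.log M)))
          * (Real.exp (-(((n*M : ℕ) : ℝ) * Real.log M))
          * Real.exp (∑ i, ∑ j, (γ i j : ℝ) * Real.log (θ i j))) := by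
        exact mul_le_mul_of_nonneg_right (fact_pow_ub n M hM) (by positivity)
    _ = Real.exp ((2*n : ℕ) * ((M:ℝ) * Real.log M - M + (1 + Real.log M))
          + (-(((n*M : ℕ) : ℝ) * Real.log M))
          + (∑ i, ∑ j, (γ i j : ℝ) * Real.log (θ i j))) := by
        rw [Real.exp_add, Real.exp_add]
        ring
    _ ≤ Real.exp ((M:ℝ) * phi n θ (cOf n M γ) + 2*(n:ℝ)*(1 + Real.log M))
          * (∏ i, ∏ j, ((γ i j).factorial : ℝ)) := by
        have h1 := prod_fact_lb n γ
        have h2 : Real.exp ((2*n : ℕ) * ((M:ℝ) * Real.log M - M + (1 + Real.log M))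
            + (-(((n*M : ℕ) : ℝ) * Real.log M))
            + (∑ i, ∑ j, (γ i j : ℝ) * Real.log (θ i j)))
          = Real.exp ((M:ℝ) * phi n θ (cOf n M γ) + 2*(n:ℝ)*(1 + Real.log M))
            * Real.exp (∑ i, ∑ j, ((γ i j : ℝ) * Real.log (γ i j) - γ i j)) := by
          rw [← Real.exp_add]
          congr 1
          have hid := exp_identity n θ M hM γ hr
          have hsub : ∑ i, ∑ j, ((γ i j : ℝ) * Real.log (γ i j) - γ i j)
              = (∑ i, ∑ j, (γ i j : ℝ) * Real.log (γ i j)) - (n:ℝ)*M := by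
            have h7 : ∑ i, ∑ j, ((γ i j : ℝ) * Real.log (γ i j) - γ i j)
                = (∑ i, ∑ j, (γ i j : ℝ) * Real.log (γ i j)) - ∑ i, ∑ j, (γ i j : ℝ) := by
              rw [← Finset.sum_sub_distrib]
              exact Finset.sum_congr rfl (fun i _ => by rw [← Finset.sum_sub_distrib])
            rw [h7, sum_sum_eq n M γ hr]
          rw [hsub]
          push_cast
          linarith [hid]
        rw [h2]
        exact mul_le_mul_of_nonneg_left h1 (Real.exp_pos _).le

/-- **Lower bound for a single term.** -/
lemma term_lower (M : ℕ) (hM : 1 ≤ M) (γ : Fin n → Fin n → ℕ) (hθ : ∀ i j, 0 ≤ θ i j)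
    (hr : ∀ i, ∑ j, γ i j = M) (hc : ∀ j, ∑ i, γ i j = M)
    (hsupp : ∀ i j, θ i j = 0 → γ i j = 0) :
    Real.exp ((M:ℝ) * phi n θ (cOf n M γ) - (n:ℝ)*n*(1 + Real.log M))
      ≤ (NN n M γ : ℝ) * ((1/(M:ℝ))^(n*M) * ∏ i, ∏ j, θ i j ^ γ i j) := by
  have hle : ∀ i j, γ i j ≤ M := fun i j => row_sum_le n M γ hr i j
  rw [NN_cast M hM γ hr hc, prod_pow_eq_exp M γ hθ hsupp, inv_pow_eq n M hM]
  rw [div_mul_eq_mul_div]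
  rw [le_div_iff₀ (by
    refine Finset.prod_pos (fun i _ => Finset.prod_pos (fun j _ => ?_))
    exact_mod_cast Nat.factorial_pos _)]
  calc Real.exp ((M:ℝ) * phi n θ (cOf n M γ) - (n:ℝ)*n*(1 + Real.log M))
        * (∏ i, ∏ j, ((γ i j).factorial : ℝ))
      ≤ Real.exp ((M:ℝ) * phi n θ (cOf n M γ) - (n:ℝ)*n*(1 + Real.log M))
        * Real.exp ((∑ i, ∑ j, ((γ i j : ℝ) * Real.log (γ i j) - γ i j))
            + (n:ℝ)*n*(1 + Real.log M)) := by
        exact mul_le_mul_of_nonneg_left (prod_fact_ub n M hM γ hle) (Real.exp_pos _).le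
    _ = Real.exp ((2*n : ℕ) * ((M:ℝ) * Real.log M - M))
          * (Real.exp (-(((n*M : ℕ) : ℝ) * Real.log M))
          * Real.exp (∑ i, ∑ j, (γ i j : ℝ) * Real.log (θ i j))) := by
        rw [← Real.exp_add, ← Real.exp_add, ← Real.exp_add]
        congr 1
        have hid := exp_identity n θ M hM γ hr
        have hsub : ∑ i, ∑ j, ((γ i j : ℝ) * Real.log (γ i j) - γ i j)
            = (∑ i, ∑ j, (γ i j : ℝ) * Real.log (γ i j)) - (n:ℝ)*M := by
          have h7 : ∑ i, ∑ j, ((γ i j : ℝ) * Real.log (γ i j) - γ i j)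
              = (∑ i, ∑ j, (γ i j : ℝ) * Real.log (γ i j)) - ∑ i, ∑ j, (γ i j : ℝ) := by
            rw [← Finset.sum_sub_distrib]
            exact Finset.sum_congr rfl (fun i _ => by rw [← Finset.sum_sub_distrib])
          rw [h7, sum_sum_eq n M γ hr]
        rw [hsub]
        push_cast
        linarith [hid]
    _ ≤ (M.factorial:ℝ)^(2*n) * (Real.exp (-(((n*M : ℕ) : ℝ) * Real.log M))
          * Real.exp (∑ i, ∑ j, (γ i j : ℝ) * Real.log (θ i j))) := by
        exact mul_le_mul_of_nonneg_right (fact_pow_lb n M) (by positivity)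

end Analysis
open Filter

section KsetSec

variable (n : ℕ) (θ : Matrix (Fin n) (Fin n) ℝ)

def Kset : Set (Matrix (Fin n) (Fin n) ℝ) :=
  {γ | (∀ i j, 0 ≤ γ i j) ∧ (∀ i, ∑ j, γ i j = 1) ∧ (∀ j, ∑ i, γ i j = 1) ∧
    ∀ i j, θ i j = 0 → γ i j = 0}

lemma neg_one_le_mul_log (x : ℝ) (hx : 0 ≤ x) : -1 ≤ x * Real.log x := by
  rcases hx.eq_or_lt with h | h
  · simp [← h]
  · have h1 : Real.log x⁻¹ ≤ x⁻¹ - 1 := Real.log_le_sub_one_of_pos (by positivity)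
    rw [Real.log_inv] at h1
    have h2 : 1 - x⁻¹ ≤ Real.log x := by linarith
    have h3 : x * (1 - x⁻¹) ≤ x * Real.log x := mul_le_mul_of_nonneg_left h2 hx
    have h4 : x * (1 - x⁻¹) = x - 1 := by field_simp
    nlinarith

lemma entry_le_one {γ : Matrix (Fin n) (Fin n) ℝ} (hγ : γ ∈ Kset n θ) (i j : Fin n) :
    γ i j ≤ 1 := by
  rw [← hγ.2.1 i]
  exact Finset.single_le_sum (fun k _ => hγ.1 i k) (mem_univ j)

lemma phi_le_bound {γ : Matrix (Fin n) (Fin n) ℝ} (hγ : γ ∈ Kset n θ) :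
    phi n θ γ ≤ (∑ i, ∑ j, |Real.log (θ i j)|) - n + n*n := by
  rw [phi]
  have h1 : ∑ i, ∑ j, γ i j * Real.log (θ i j) ≤ ∑ i, ∑ j, |Real.log (θ i j)| := by
    refine Finset.sum_le_sum (fun i _ => Finset.sum_le_sum (fun j _ => ?_))
    rcases le_or_gt 0 (Real.log (θ i j)) with h | h
    · calc γ i j * Real.log (θ i j) ≤ 1 * Real.log (θ i j) :=
            mul_le_mul_of_nonneg_right (entry_le_one n θ hγ i j) h
        _ = Real.log (θ i j) := one_mul _
        _ ≤ |Real.log (θ i j)| := le_abs_self _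
    · calc γ i j * Real.log (θ i j) ≤ 0 := mul_nonpos_of_nonneg_of_nonpos (hγ.1 i j) h.le
        _ ≤ |Real.log (θ i j)| := abs_nonneg _
  have h2 : -(∑ i, ∑ j, γ i j * Real.log (γ i j)) ≤ (n:ℝ)*n := by
    have h3 : ∀ i ∈ (univ : Finset (Fin n)), ∀ j ∈ (univ : Finset (Fin n)),
        (-1 : ℝ) ≤ γ i j * Real.log (γ i j) :=
      fun i _ j _ => neg_one_le_mul_log _ (hγ.1 i j)
    have h4 : ∑ i, ∑ j, (-1 : ℝ) ≤ ∑ i, ∑ j, γ i j * Real.log (γ i j) :=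
      Finset.sum_le_sum (fun i hi => Finset.sum_le_sum (h3 i hi))
    have h5 : ∑ i : Fin n, ∑ j : Fin n, (-1 : ℝ) = -((n:ℝ)*n) := by
      rw [Finset.sum_const, card_univ, Fintype.card_fin, nsmul_eq_mul, Finset.sum_const,
        card_univ, Fintype.card_fin, nsmul_eq_mul]
      ring
    rw [h5] at h4
    linarith
  linarith

lemma Kset_nonempty (hex : ∃ σ : Equiv.Perm (Fin n), 0 < ∏ i, θ i (σ i))
    (hθ : ∀ i j, 0 ≤ θ i j) : (Kset n θ).Nonempty := by
  obtain ⟨σ, hσ⟩ := hex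
  have hpos : ∀ i, 0 < θ i (σ i) := by
    intro i
    rcases (hθ i (σ i)).eq_or_lt with h | h
    · exfalso
      rw [Finset.prod_eq_zero (mem_univ i) h.symm] at hσ
      exact lt_irrefl 0 hσ
    · exact h
  refine ⟨Matrix.of fun i j => if σ i = j then (1:ℝ) else 0, ?_, ?_, ?_, ?_⟩
  · intro i j
    dsimp only [Matrix.of_apply]
    split <;> norm_num
  · intro i
    simp
  · intro j
    simp only [Matrix.of_apply]
    have h6 : ∀ i ∈ (univ : Finset (Fin n)), ((if σ i = j then (1:ℝ) else 0))
        = (if i = σ.symm j then (1:ℝ) else 0) := by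
      intro i _
      congr 1
      rw [eq_iff_iff]
      exact Equiv.apply_eq_iff_eq_symm_apply σ
    rw [Finset.sum_congr rfl h6]
    simp
  · intro i j h0
    dsimp only [Matrix.of_apply]
    by_cases h1 : σ i = j
    · exfalso
      rw [← h1] at h0
      exact (hpos i).ne' h0
    · rw [if_neg h1]

lemma bddAbove_phi : BddAbove (phi n θ '' Kset n θ) := by
  refine ⟨(∑ i, ∑ j, |Real.log (θ i j)|) - n + n*n, ?_⟩
  rintro x ⟨γ, hγ, rfl⟩
  exact phi_le_bound n θ hγ

end KsetSec

section Rounding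

variable (n : ℕ) (θ : Matrix (Fin n) (Fin n) ℝ)

lemma rounding {γK : Matrix (Fin n) (Fin n) ℝ} (hK : γK ∈ Kset n θ) :
    ∃ g : ℕ → Fin n → Fin n → ℕ,
      (∀ M, 1 ≤ M → (∀ i, ∑ j, g M i j = M) ∧ (∀ j, ∑ i, g M i j = M) ∧
        (∀ i j, θ i j = 0 → g M i j = 0)) ∧
      Filter.Tendsto (fun M => phi n θ (cOf n M (g M))) Filter.atTop
        (nhds (phi n θ γK)) := by
  classical
  have hDS : γK ∈ doublyStochastic ℝ (Fin n) :=
    mem_doublyStochastic_iff_sum.2 ⟨hK.1, hK.2.1, hK.2.2.1⟩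
  obtain ⟨w, hw0, hw1, hw2⟩ := exists_eq_sum_perm_of_mem_doublyStochastic hDS
  have hentry : ∀ i j, γK i j = ∑ σ : Equiv.Perm (Fin n),
      w σ * (if σ i = j then (1:ℝ) else 0) := by
    intro i j
    rw [← hw2]
    rw [Matrix.sum_apply]
    refine Finset.sum_congr rfl (fun σ _ => ?_)
    rw [Matrix.smul_apply]
    congr 1
    simp [Equiv.Perm.permMatrix, PEquiv.toMatrix_apply, Equiv.toPEquiv_apply, eq_comm]
  -- a permutation with positive weight
  have hstar : ∃ σs : Equiv.Perm (Fin n), 0 < w σs := by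
    by_contra h
    push_neg at h
    have : ∑ σ : Equiv.Perm (Fin n), w σ = 0 :=
      Finset.sum_eq_zero (fun σ _ => le_antisymm (h σ) (hw0 σ))
    rw [hw1] at this
    exact one_ne_zero this
  obtain ⟨σs, hσs⟩ := hstar
  -- the rounding
  set m : ℕ → Equiv.Perm (Fin n) → ℕ := fun M σ =>
    if σ = σs then M - ∑ τ ∈ univ.erase σs, ⌊(M:ℝ) * w τ⌋₊ else ⌊(M:ℝ) * w σ⌋₊ with hm
  have hS_le : ∀ M : ℕ, ∑ τ ∈ univ.erase σs, ⌊(M:ℝ) * w τ⌋₊ ≤ M := by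
    intro M
    have h1 : ((∑ τ ∈ univ.erase σs, ⌊(M:ℝ) * w τ⌋₊ : ℕ) : ℝ) ≤ (M:ℝ) := by
      push_cast
      calc ∑ τ ∈ univ.erase σs, (⌊(M:ℝ) * w τ⌋₊ : ℝ)
          ≤ ∑ τ ∈ univ.erase σs, (M:ℝ) * w τ :=
            Finset.sum_le_sum (fun τ _ => Nat.floor_le (mul_nonneg (Nat.cast_nonneg M) (hw0 τ)))
        _ = (M:ℝ) * ∑ τ ∈ univ.erase σs, w τ := by rw [Finset.mul_sum]
        _ ≤ (M:ℝ) * 1 := by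
            refine mul_le_mul_of_nonneg_left ?_ (Nat.cast_nonneg M)
            rw [← hw1]
            exact Finset.sum_le_sum_of_subset_of_nonneg (Finset.subset_univ _)
              (fun τ _ _ => hw0 τ)
        _ = (M:ℝ) := mul_one _
    exact_mod_cast h1
  have hmsum : ∀ M : ℕ, ∑ σ : Equiv.Perm (Fin n), m M σ = M := by
    intro M
    rw [← Finset.add_sum_erase _ _ (mem_univ σs)]
    have h1 : m M σs = M - ∑ τ ∈ univ.erase σs, ⌊(M:ℝ) * w τ⌋₊ := by simp [hm]
    have h2 : ∀ σ ∈ univ.erase σs, m M σ = ⌊(M:ℝ) * w σ⌋₊ := by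
      intro σ hσ
      have := Finset.ne_of_mem_erase hσ
      simp [hm, this]
    rw [h1, Finset.sum_congr rfl h2, Nat.sub_add_cancel (hS_le M)]
  -- positivity of weights when used
  have hmw : ∀ M σ, m M σ ≠ 0 → 0 < w σ := by
    intro M σ hne
    by_cases hσ : σ = σs
    · rw [hσ]; exact hσs
    · simp only [hm, hσ, if_false] at hne
      have h1 : (0:ℝ) < (M:ℝ) * w σ := by
        by_contra h
        push_neg at h
        rw [Nat.floor_eq_zero.2 (by linarith)] at hne
        exact hne rfl
      rcases (hw0 σ).eq_or_lt with h | h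
      · exfalso; rw [← h] at h1; simp at h1
      · exact h
  -- the integer matrices
  refine ⟨fun M i j => ∑ σ : Equiv.Perm (Fin n), m M σ * (if σ i = j then 1 else 0),
    ?_, ?_⟩
  · intro M hM
    refine ⟨?_, ?_, ?_⟩
    · intro i
      rw [Finset.sum_comm]
      calc ∑ σ : Equiv.Perm (Fin n), ∑ j, m M σ * (if σ i = j then 1 else 0)
          = ∑ σ : Equiv.Perm (Fin n), m M σ := by
            refine Finset.sum_congr rfl (fun σ _ => ?_)
            rw [← Finset.mul_sum]
            simp
        _ = M := hmsum M
    · intro j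
      rw [Finset.sum_comm]
      calc ∑ σ : Equiv.Perm (Fin n), ∑ i, m M σ * (if σ i = j then 1 else 0)
          = ∑ σ : Equiv.Perm (Fin n), m M σ := by
            refine Finset.sum_congr rfl (fun σ _ => ?_)
            rw [← Finset.mul_sum]
            have h6 : ∀ i ∈ (univ : Finset (Fin n)), ((if σ i = j then (1:ℕ) else 0))
                = (if i = σ.symm j then 1 else 0) := by
              intro i _
              congr 1
              rw [eq_iff_iff]
              exact Equiv.apply_eq_iff_eq_symm_apply σ
            rw [Finset.sum_congr rfl h6]
            simp
        _ = M := hmsum M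
    · intro i j h0
      refine Finset.sum_eq_zero (fun σ _ => ?_)
      rcases Nat.eq_zero_or_pos (m M σ) with hz | hz
      · rw [hz, zero_mul]
      · have hwσ : 0 < w σ := hmw M σ hz.ne'
        have hnot : ¬ (σ i = j) := by
          intro hji
          have h2 := hentry i j
          rw [hK.2.2.2 i j h0] at h2
          have h3 : ∀ τ ∈ (univ : Finset (Equiv.Perm (Fin n))),
              0 ≤ w τ * (if τ i = j then (1:ℝ) else 0) := by
            intro τ _
            split <;> simp [hw0 τ]
          have h4 := (Finset.sum_eq_zero_iff_of_nonneg h3).1 h2.symm σ (mem_univ σ)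
          rw [if_pos hji, mul_one] at h4
          exact hwσ.ne' h4
        rw [if_neg hnot, mul_zero]
  · -- convergence
    have hconv : ∀ σ : Equiv.Perm (Fin n),
        Filter.Tendsto (fun M : ℕ => (m M σ : ℝ) / M) Filter.atTop (nhds (w σ)) := by
      have hfl : ∀ σ : Equiv.Perm (Fin n),
          Filter.Tendsto (fun M : ℕ => (⌊(M:ℝ) * w σ⌋₊ : ℝ) / M) Filter.atTop
            (nhds (w σ)) := by
        intro σ
        have hub : ∀ᶠ M : ℕ in atTop, (⌊(M:ℝ) * w σ⌋₊ : ℝ) / M ≤ w σ := by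
          filter_upwards [Filter.eventually_ge_atTop 1] with M hM
          have hMpos : (0:ℝ) < M := by exact_mod_cast hM
          rw [div_le_iff₀ hMpos]
          calc (⌊(M:ℝ) * w σ⌋₊ : ℝ) ≤ (M:ℝ) * w σ :=
              Nat.floor_le (mul_nonneg (Nat.cast_nonneg M) (hw0 σ))
            _ = w σ * M := mul_comm _ _
        have hlb : ∀ᶠ M : ℕ in atTop, w σ - 1/M ≤ (⌊(M:ℝ) * w σ⌋₊ : ℝ) / M := by
          filter_upwards [Filter.eventually_ge_atTop 1] with M hM
          have hMpos : (0:ℝ) < M := by exact_mod_cast hM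
          rw [sub_le_iff_le_add, ← add_div, le_div_iff₀ hMpos]
          have := (Nat.lt_floor_add_one ((M:ℝ) * w σ)).le
          linarith [this]
        have h1 : Filter.Tendsto (fun M : ℕ => w σ - 1/(M:ℝ)) Filter.atTop (nhds (w σ)) := by
          have := tendsto_one_div_atTop_nhds_zero_nat (𝕜 := ℝ)
          simpa using tendsto_const_nhds.sub this
        exact tendsto_of_tendsto_of_tendsto_of_le_of_le' h1 tendsto_const_nhds hlb hub
      intro σ
      by_cases hσ : σ = σs
      · subst hσ
        have heq : ∀ᶠ M : ℕ in atTop, (m M σ : ℝ)/M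
            = 1 - ∑ τ ∈ univ.erase σ, (⌊(M:ℝ) * w τ⌋₊ : ℝ)/M := by
          filter_upwards [Filter.eventually_ge_atTop 1] with M hM
          have hMpos : (0:ℝ) < M := by exact_mod_cast hM
          have h1 : (m M σ : ℝ) = (M:ℝ) - ∑ τ ∈ univ.erase σ, (⌊(M:ℝ) * w τ⌋₊ : ℝ) := by
            simp only [hm, if_pos rfl]
            push_cast [Nat.cast_sub (hS_le M)]
            ring
          rw [h1, sub_div, Finset.sum_div]
          congr 1
          rw [div_self hMpos.ne']
        have hlim : Filter.Tendsto
            (fun M : ℕ => 1 - ∑ τ ∈ univ.erase σ, (⌊(M:ℝ) * w τ⌋₊ : ℝ)/M)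
            Filter.atTop (nhds (1 - ∑ τ ∈ univ.erase σ, w τ)) := by
          refine Filter.Tendsto.const_sub _ ?_
          exact tendsto_finset_sum _ (fun τ _ => hfl τ)
        have hweq : 1 - ∑ τ ∈ univ.erase σ, w τ = w σ := by
          have := Finset.add_sum_erase _ w (mem_univ σ)
          rw [hw1] at this
          linarith
        rw [hweq] at hlim
        exact Filter.Tendsto.congr' (heq.mono (fun M h => h.symm)) hlim
      · have heq : ∀ M : ℕ, (m M σ : ℝ)/M = (⌊(M:ℝ) * w σ⌋₊ : ℝ)/M := by
          intro M
          simp [hm, hσ]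
        rw [funext heq]
        exact hfl σ
    have hcent : ∀ i j, Filter.Tendsto
        (fun M : ℕ => cOf n M (fun i j => ∑ σ : Equiv.Perm (Fin n),
          m M σ * (if σ i = j then 1 else 0)) i j) Filter.atTop (nhds (γK i j)) := by
      intro i j
      have heq : ∀ M : ℕ, cOf n M (fun i j => ∑ σ : Equiv.Perm (Fin n),
          m M σ * (if σ i = j then 1 else 0)) i j
          = ∑ σ : Equiv.Perm (Fin n), ((m M σ : ℝ)/M) * (if σ i = j then (1:ℝ) else 0) := by
        intro M
        show ((∑ σ : Equiv.Perm (Fin n), m M σ * (if σ i = j then 1 else 0) : ℕ) : ℝ)/(M:ℝ) = _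
        push_cast
        rw [Finset.sum_div]
        refine Finset.sum_congr rfl (fun σ _ => ?_)
        split <;> simp <;> ring
      rw [funext heq, hentry i j]
      refine tendsto_finset_sum _ (fun σ _ => ?_)
      exact (hconv σ).mul_const _
    -- assemble continuity of phi
    have t1 : Filter.Tendsto (fun M : ℕ => ∑ i, ∑ j,
        cOf n M (fun i j => ∑ σ : Equiv.Perm (Fin n), m M σ * (if σ i = j then 1 else 0)) i j
          * Real.log (θ i j)) Filter.atTop
        (nhds (∑ i, ∑ j, γK i j * Real.log (θ i j))) := by
      refine tendsto_finset_sum _ (fun i _ => tendsto_finset_sum _ (fun j _ => ?_))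
      exact (hcent i j).mul_const _
    have t2 : Filter.Tendsto (fun M : ℕ => ∑ i, ∑ j,
        (cOf n M (fun i j => ∑ σ : Equiv.Perm (Fin n), m M σ * (if σ i = j then 1 else 0)) i j)
          * Real.log (cOf n M (fun i j => ∑ σ : Equiv.Perm (Fin n),
            m M σ * (if σ i = j then 1 else 0)) i j)) Filter.atTop
        (nhds (∑ i, ∑ j, γK i j * Real.log (γK i j))) := by
      refine tendsto_finset_sum _ (fun i _ => tendsto_finset_sum _ (fun j _ => ?_))
      exact (Real.continuous_mul_log.tendsto (γK i j)).comp (hcent i j)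
    have := (t1.sub (tendsto_const_nhds (x := (n:ℝ)))).sub t2
    exact this

end Rounding


section Final

variable (n : ℕ) (θ : Matrix (Fin n) (Fin n) ℝ)

lemma theta_pos (hθ : ∀ i j, 0 ≤ θ i j) {σ : Equiv.Perm (Fin n)}
    (hσ : 0 < ∏ i, θ i (σ i)) : ∀ i, 0 < θ i (σ i) := by
  intro i
  rcases (hθ i (σ i)).eq_or_lt with h | h
  · exfalso
    rw [Finset.prod_eq_zero (mem_univ i) h.symm] at hσ
    exact lt_irrefl 0 hσ
  · exact h

lemma perm_pos (hθ : ∀ i j, 0 ≤ θ i j)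
    (hex : ∃ σ : Equiv.Perm (Fin n), 0 < ∏ i, θ i (σ i)) (M : ℕ) (hM : 1 ≤ M) :
    0 < perm'' (Matrix.kroneckerMap (· * ·) θ (Matrix.of fun _ _ : Fin M => 1 / (M : ℝ))) := by
  obtain ⟨σ0, hσ0⟩ := hex
  have hpos := theta_pos n θ hθ hσ0
  have hM' : (0:ℝ) < M := by exact_mod_cast hM
  rw [perm'']
  have h0 : ∀ p q : Fin n × Fin M,
      (Matrix.kroneckerMap (· * ·) θ (Matrix.of fun _ _ : Fin M => 1 / (M : ℝ))) p q
        = θ p.1 q.1 * (1/(M:ℝ)) := fun p q => rfl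
  have hterm : ∀ σ : Equiv.Perm (Fin n × Fin M), 0 ≤ ∏ p,
      (Matrix.kroneckerMap (· * ·) θ (Matrix.of fun _ _ : Fin M => 1 / (M : ℝ))) p (σ p) := by
    intro σ
    refine Finset.prod_nonneg (fun p _ => ?_)
    rw [h0]
    exact mul_nonneg (hθ _ _) (by positivity)
  refine lt_of_lt_of_le ?_
    (Finset.single_le_sum (fun σ _ => hterm σ)
      (mem_univ (Equiv.prodCongr σ0 (Equiv.refl (Fin M)))))
  have heq : ∏ p : Fin n × Fin M,
      (Matrix.kroneckerMap (· * ·) θ (Matrix.of fun _ _ : Fin M => 1 / (M : ℝ))) p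
        ((Equiv.prodCongr σ0 (Equiv.refl (Fin M))) p)
      = ∏ p : Fin n × Fin M, (θ p.1 (σ0 p.1) * (1/(M:ℝ))) := rfl
  rw [heq]
  exact Finset.prod_pos (fun p _ => mul_pos (hpos p.1) (by positivity))

/-- upper bound on the log-permanent. -/
lemma log_perm_upper (hθ : ∀ i j, 0 ≤ θ i j)
    (hex : ∃ σ : Equiv.Perm (Fin n), 0 < ∏ i, θ i (σ i)) (M : ℕ) (hM : 1 ≤ M) :
    Real.log (perm'' (Matrix.kroneckerMap (· * ·) θ (Matrix.of fun _ _ : Fin M => 1 / (M : ℝ))))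
      ≤ (n:ℝ)*n*Real.log (M+1)
        + ((M:ℝ) * sSup (phi n θ '' Kset n θ) + 2*(n:ℝ)*(1 + Real.log M)) := by
  have hM' : (0:ℝ) < M := by exact_mod_cast hM
  set s := sSup (phi n θ '' Kset n θ) with hs
  rw [Real.log_le_iff_le_exp (perm_pos n θ hθ hex M hM)]
  rw [perm_eq n M θ]
  have hterm : ∀ γ ∈ univ.image (cType n M),
      (NN n M γ : ℝ) * ((1/(M:ℝ))^(n*M) * ∏ i, ∏ j, θ i j ^ γ i j)
        ≤ Real.exp ((M:ℝ) * s + 2*(n:ℝ)*(1 + Real.log M)) := by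
    intro γ hγ
    obtain ⟨σ, _, rfl⟩ := Finset.mem_image.1 hγ
    set γ := cType n M σ
    have hr : ∀ i, ∑ j, γ i j = M := cType_row_sum n M σ
    have hc : ∀ j, ∑ i, γ i j = M := cType_col_sum n M σ
    by_cases hsupp : ∀ i j, θ i j = 0 → γ i j = 0
    · have hcK : cOf n M γ ∈ Kset n θ := by
        refine ⟨fun i j => div_nonneg (Nat.cast_nonneg _) (Nat.cast_nonneg _),
          fun i => ?_, fun j => ?_, fun i j h => ?_⟩
        · show (∑ j, ((γ i j : ℝ)/M)) = 1
          rw [← Finset.sum_div]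
          rw [show (∑ j, (γ i j : ℝ)) = (M:ℝ) by exact_mod_cast congrArg Nat.cast (hr i)]
          exact div_self hM'.ne'
        · show (∑ i, ((γ i j : ℝ)/M)) = 1
          rw [← Finset.sum_div]
          rw [show (∑ i, (γ i j : ℝ)) = (M:ℝ) by exact_mod_cast congrArg Nat.cast (hc j)]
          exact div_self hM'.ne'
        · show ((γ i j : ℝ)/M) = 0
          rw [hsupp i j h]
          simp
      have hphi : phi n θ (cOf n M γ) ≤ s :=
        le_csSup (bddAbove_phi n θ) ⟨cOf n M γ, hcK, rfl⟩
      refine (term_upper n θ M hM γ hθ hr hc hsupp).trans ?_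
      apply Real.exp_le_exp.2
      have : (M:ℝ) * phi n θ (cOf n M γ) ≤ (M:ℝ) * s :=
        mul_le_mul_of_nonneg_left hphi hM'.le
      linarith
    · push_neg at hsupp
      obtain ⟨i, j, hθ0, hγ0⟩ := hsupp
      have hP : (∏ i, ∏ j, θ i j ^ γ i j) = 0 := by
        refine Finset.prod_eq_zero (mem_univ i) ?_
        refine Finset.prod_eq_zero (mem_univ j) ?_
        rw [hθ0]
        exact zero_pow hγ0
      rw [hP, mul_zero, mul_zero]
      exact (Real.exp_pos _).le
  calc ∑ γ ∈ univ.image (cType n M),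
        (NN n M γ : ℝ) * ((1/(M:ℝ))^(n*M) * ∏ i, ∏ j, θ i j ^ γ i j)
      ≤ ((univ.image (cType n M)).card : ℝ)
          * Real.exp ((M:ℝ) * s + 2*(n:ℝ)*(1 + Real.log M)) := by
        have h := Finset.sum_le_card_nsmul (univ.image (cType n M))
          (fun γ => (NN n M γ : ℝ) * ((1/(M:ℝ))^(n*M) * ∏ i, ∏ j, θ i j ^ γ i j))
          (Real.exp ((M:ℝ) * s + 2*(n:ℝ)*(1 + Real.log M))) hterm
        rwa [nsmul_eq_mul] at h
    _ ≤ ((M+1:ℕ):ℝ)^(n*n) * Real.exp ((M:ℝ) * s + 2*(n:ℝ)*(1 + Real.log M)) := by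
        refine mul_le_mul_of_nonneg_right ?_ (Real.exp_pos _).le
        calc ((univ.image (cType n M)).card : ℝ) ≤ (((M+1)^(n*n) : ℕ) : ℝ) := by
              exact_mod_cast card_image_cType_le n M
          _ = ((M+1:ℕ):ℝ)^(n*n) := by push_cast; ring
    _ = Real.exp ((n:ℝ)*n*Real.log (M+1)
          + ((M:ℝ) * s + 2*(n:ℝ)*(1 + Real.log M))) := by
        have hcast : ((M+1:ℕ):ℝ)^(n*n) = Real.exp ((n:ℝ)*n*Real.log ((M:ℝ)+1)) := by
          rw [← Real.exp_log (x := ((M+1:ℕ):ℝ)^(n*n)) (by positivity), Real.log_pow]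
          congr 1
          push_cast
          ring
        rw [hcast, ← Real.exp_add]

/-- lower bound on the log-permanent via a single term. -/
lemma log_perm_lower (hθ : ∀ i j, 0 ≤ θ i j)
    (hex : ∃ σ : Equiv.Perm (Fin n), 0 < ∏ i, θ i (σ i)) (M : ℕ) (hM : 1 ≤ M)
    (γ : Fin n → Fin n → ℕ) (hr : ∀ i, ∑ j, γ i j = M) (hc : ∀ j, ∑ i, γ i j = M)
    (hsupp : ∀ i j, θ i j = 0 → γ i j = 0) :
    (M:ℝ) * phi n θ (cOf n M γ) - (n:ℝ)*n*(1 + Real.log M)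
      ≤ Real.log (perm''
          (Matrix.kroneckerMap (· * ·) θ (Matrix.of fun _ _ : Fin M => 1 / (M : ℝ)))) := by
  rw [Real.le_log_iff_exp_le (perm_pos n θ hθ hex M hM)]
  refine (term_lower n θ M hM γ hθ hr hc hsupp).trans ?_
  rw [perm_eq n M θ]
  refine Finset.single_le_sum
    (f := fun γ' => (NN n M γ' : ℝ) * ((1/(M:ℝ))^(n*M) * ∏ i, ∏ j, θ i j ^ γ' i j))
    (fun γ' _ => ?_) (mem_image_cType n M hM γ hr hc)
  refine mul_nonneg (Nat.cast_nonneg _) (mul_nonneg (by positivity) ?_)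
  exact Finset.prod_nonneg (fun i _ => Finset.prod_nonneg (fun j _ => pow_nonneg (hθ i j) _))

/-- the limit of normalized log-permanents. -/
lemma tendsto_log_perm_div (hn : 1 ≤ n) (hθ : ∀ i j, 0 ≤ θ i j)
    (hex : ∃ σ : Equiv.Perm (Fin n), 0 < ∏ i, θ i (σ i)) :
    Filter.Tendsto (fun M : ℕ => Real.log (perm''
        (Matrix.kroneckerMap (· * ·) θ (Matrix.of fun _ _ : Fin M => 1 / (M : ℝ)))) / M)
      Filter.atTop (nhds (sSup (phi n θ '' Kset n θ))) := by
  classical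
  set s := sSup (phi n θ '' Kset n θ) with hs
  set a : ℕ → ℝ := fun M => Real.log (perm''
      (Matrix.kroneckerMap (· * ·) θ (Matrix.of fun _ _ : Fin M => 1 / (M : ℝ)))) / M with ha
  -- auxiliary limits
  have l2 : Tendsto (fun M : ℕ => Real.log M / M) atTop (nhds 0) := by
    have h := Real.tendsto_pow_log_div_mul_add_atTop 1 0 1 one_ne_zero
    simp only [pow_one, one_mul, add_zero] at h
    exact h.comp tendsto_natCast_atTop_atTop
  have l1 : Tendsto (fun M : ℕ => Real.log ((M:ℝ)+1) / M) atTop (nhds 0) := by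
    have h := Real.tendsto_pow_log_div_mul_add_atTop 1 (-1) 1 one_ne_zero
    simp only [pow_one, one_mul] at h
    have h2 := h.comp (tendsto_atTop_add_const_right atTop (1:ℝ) tendsto_natCast_atTop_atTop)
    refine h2.congr (fun M => ?_)
    show Real.log ((M:ℝ)+1) / (((M:ℝ)+1) + -1) = Real.log ((M:ℝ)+1) / M
    congr 1
    ring
  have l3 : Tendsto (fun M : ℕ => 1/(M:ℝ)) atTop (nhds 0) :=
    tendsto_one_div_atTop_nhds_zero_nat
  set u : ℕ → ℝ := fun M => ((n:ℝ)*n*Real.log ((M:ℝ)+1) + 2*(n:ℝ)*(1 + Real.log M))/M with hu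
  set v : ℕ → ℝ := fun M => (n:ℝ)*n*(1 + Real.log M)/M with hv
  have hu0 : Tendsto u atTop (nhds 0) := by
    have heq : u = fun M : ℕ => (n:ℝ)*n*(Real.log ((M:ℝ)+1)/M)
        + (2*(n:ℝ)*(1/(M:ℝ)) + 2*(n:ℝ)*(Real.log M/M)) := by
      funext M
      show ((n:ℝ)*n*Real.log ((M:ℝ)+1) + 2*(n:ℝ)*(1 + Real.log M))/M = _
      ring
    rw [heq]
    have := (l1.const_mul ((n:ℝ)*n)).add
      ((l3.const_mul (2*(n:ℝ))).add (l2.const_mul (2*(n:ℝ))))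
    simpa using this
  have hv0 : Tendsto v atTop (nhds 0) := by
    have heq : v = fun M : ℕ => (n:ℝ)*n*(1/(M:ℝ)) + (n:ℝ)*n*(Real.log M/M) := by
      funext M
      show (n:ℝ)*n*(1 + Real.log M)/M = _
      ring
    rw [heq]
    have := (l3.const_mul ((n:ℝ)*n)).add (l2.const_mul ((n:ℝ)*n))
    simpa using this
  -- upper eventual bound
  have hub : ∀ᶠ M : ℕ in atTop, a M ≤ s + u M := by
    filter_upwards [Filter.eventually_ge_atTop 1] with M hM
    have hM' : (0:ℝ) < M := by exact_mod_cast hM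
    rw [ha, div_le_iff₀ hM']
    refine (log_perm_upper n θ hθ hex M hM).trans (le_of_eq ?_)
    rw [hu]
    field_simp
    ring
  have htendsu : Tendsto (fun M => s + u M) atTop (nhds s) := by
    have := tendsto_const_nhds (x := s) (f := atTop (α := ℕ)) |>.add hu0
    simpa using this
  have hA_above : IsBoundedUnder (· ≤ ·) atTop a :=
    (htendsu.isBoundedUnder_le).mono_le hub
  -- lower eventual bounds, for each element of the image
  have hlower : ∀ x ∈ phi n θ '' Kset n θ, x ≤ Filter.liminf a atTop ∧
      ∃ b : ℕ → ℝ, Tendsto b atTop (nhds x) ∧ ∀ᶠ M in atTop, b M ≤ a M := by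
    rintro x ⟨γK, hK, rfl⟩
    obtain ⟨g, hg, htend⟩ := rounding n θ hK
    set b : ℕ → ℝ := fun M => phi n θ (cOf n M (g M)) - v M with hb
    have hbt : Tendsto b atTop (nhds (phi n θ γK)) := by
      have := htend.sub hv0
      simpa using this
    have hble : ∀ᶠ M : ℕ in atTop, b M ≤ a M := by
      filter_upwards [Filter.eventually_ge_atTop 1] with M hM
      have hM' : (0:ℝ) < M := by exact_mod_cast hM
      obtain ⟨hr, hc, hsupp⟩ := hg M hM
      have hlog := log_perm_lower n θ hθ hex M hM (g M) hr hc hsupp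
      rw [ha, hb, hv, le_div_iff₀ hM']
      calc (phi n θ (cOf n M (g M)) - (n:ℝ)*n*(1 + Real.log M)/M) * M
          = (M:ℝ) * phi n θ (cOf n M (g M)) - (n:ℝ)*n*(1 + Real.log M) := by
            field_simp
        _ ≤ _ := hlog
    constructor
    · calc phi n θ γK = Filter.liminf b atTop := hbt.liminf_eq.symm
        _ ≤ Filter.liminf a atTop := by
            refine Filter.liminf_le_liminf hble ?_ ?_
            · exact hbt.isBoundedUnder_ge
            · exact hA_above.isCoboundedUnder_ge
    · exact ⟨b, hbt, hble⟩
  -- boundedness below of a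
  have hne : (phi n θ '' Kset n θ).Nonempty :=
    (Kset_nonempty n θ hex hθ).image _
  obtain ⟨x0, hx0⟩ := id hne
  obtain ⟨-, b0, hb0t, hb0le⟩ := hlower x0 hx0
  have hA_below : IsBoundedUnder (· ≥ ·) atTop a :=
    (hb0t.isBoundedUnder_ge).mono_ge hb0le
  -- liminf and limsup
  have hliminf : s ≤ Filter.liminf a atTop :=
    csSup_le hne (fun x hx => (hlower x hx).1)
  have hlimsup : Filter.limsup a atTop ≤ s := by
    calc Filter.limsup a atTop ≤ Filter.limsup (fun M => s + u M) atTop :=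
          Filter.limsup_le_limsup hub hA_below.isCoboundedUnder_le
            htendsu.isBoundedUnder_le
      _ = s := htendsu.limsup_eq
  have hle : Filter.liminf a atTop ≤ Filter.limsup a atTop :=
    Filter.liminf_le_limsup hA_above hA_below
  have h1 : Filter.liminf a atTop = s := le_antisymm (hle.trans hlimsup) hliminf
  have h2 : Filter.limsup a atTop = s := le_antisymm hlimsup (hliminf.trans hle)
  exact tendsto_of_liminf_eq_limsup h1 h2 hA_above hA_below

end Final
end St14


/-- For `n ≥ 1` and a nonnegative `n×n` matrix `θ` having a permutation of
positive weight: `limsup_{M→∞} perm(θ ⊗ U_{M,M})^{1/M}` equals the supremum of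
`exp(Σ_{i,j} γ(i,j)·log θ(i,j) − n − Σ_{i,j} γ(i,j)·log γ(i,j))` over all doubly stochastic
`γ` with `γ(i,j) = 0` whenever `θ(i,j) = 0` (in Lean, `Real.log 0 = 0` realizes the
convention that such entries contribute `0`). -/
theorem statement_14 (n : ℕ) (hn : 1 ≤ n)
    (θ : Matrix (Fin n) (Fin n) ℝ) (hθ : ∀ i j, 0 ≤ θ i j)
    (hex : ∃ σ : Equiv.Perm (Fin n), 0 < ∏ i, θ i (σ i)) :
    Filter.limsup
      (fun M : ℕ =>
        (perm' (Matrix.kroneckerMap (· * ·) θ (Matrix.of fun _ _ : Fin M => 1 / (M : ℝ)))) ^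
          (1 / (M : ℝ)))
      Filter.atTop =
    sSup {v : ℝ | ∃ γ : Matrix (Fin n) (Fin n) ℝ,
      (∀ i j, 0 ≤ γ i j) ∧ (∀ i, ∑ j, γ i j = 1) ∧ (∀ j, ∑ i, γ i j = 1) ∧
      (∀ i j, θ i j = 0 → γ i j = 0) ∧
      v = Real.exp ((∑ i, ∑ j, γ i j * Real.log (θ i j)) - n -
        ∑ i, ∑ j, γ i j * Real.log (γ i j))} := by
  classical
  have hmain := St14.tendsto_log_perm_div n θ hn hθ hex
  set s := sSup (St14.phi n θ '' St14.Kset n θ) with hs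
  have hne : (St14.phi n θ '' St14.Kset n θ).Nonempty :=
    (St14.Kset_nonempty n θ hex hθ).image _
  have htend : Filter.Tendsto (fun M : ℕ => Real.exp (Real.log (St14.perm''
      (Matrix.kroneckerMap (· * ·) θ (Matrix.of fun _ _ : Fin M => 1 / (M : ℝ)))) / M))
      Filter.atTop (nhds (Real.exp s)) :=
    (Real.continuous_exp.tendsto s).comp hmain
  have heq : ∀ᶠ M : ℕ in Filter.atTop,
      (perm' (Matrix.kroneckerMap (· * ·) θ (Matrix.of fun _ _ : Fin M => 1 / (M : ℝ)))) ^
          (1 / (M : ℝ))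
        = Real.exp (Real.log (St14.perm''
            (Matrix.kroneckerMap (· * ·) θ (Matrix.of fun _ _ : Fin M => 1 / (M : ℝ)))) / M) := by
    filter_upwards [Filter.eventually_ge_atTop 1] with M hM
    have hpos := St14.perm_pos n θ hθ hex M hM
    have hpp : perm' (Matrix.kroneckerMap (· * ·) θ (Matrix.of fun _ _ : Fin M => 1 / (M : ℝ)))
        = St14.perm'' (Matrix.kroneckerMap (· * ·) θ
            (Matrix.of fun _ _ : Fin M => 1 / (M : ℝ))) := rfl
    rw [hpp, Real.rpow_def_of_pos hpos, mul_one_div]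
  rw [Filter.limsup_congr heq, htend.limsup_eq]
  have hSet : {v : ℝ | ∃ γ : Matrix (Fin n) (Fin n) ℝ,
      (∀ i j, 0 ≤ γ i j) ∧ (∀ i, ∑ j, γ i j = 1) ∧ (∀ j, ∑ i, γ i j = 1) ∧
      (∀ i j, θ i j = 0 → γ i j = 0) ∧
      v = Real.exp ((∑ i, ∑ j, γ i j * Real.log (θ i j)) - n -
        ∑ i, ∑ j, γ i j * Real.log (γ i j))}
      = Real.exp '' (St14.phi n θ '' St14.Kset n θ) := by
    ext v
    constructor
    · rintro ⟨γ, h1, h2, h3, h4, h5⟩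
      exact ⟨St14.phi n θ γ, ⟨γ, ⟨h1, h2, h3, h4⟩, rfl⟩, h5.symm⟩
    · rintro ⟨x, ⟨γ, hK, rfl⟩, rfl⟩
      exact ⟨γ, hK.1, hK.2.1, hK.2.2.1, hK.2.2.2, rfl⟩
  rw [hSet]
  exact Monotone.map_csSup_of_continuousAt Real.continuous_exp.continuousAt
    Real.exp_monotone hne (St14.bddAbove_phi n θ)
end
end
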